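/- arXiv:1601.03693 — 4 statements merged into one kernel-verified Lean document; each statement's English description precedes it below -/
import Mathlib

section
/- Let X be a nilspace and k ≥ 1. Two elements x, y ∈ X satisfy x ∼_k y (i.e. there exist q_0, q_1 ∈ C^{k+1}(X) with q_0(0^{k+1}) = x, q_1(0^{k+1}) = y, and q_0(v) = q_1(v) for all v ≠ 0^{k+1}) if and only if the map q: {0,1}^{k+1} → X sending 0^{k+1} to y and every other vertex to x is a cube in C^{k+1}(X). Moreover, ∼_k is an equivalence relation on X. -/
open Finset

/-- Embedding of the discrete cube `{0,1}^n` into `ℤ^n`. -/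
def cubeEmb {n : ℕ} (v : Fin n → Bool) : Fin n → ℤ := fun i => if v i then 1 else 0

/-- A discrete-cube morphism: the restriction to `{0,1}^m` of an affine
homomorphism `ℤ^m → ℤ^n`. -/
def IsCubeMorphism {m n : ℕ} (φ : (Fin m → Bool) → (Fin n → Bool)) : Prop :=
  ∃ (M : (Fin m → ℤ) →+ (Fin n → ℤ)) (t : Fin n → ℤ),
    ∀ v : Fin m → Bool, cubeEmb (φ v) = M (cubeEmb v) + t

/-- A face of `{0,1}^n` of codimension `c`: fix `c` coordinates. -/
def IsFaceOfCodim {n : ℕ} (F : Set (Fin n → Bool)) (c : ℕ) : Prop :=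
  ∃ (I : Finset (Fin n)) (x : Fin n → Bool), I.card = c ∧
    F = {v : Fin n → Bool | ∀ i ∈ I, v i = x i}

/-- An `m`-face map into `{0,1}^n`: an injective cube morphism whose image is
an `m`-dimensional face. -/
def IsFaceMap {m n : ℕ} (φ : (Fin m → Bool) → (Fin n → Bool)) : Prop :=
  IsCubeMorphism φ ∧ Function.Injective φ ∧ IsFaceOfCodim (Set.range φ) (n - m)

/-- The number of coordinates of `v` equal to `1`. -/
def weight {n : ℕ} (v : Fin n → Bool) : ℕ := (Finset.univ.filter fun i => v i = true).card

/-- A (pre)filtration on a group: a decreasing chain of subgroups with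
`[G_i, G_j] ⊆ G_{i+j}`. -/
def IsGroupFiltration {G : Type*} [Group G] (Gf : ℕ → Subgroup G) : Prop :=
  (∀ i, Gf (i + 1) ≤ Gf i) ∧
  (∀ i j : ℕ, ∀ x ∈ Gf i, ∀ y ∈ Gf j, x⁻¹ * y⁻¹ * x * y ∈ Gf (i + j))

open Classical in
/-- The face-group element `g^F`: equal to `g` on `F` and to the identity elsewhere. -/
noncomputable def faceEl {G : Type*} [Group G] {n : ℕ} (F : Set (Fin n → Bool)) (g : G) :
    (Fin n → Bool) → G :=
  fun v => if v ∈ F then g else 1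

/-- The Host–Kra cube group `C^n(G_•)`: the subgroup of `G^{{0,1}^n}` generated by
the face groups. -/
noncomputable def hkCubes {G : Type*} [Group G] (Gf : ℕ → Subgroup G) (n : ℕ) :
    Subgroup ((Fin n → Bool) → G) :=
  Subgroup.closure { f | ∃ (c : ℕ) (F : Set (Fin n → Bool)) (g : G),
    IsFaceOfCodim F c ∧ g ∈ Gf c ∧ f = faceEl F g }

/-- Restriction of a map on `{0,1}^{n+1}` to the lower face `{v : v_j = 0}`,
viewed as a map on `{0,1}^n`. -/
def lowerFaceRestr {X : Type*} {n : ℕ} (q : (Fin (n + 1) → Bool) → X) (j : Fin (n + 1)) :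
    (Fin n → Bool) → X :=
  fun v => q (j.insertNth false v)

/-- An `(n+1)`-corner: every restriction to an `n`-face containing `0^{n+1}` is a cube. -/
def IsNSCorner {X : Type*} (C : ∀ n, ((Fin n → Bool) → X) → Prop) (n : ℕ)
    (q' : (Fin (n + 1) → Bool) → X) : Prop :=
  ∀ j : Fin (n + 1), C n (lowerFaceRestr q' j)

/-- `q` is a completion of the corner `q'`. -/
def IsNSCompletion {X : Type*} (C : ∀ n, ((Fin n → Bool) → X) → Prop) (n : ℕ)
    (q' q : (Fin (n + 1) → Bool) → X) : Prop :=
  C (n + 1) q ∧ ∀ v : Fin (n + 1) → Bool, v ≠ (fun _ => true) → q v = q' v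

/-- The nilspace axioms: composition, ergodicity and corner completion. -/
def IsNilspace {X : Type*} (C : ∀ n, ((Fin n → Bool) → X) → Prop) : Prop :=
  (∀ (m n : ℕ) (φ : (Fin m → Bool) → (Fin n → Bool)), IsCubeMorphism φ →
      ∀ q, C n q → C m (q ∘ φ)) ∧
  (∀ q : (Fin 1 → Bool) → X, C 1 q) ∧
  (∀ n (q' : (Fin (n + 1) → Bool) → X), IsNSCorner C n q' → ∃ q, IsNSCompletion C n q' q)

/-- A `k`-step nilspace: a nilspace in which every `(k+1)`-corner has a unique
completion. -/
def IsKStepNilspace {X : Type*} (C : ∀ n, ((Fin n → Bool) → X) → Prop) (k : ℕ) : Prop :=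
  IsNilspace C ∧
  ∀ q' : (Fin (k + 1) → Bool) → X, IsNSCorner C k q' → ∃! q, IsNSCompletion C k q' q

/-- The Gray-code alternating product `σ_n`. -/
def graySigma {G : Type*} [Group G] : (n : ℕ) → ((Fin n → Bool) → G) → G
  | 0, g => g (fun i => i.elim0)
  | n + 1, g => (graySigma n (fun v => g (Fin.snoc v true)))⁻¹ *
      graySigma n (fun v => g (Fin.snoc v false))

/-- The difference operator `∂_h g (x) = g(x)⁻¹ g(xh)`. -/
def mulDiff {H G : Type*} [Group H] [Group G] (h : H) (g : H → G) : H → G :=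
  fun x => (g x)⁻¹ * g (x * h)

/-- `g : H → G` is a polynomial map adapted to the filtrations `H_•, G_•`. -/
def IsPolyMap {H G : Type*} [Group H] [Group G] (Hf : ℕ → Subgroup H)
    (Gf : ℕ → Subgroup G) (g : H → G) : Prop :=
  ∀ (n : ℕ) (d : Fin n → ℕ) (h : Fin n → H), (∀ j, h j ∈ Hf (d j)) →
    ∀ x : H, ((List.ofFn h).foldr mulDiff g) x ∈ Gf (∑ j, d j)

/-- The `k`-arrow `⟨q_0, q_1⟩_k : {0,1}^{n+k} → X`. -/
def arrowMap {X : Type*} {n k : ℕ} (q0 q1 : (Fin n → Bool) → X) :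
    (Fin (n + k) → Bool) → X :=
  fun v =>
    if ∀ j : Fin k, v (Fin.natAdd n j) = true
    then q1 (fun i => v (Fin.castAdd k i))
    else q0 (fun i => v (Fin.castAdd k i))

/-- The relation `x ∼_k y` on a nilspace. -/
def simRel {X : Type*} (C : ∀ n, ((Fin n → Bool) → X) → Prop) (k : ℕ)
    (x y : X) : Prop :=
  ∃ q0 q1 : (Fin (k + 1) → Bool) → X, C (k + 1) q0 ∧ C (k + 1) q1 ∧
    q0 (fun _ => false) = x ∧ q1 (fun _ => false) = y ∧
    ∀ v : Fin (k + 1) → Bool, v ≠ (fun _ => false) → q0 v = q1 v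


namespace NSAux


/-- one summand of the linear part -/
def descM {m : ℕ} (e : Bool ⊕ (Fin m × Bool)) (f : Fin m → ℤ) : ℤ :=
  match e with
  | .inl _ => 0
  | .inr (j, p) => if p then f j else -(f j)

def descT {m : ℕ} (e : Bool ⊕ (Fin m × Bool)) : ℤ :=
  match e with
  | .inl b => if b then 1 else 0
  | .inr (_, p) => if p then 0 else 1

/-- maps of the cube whose coordinates are constants or (negated) coordinates -/
def descFun {m n : ℕ} (d : Fin n → Bool ⊕ (Fin m × Bool)) : (Fin m → Bool) → (Fin n → Bool) :=
  fun v i => match d i with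
  | .inl b => b
  | .inr (j, p) => if p then v j else !(v j)

theorem descFun_mor {m n : ℕ} (d : Fin n → Bool ⊕ (Fin m × Bool)) :
    IsCubeMorphism (descFun d) := by
  refine ⟨AddMonoidHom.mk' (fun f i => descM (d i) f) ?_, fun i => descT (d i), ?_⟩
  · intro a b
    funext i
    rcases h : d i with b' | ⟨j, p⟩ <;> rcases p? : true with _|_ <;>
      simp [descM, h] <;> cases p <;> simp <;> ring
  · intro v
    funext i
    rcases h : d i with b' | ⟨j, p⟩
    · simp [cubeEmb, descFun, descM, descT, h]
    · cases p <;> cases hv : v j <;>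
        simp [cubeEmb, descFun, descM, descT, h, hv]



def aF {n : ℕ} : Fin n → Bool := fun _ => false
def aT {n : ℕ} : Fin n → Bool := fun _ => true

theorem insertNth_zero' {n : ℕ} (b : Bool) (v : Fin n → Bool) :
    (0 : Fin (n+1)).insertNth b v = (Fin.cons b v : Fin (n+1) → Bool) := by
  simp [Fin.insertNth_zero]

theorem insertNth_succ' {n : ℕ} (j : Fin (n+1)) (b : Bool) (u : Fin (n+1) → Bool) :
    (j.succ).insertNth b u = (Fin.cons (u 0) (j.insertNth b (Fin.tail u)) : Fin (n+2) → Bool) := by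
  funext i
  induction i using Fin.cases with
  | zero =>
      have h0 : (j.succ).succAbove 0 = 0 := Fin.succ_succAbove_zero j
      have h2 := Fin.insertNth_apply_succAbove (α := fun _ => Bool) (j.succ) b u 0
      rw [h0] at h2
      rw [h2]
      simp
  | succ l =>
      rcases eq_or_ne l j with rfl | hne
      · rw [Fin.insertNth_apply_same]
        simp [Fin.insertNth_apply_same]
      · obtain ⟨z, hz⟩ := Fin.exists_succAbove_eq hne
        have h1 : (j.succ).succAbove z.succ = l.succ := by
          rw [Fin.succ_succAbove_succ, hz]
        calc ((j.succ).insertNth b u : Fin (n+2) → Bool) l.succ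
            = ((j.succ).insertNth b u : Fin (n+2) → Bool) ((j.succ).succAbove z.succ) := by rw [h1]
          _ = u z.succ := Fin.insertNth_apply_succAbove (α := fun _ => Bool) _ _ _ _
          _ = (Fin.cons (u 0) (j.insertNth b (Fin.tail u)) : Fin (n+2) → Bool) l.succ := by
              simp only [Fin.cons_succ]
              rw [← hz, Fin.insertNth_apply_succAbove (α := fun _ => Bool)]
              rfl

theorem cons_eq_aT {n : ℕ} {b : Bool} {v : Fin n → Bool} :
    Fin.cons b v = (aT : Fin (n+1) → Bool) ↔ b = true ∧ v = aT := by
  constructor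
  · intro h
    refine ⟨by simpa [aT] using congrFun h 0, funext fun i => by simpa [aT] using congrFun h i.succ⟩
  · rintro ⟨rfl, rfl⟩
    funext i
    induction i using Fin.cases <;> simp [aT]

theorem cons_eq_aF {n : ℕ} {b : Bool} {v : Fin n → Bool} :
    Fin.cons b v = (aF : Fin (n+1) → Bool) ↔ b = false ∧ v = aF := by
  constructor
  · intro h
    refine ⟨by simpa [aF] using congrFun h 0, funext fun i => by simpa [aF] using congrFun h i.succ⟩
  · rintro ⟨rfl, rfl⟩
    funext i
    induction i using Fin.cases <;> simp [aF]

theorem insertNth_false_eq_aF {n : ℕ} {j : Fin (n+1)} {v : Fin n → Bool} :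
    j.insertNth false v = (aF : Fin (n+1) → Bool) ↔ v = aF := by
  constructor
  · intro h
    funext i
    have := congrFun h (j.succAbove i)
    rwa [Fin.insertNth_apply_succAbove] at this
  · rintro rfl
    funext i
    rcases eq_or_ne i j with rfl | hne
    · simp [Fin.insertNth_apply_same, aF]
    · obtain ⟨z, hz⟩ := Fin.exists_succAbove_eq hne
      rw [← hz, Fin.insertNth_apply_succAbove]
      rfl

theorem insertNth_false_ne_aT {n : ℕ} (j : Fin (n+1)) (v : Fin n → Bool) :
    j.insertNth b v ≠ (aT : Fin (n+1) → Bool) ∨ b = true := by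
  rcases b with _|_
  · left
    intro h
    have := congrFun h j
    rw [Fin.insertNth_apply_same] at this
    exact Bool.noConfusion this
  · right; rfl

theorem insertNth_false_ne_aT' {n : ℕ} (j : Fin (n+1)) (v : Fin n → Bool) :
    j.insertNth false v ≠ (aT : Fin (n+1) → Bool) := by
  intro h
  have := congrFun h j
  rw [Fin.insertNth_apply_same] at this
  exact Bool.noConfusion this

/-- number of `false` coordinates -/
def zc {n : ℕ} (v : Fin n → Bool) : ℕ := (Finset.univ.filter (fun i => v i = false)).card

theorem zc_insertNth_false {n : ℕ} (j : Fin (n+1)) (v : Fin n → Bool) :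
    zc (j.insertNth false v) = zc v + 1 := by
  classical
  have hsum : ∀ (m : ℕ) (w : Fin m → Bool),
      zc w = ∑ i, (if w i = false then 1 else 0) := by
    intro m w
    simp [zc, Finset.sum_boole]
  have key := Fin.sum_univ_succAbove
    (fun i => if (j.insertNth false v : Fin (n+1) → Bool) i = false then (1:ℕ) else 0) j
  simp only [Fin.insertNth_apply_same, Fin.insertNth_apply_succAbove] at key
  rw [hsum, hsum, key]
  simp [add_comm]

theorem zc_aT {n : ℕ} : zc (aT : Fin n → Bool) = 0 := by
  simp [zc, aT]

theorem zc_pos_of_ne_aT {n : ℕ} {v : Fin n → Bool} (h : v ≠ aT) : 1 ≤ zc v := by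
  have : ∃ i, v i = false := by
    by_contra hc
    push_neg at hc
    exact h (funext fun i => by
      have := hc i
      revert this
      cases v i <;> simp [aT])
  obtain ⟨i, hi⟩ := this
  have : i ∈ Finset.univ.filter (fun i => v i = false) := by simp [hi]
  exact Finset.card_pos.mpr ⟨i, this⟩


end NSAux
namespace NSAux

variable {X : Type*}

abbrev Cubes (X : Type*) := ∀ n, ((Fin n → Bool) → X) → Prop

def HasComp {X : Type*} (C : Cubes X) : Prop :=
  ∀ (m n : ℕ) (φ : (Fin m → Bool) → (Fin n → Bool)), IsCubeMorphism φ →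
      ∀ q, C n q → C m (q ∘ φ)

def HasCompl {X : Type*} (C : Cubes X) : Prop :=
  ∀ n (q' : (Fin (n + 1) → Bool) → X), IsNSCorner C n q' → ∃ q, IsNSCompletion C n q' q

theorem C_congr {C : Cubes X} {n : ℕ} {f g : (Fin n → Bool) → X}
    (h : ∀ v, f v = g v) (hf : C n f) : C n g := (funext h : f = g) ▸ hf

theorem comp_desc {C : Cubes X} (hc : HasComp C) {m n : ℕ}
    (d : Fin n → Bool ⊕ (Fin m × Bool)) {q : (Fin n → Bool) → X} (hq : C n q) :
    C m (fun v => q (descFun d v)) := hc m n (descFun d) (descFun_mor d) q hq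

/-- descriptor for `v ↦ Fin.cons b v` -/
def dCons (b : Bool) {n : ℕ} : Fin (n+1) → Bool ⊕ (Fin n × Bool) :=
  fun i => Fin.cases (Sum.inl b) (fun l => Sum.inr (l, true)) i

theorem descFun_dCons {n : ℕ} (b : Bool) (v : Fin n → Bool) :
    descFun (dCons b) v = Fin.cons b v := by
  funext i
  induction i using Fin.cases with
  | zero => simp [descFun, dCons]
  | succ l => simp [descFun, dCons]

theorem face_cons {C : Cubes X} (hc : HasComp C) {n : ℕ} (b : Bool)
    {q : (Fin (n+1) → Bool) → X} (hq : C (n+1) q) :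
    C n (fun v => q (Fin.cons b v)) :=
  C_congr (fun v => by rw [descFun_dCons]) (comp_desc hc (dCons b) hq)

theorem cons_morphism {m n : ℕ} {φ : (Fin m → Bool) → (Fin n → Bool)}
    (h : IsCubeMorphism φ) :
    IsCubeMorphism (fun u : Fin (m+1) → Bool =>
      (Fin.cons (u 0) (φ (Fin.tail u)) : Fin (n+1) → Bool)) := by
  obtain ⟨M, t, hMt⟩ := h
  refine ⟨AddMonoidHom.mk' (fun f => (Fin.cons (f 0) (M (f ∘ Fin.succ)) : Fin (n+1) → ℤ)) ?_,
    (Fin.cons 0 t : Fin (n+1) → ℤ), ?_⟩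
  · intro a b
    funext i
    induction i using Fin.cases with
    | zero => simp
    | succ l =>
        have : (a + b) ∘ Fin.succ = a ∘ Fin.succ + b ∘ Fin.succ := rfl
        simp [this]
  · intro v
    funext i
    induction i using Fin.cases with
    | zero => simp [cubeEmb]
    | succ l =>
        have h1 : (cubeEmb v) ∘ Fin.succ = cubeEmb (Fin.tail v) := rfl
        have h2 := congrFun (hMt (Fin.tail v)) l
        simp only [cubeEmb, Fin.cons_succ, AddMonoidHom.mk'_apply, Pi.add_apply] at *
        rw [h1]
        exact h2

/-- the (one-step) arrow space cubes on `X × X` -/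
def CP {X : Type*} (C : Cubes X) : Cubes (X × X) := fun n P =>
  C (n+1) (fun u => if u 0 = true then (P (Fin.tail u)).2 else (P (Fin.tail u)).1)

theorem CP_comp {C : Cubes X} (hc : HasComp C) : HasComp (CP C) := by
  intro m n φ hφ P hP
  have hψ := cons_morphism hφ
  have h2 := hc _ _ _ hψ _ hP
  show C (m+1) (fun u => if u 0 = true then ((P ∘ φ) (Fin.tail u)).2 else ((P ∘ φ) (Fin.tail u)).1)
  refine C_congr (fun u => ?_) h2
  simp [Function.comp, Fin.tail_cons]

theorem CP_compl {C : Cubes X} (hc : HasComp C) (hk : HasCompl C) : HasCompl (CP C) := by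
  intro n Q' hQ'
  have hAcorner : IsNSCorner C n (fun v => (Q' v).1) := by
    intro j
    have h2 := face_cons hc false (hQ' j)
    refine C_congr (fun v => ?_) h2
    simp [lowerFaceRestr, Fin.tail_cons]
  obtain ⟨Ahat, hAhat, hAagree⟩ := hk n _ hAcorner
  set N : (Fin (n+2) → Bool) → X :=
    fun u => if u 0 = true then (Q' (Fin.tail u)).2 else Ahat (Fin.tail u) with hN
  have hNcorner : IsNSCorner C (n+1) N := by
    intro j
    induction j using Fin.cases with
    | zero =>
        refine C_congr (fun v => ?_) hAhat
        rw [lowerFaceRestr, insertNth_zero']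
        simp [hN, Fin.tail_cons]
    | succ j' =>
        refine C_congr (fun v => ?_) (hQ' j')
        show _ = N (Fin.insertNth j'.succ false v)
        rw [insertNth_succ']
        rcases hv : v 0 with _|_
        · simp only [hN, Fin.cons_zero, hv, Fin.tail_cons, if_neg Bool.false_ne_true]
          rw [hAagree _ (insertNth_false_ne_aT' _ _)]
          simp [lowerFaceRestr]
        · simp [hN, hv, Fin.tail_cons, lowerFaceRestr]
  obtain ⟨Nhat, hNhat, hNagree⟩ := hk (n+1) N hNcorner
  refine ⟨fun v => if v = aT then (Ahat aT, Nhat aT) else Q' v, ?_, ?_⟩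
  · show C (n+2) _
    refine C_congr (fun u => ?_) hNhat
    by_cases ht : Fin.tail u = aT
    · rcases hu : u 0 with _|_
      · have hune : u ≠ (aT : Fin (n+2) → Bool) := by
          intro h; rw [h] at hu; exact Bool.noConfusion hu
        rw [hNagree u hune]
        simp [hN, hu, ht]
      · have hue : u = (aT : Fin (n+2) → Bool) := by
          conv_lhs => rw [← Fin.cons_self_tail u]
          rw [hu, ht]
          exact cons_eq_aT.mpr ⟨rfl, rfl⟩
        rw [hue]
        have htt : Fin.tail (aT : Fin (n+2) → Bool) = (aT : Fin (n+1) → Bool) := rfl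
        simp [htt]
    · have hune : u ≠ (aT : Fin (n+2) → Bool) := by
        intro h; exact ht (by rw [h]; rfl)
      rw [hNagree u hune]
      rcases hu : u 0 with _|_
      · simp only [hN, hu, if_neg Bool.false_ne_true, if_neg ht]
        exact hAagree _ ht
      · simp [hN, hu, ht]
  · intro v hv
    have hv' : v ≠ aT := hv
    simp only []
    rw [if_neg hv']

end NSAux
namespace NSAux

variable {X : Type*}

def Pat (x y : X) (m : ℕ) : (Fin m → Bool) → X := fun v => if v = aF then y else x

def HmP (x y w : X) (m : ℕ) : (Fin (m+1) → Bool) → X :=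
  fun u => if u 0 = true then (if Fin.tail u = aF then y else x) else w

theorem succ_zero_eq_one' {m : ℕ} : (0 : Fin (m+1)).succ = (1 : Fin (m+2)) := by
  ext; simp

theorem apply_one_eq_tail_zero {m : ℕ} (u : Fin (m+2) → Bool) : u 1 = Fin.tail u 0 := by
  rw [Fin.tail, ← succ_zero_eq_one']

theorem cons_apply_one {m : ℕ} (b : Bool) (v : Fin (m+1) → Bool) :
    (Fin.cons b v : Fin (m+2) → Bool) 1 = v 0 := by
  rw [← succ_zero_eq_one', Fin.cons_succ]

theorem Pat_insertNth {x y : X} {n : ℕ} (j : Fin (n+1)) (v : Fin n → Bool) :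
    Pat x y (n+1) (j.insertNth false v) = Pat x y n v := by
  unfold Pat
  by_cases h : v = aF
  · rw [if_pos (insertNth_false_eq_aF.mpr h), if_pos h]
  · rw [if_neg (fun hc => h (insertNth_false_eq_aF.mp hc)), if_neg h]

theorem Pat_cons_false {x y : X} {n : ℕ} (v : Fin n → Bool) :
    Pat x y (n+1) (Fin.cons false v) = Pat x y n v := by
  rw [← insertNth_zero', Pat_insertNth]

/-- canonical form of the diagonal spread of the pattern -/
def SpreadFun (x y w : X) (m : ℕ) (g : ℕ → X) : (Fin (m+2) → Bool) → X :=
  fun u => if u 0 = (!(u 1)) then Pat x y (m+1) (Fin.tail u)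
           else if u 0 = true then g (zc (Fin.tail u)) else w

def SpreadSpec (x y w : X) (m : ℕ) (g : ℕ → X) (T : (Fin (m+2) → Bool) → X) : Prop :=
  (∀ v : Fin (m+1) → Bool, T (Fin.cons (!(v 0)) v) = Pat x y (m+1) v)
  ∧ (∀ v : Fin (m+1) → Bool, v 0 = false → T (Fin.cons false v) = w)
  ∧ (∀ v : Fin (m+1) → Bool, v 0 = true → T (Fin.cons true v) = g (zc v))

theorem spreadFun_cons (x y w : X) (m : ℕ) (g : ℕ → X) (b : Bool) (v : Fin (m+1) → Bool) :
    SpreadFun x y w m g (Fin.cons b v) =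
      if b = (!(v 0)) then Pat x y (m+1) v
      else if b = true then g (zc v) else w := by
  unfold SpreadFun
  rw [Fin.cons_zero, cons_apply_one, Fin.tail_cons]

theorem spread_of_eval {x y w : X} {m : ℕ} {g : ℕ → X} {T : (Fin (m+2) → Bool) → X}
    (h : ∀ u, T u = SpreadFun x y w m g u) : SpreadSpec x y w m g T := by
  refine ⟨fun v => ?_, fun v hv => ?_, fun v hv => ?_⟩
  · rw [h, spreadFun_cons, if_pos rfl]
  · rw [h, spreadFun_cons, hv]
    simp
  · rw [h, spreadFun_cons, hv]
    simp

theorem spread_eval {x y w : X} {m : ℕ} {g : ℕ → X} {T : (Fin (m+2) → Bool) → X}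
    (h : SpreadSpec x y w m g T) (u : Fin (m+2) → Bool) :
    T u = SpreadFun x y w m g u := by
  obtain ⟨hd, hl, hup⟩ := h
  have h1 : u 1 = Fin.tail u 0 := apply_one_eq_tail_zero u
  conv_lhs => rw [← Fin.cons_self_tail u]
  unfold SpreadFun
  rcases h0 : u 0 with _|_ <;> rcases ht0 : Fin.tail u 0 with _|_
  · rw [h1, ht0]
    simp only [Bool.not_false, reduceIte]
    exact hl _ ht0
  · rw [h1, ht0]
    simp only [Bool.not_true, reduceIte]
    have := hd (Fin.tail u)
    rw [ht0] at this
    simpa using this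
  · rw [h1, ht0]
    simp only [Bool.not_false, reduceIte]
    have := hd (Fin.tail u)
    rw [ht0] at this
    simpa using this
  · rw [h1, ht0]
    simp only [Bool.not_true, reduceIte]
    exact hup _ ht0

end NSAux
namespace NSAux

variable {X : Type*}

theorem fin1_eq_aF {v : Fin 1 → Bool} : v = (aF : Fin 1 → Bool) ↔ v 0 = false := by
  constructor
  · intro h; rw [h]; rfl
  · intro h; funext i; rw [Subsingleton.elim i 0]; exact h

theorem fin1_eq_aT {v : Fin 1 → Bool} : v = (aT : Fin 1 → Bool) ↔ v 0 = true := by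
  constructor
  · intro h; rw [h]; rfl
  · intro h; funext i; rw [Subsingleton.elim i 0]; exact h

/-- the corner used in the induction step -/
def SpreadCorner (x y w : X) (m : ℕ) (g : ℕ → X) : (Fin (m+3) → Bool) → X :=
  fun u => if u 0 = (!(u 1)) then Pat x y (m+2) (Fin.tail u)
           else if u 0 = true then g (zc (Fin.tail u) - 1) else w

theorem spreadCorner_cons (x y w : X) (m : ℕ) (g : ℕ → X) (b : Bool) (v : Fin (m+2) → Bool) :
    SpreadCorner x y w m g (Fin.cons b v) =
      if b = (!(v 0)) then Pat x y (m+2) v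
      else if b = true then g (zc v - 1) else w := by
  unfold SpreadCorner
  rw [Fin.cons_zero, cons_apply_one, Fin.tail_cons]

theorem estep {C : Cubes X} (hc : HasComp C) (hk : HasCompl C) {x y w : X}
    (hwx : C 1 (fun t => if t 0 = true then x else w))
    {m : ℕ} {g : ℕ → X} {T : (Fin (m+2) → Bool) → X}
    (hT : C (m+2) T) (hS : SpreadSpec x y w m g T)
    (hH : C (m+2) (HmP x y w (m+1))) :
    ∃ (g' : ℕ → X) (T' : (Fin (m+3) → Bool) → X), C (m+3) T' ∧ SpreadSpec x y w (m+1) g' T' := by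
  have hcorner : IsNSCorner C (m+2) (SpreadCorner x y w m g) := by
    intro j
    induction j using Fin.cases with
    | zero =>
        have h1 := comp_desc hc (fun _ : Fin 1 => Sum.inr ((0 : Fin (m+2)), true)) hwx
        refine C_congr (fun v => ?_) h1
        show (if v 0 = true then x else w) = SpreadCorner x y w m g (Fin.insertNth 0 false v)
        rw [insertNth_zero', spreadCorner_cons]
        rcases hv : v 0 with _|_
        · simp
        · have hne : v ≠ (aF : Fin (m+2) → Bool) := by
            intro hc'; rw [hc'] at hv; exact Bool.noConfusion hv
          simp only [Bool.not_true, reduceIte]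
          unfold Pat
          rw [if_neg hne]
    | succ j' =>
        induction j' using Fin.cases with
        | zero =>
            refine C_congr (fun v => ?_) hH
            show HmP x y w (m+1) v = SpreadCorner x y w m g (Fin.insertNth (0 : Fin (m+2)).succ false v)
            rw [insertNth_succ', insertNth_zero', spreadCorner_cons]
            rw [Fin.cons_zero]
            unfold HmP
            rcases hv : v 0 with _|_
            · simp
            · simp only [Bool.not_false, reduceIte]
              rw [Pat_cons_false]
              unfold Pat
              rfl
        | succ l =>
            refine C_congr (fun v => ?_) hT
            show T v = SpreadCorner x y w m g (Fin.insertNth l.succ.succ false v)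
            rw [spread_eval hS v, insertNth_succ', spreadCorner_cons]
            have hz0 : (Fin.insertNth l.succ false (Fin.tail v) : Fin (m+2) → Bool) 0 = v 1 := by
              rw [insertNth_succ', Fin.cons_zero]
              exact (apply_one_eq_tail_zero v).symm
            rw [hz0, Pat_insertNth, zc_insertNth_false]
            simp only [Nat.add_sub_cancel]
            rfl
  obtain ⟨T', hT', hagree⟩ := hk (m+2) (SpreadCorner x y w m g) hcorner
  refine ⟨fun r => Nat.rec (T' aT) (fun r' _ => g r') r, T', hT', ?_⟩
  apply spread_of_eval
  intro u
  by_cases hu : u = aT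
  · subst hu
    unfold SpreadFun
    have h0 : (aT : Fin (m+3) → Bool) 0 = true := rfl
    have h1 : (aT : Fin (m+3) → Bool) 1 = true := rfl
    have ht : Fin.tail (aT : Fin (m+3) → Bool) = (aT : Fin (m+2) → Bool) := rfl
    rw [h0, h1, ht, zc_aT]
    simp
  · rw [hagree u hu]
    unfold SpreadFun SpreadCorner
    by_cases hd : u 0 = (!(u 1))
    · rw [if_pos hd, if_pos hd]
    · rw [if_neg hd, if_neg hd]
      rcases h0 : u 0 with _|_
      · simp
      · simp only [reduceIte]
        have h1 : u 1 = true := by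
          rcases h1' : u 1 with _|_
          · exfalso; apply hd; rw [h0, h1']; rfl
          · rfl
        have htne : Fin.tail u ≠ (aT : Fin (m+2) → Bool) := by
          intro hc'
          apply hu
          conv_lhs => rw [← Fin.cons_self_tail u]
          rw [h0, hc']
          exact cons_eq_aT.mpr ⟨rfl, rfl⟩
        obtain ⟨r, hr⟩ := Nat.exists_eq_add_of_le (zc_pos_of_ne_aT htne)
        rw [hr, Nat.add_comm]
        simp

theorem ebase {C : Cubes X} (hc : HasComp C) (hk : HasCompl C) {x y w : X}
    (hwx : C 1 (fun t => if t 0 = true then x else w))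
    (hwy : C 1 (fun t => if t 0 = true then y else w)) :
    ∃ (g : ℕ → X) (T : (Fin 2 → Bool) → X), C 2 T ∧ SpreadSpec x y w 0 g T := by
  set S0 : (Fin 2 → Bool) → X := fun u =>
    if u 0 = (!(u 1)) then (if u 1 = false then y else x)
    else if u 0 = true then x else w with hS0
  have hcorner : IsNSCorner C 1 S0 := by
    intro j
    induction j using Fin.cases with
    | zero =>
        refine C_congr (fun v => ?_) hwx
        show (if v 0 = true then x else w) = S0 (Fin.insertNth 0 false v)
        rw [insertNth_zero', hS0]
        simp only []
        rw [Fin.cons_zero, cons_apply_one]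
        rcases hv : v 0 with _|_ <;> simp
    | succ j' =>
        have hj : j' = 0 := Subsingleton.elim j' 0
        subst hj
        refine C_congr (fun v => ?_) hwy
        show (if v 0 = true then y else w) = S0 (Fin.insertNth (0 : Fin 1).succ false v)
        rw [insertNth_succ', insertNth_zero', hS0]
        simp only []
        rw [Fin.cons_zero, cons_apply_one, Fin.cons_zero]
        rcases hv : v 0 with _|_ <;> simp
  obtain ⟨T1, hT1, hagree⟩ := hk 1 S0 hcorner
  refine ⟨fun _ => T1 aT, T1, hT1, ?_⟩
  apply spread_of_eval
  intro u
  by_cases hu : u = aT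
  · subst hu
    unfold SpreadFun
    have h0 : (aT : Fin 2 → Bool) 0 = true := rfl
    have h1 : (aT : Fin 2 → Bool) 1 = true := rfl
    rw [h0, h1]
    simp
  · rw [hagree u hu]
    rw [hS0]
    unfold SpreadFun
    simp only []
    by_cases hd : u 0 = (!(u 1))
    · rw [if_pos hd, if_pos hd]
      unfold Pat
      have : Fin.tail u = (aF : Fin 1 → Bool) ↔ u 1 = false := by
        rw [fin1_eq_aF, ← apply_one_eq_tail_zero]
      by_cases h1 : u 1 = false
      · rw [if_pos h1, if_pos (this.mpr h1)]
      · rw [if_neg h1, if_neg (fun hc' => h1 (this.mp hc'))]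
    · rw [if_neg hd, if_neg hd]
      rcases h0 : u 0 with _|_
      · simp
      · exfalso
        have h1 : u 1 = true := by
          rcases h1' : u 1 with _|_
          · exfalso; apply hd; rw [h0, h1']; rfl
          · rfl
        apply hu
        conv_lhs => rw [← Fin.cons_self_tail u]
        rw [h0]
        refine cons_eq_aT.mpr ⟨rfl, fin1_eq_aT.mpr ?_⟩
        rw [← apply_one_eq_tail_zero, h1]

theorem echain {C : Cubes X} (hc : HasComp C) (hk : HasCompl C) {x y w : X}
    (hwx : C 1 (fun t => if t 0 = true then x else w))
    (hwy : C 1 (fun t => if t 0 = true then y else w)) :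
    ∀ m : ℕ, (∀ l, 1 ≤ l → l ≤ m → C (l+1) (HmP x y w l)) →
    ∃ g T, C (m+2) T ∧ SpreadSpec x y w m g T := by
  intro m
  induction m with
  | zero => intro _; exact ebase hc hk hwx hwy
  | succ m ih =>
      intro hH
      obtain ⟨g, T, hT, hS⟩ := ih (fun l h1 h2 => hH l h1 (h2.trans (Nat.le_succ m)))
      exact estep hc hk hwx hT hS (hH (m+1) (by omega) le_rfl)

def dDiag (m : ℕ) : Fin (m+2) → Bool ⊕ (Fin (m+1) × Bool) :=
  fun i => Fin.cases (Sum.inr (0, false)) (fun l => Sum.inr (l, true)) i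

theorem descFun_dDiag {m : ℕ} (v : Fin (m+1) → Bool) :
    descFun (dDiag m) v = Fin.cons (!(v 0)) v := by
  funext i
  induction i using Fin.cases with
  | zero => simp [descFun, dDiag]
  | succ l => simp [descFun, dDiag]

theorem emachine {C : Cubes X} (hc : HasComp C) (hk : HasCompl C) {x y w : X} (k : ℕ)
    (hwx : C 1 (fun t => if t 0 = true then x else w))
    (hwy : C 1 (fun t => if t 0 = true then y else w))
    (hH : ∀ l, 1 ≤ l → l ≤ k → C (l+1) (HmP x y w l)) :
    C (k+1) (Pat x y (k+1)) := by
  obtain ⟨g, T, hT, hS⟩ := echain hc hk hwx hwy k hH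
  have h1 := comp_desc hc (dDiag k) hT
  refine C_congr (fun v => ?_) h1
  rw [descFun_dDiag]
  exact hS.1 v

end NSAux
namespace NSAux

variable {X : Type*}

def vB (a b : Bool) : Fin 2 → Bool := Fin.cons a (fun _ => b)

theorem vB_zero (a b : Bool) : vB a b 0 = a := rfl

theorem vB_one (a b : Bool) : vB a b 1 = b := by
  rw [vB, cons_apply_one]

theorem vB_eq_aF {a b : Bool} : vB a b = (aF : Fin 2 → Bool) ↔ a = false ∧ b = false := by
  rw [vB, cons_eq_aF, fin1_eq_aF]

theorem vB_ff : vB false false = (aF : Fin 2 → Bool) := vB_eq_aF.mpr ⟨rfl, rfl⟩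

theorem eta2_eq {v : Fin 2 → Bool} {a b : Bool} (h0 : v 0 = a) (h1 : v 1 = b) :
    v = vB a b := by
  funext i
  induction i using Fin.cases with
  | zero => exact h0
  | succ l =>
      rw [Subsingleton.elim l 0, succ_zero_eq_one', h1, vB_one]

theorem cons_apply_two {m : ℕ} (b : Bool) (v : Fin (m+2) → Bool) :
    (Fin.cons b v : Fin (m+3) → Bool) 2 = v 1 := by
  have h2 : (2 : Fin (m+3)) = ((1 : Fin (m+2))).succ := by ext; simp
  rw [h2, Fin.cons_succ]

theorem HmP1_eval (x y w : X) (u : Fin 2 → Bool) :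
    HmP x y w 1 u = if u 0 = true then (if u 1 = false then y else x) else w := by
  unfold HmP
  have h : Fin.tail u = (aF : Fin 1 → Bool) ↔ u 1 = false := by
    rw [fin1_eq_aF, ← apply_one_eq_tail_zero]
  by_cases h1 : u 1 = false
  · rw [if_pos (h.mpr h1), if_pos h1]
  · rw [if_neg (fun hc' => h1 (h.mp hc')), if_neg h1]

/-- The "G-corner": produces `HmP` in the bottom case. -/
theorem baseH {C : Cubes X} (hc : HasComp C) (hk : HasCompl C)
    (c₀ c₁ : (Fin 2 → Bool) → X) (h₀ : C 2 c₀) (h₁ : C 2 c₁)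
    (hagree : ∀ v, v ≠ aF → c₀ v = c₁ v) :
    C 2 (HmP (c₀ aF) (c₁ aF) (c₀ (vB false true)) 1) := by
  set x := c₀ aF with hx
  set y := c₁ aF with hy
  set w := c₀ (vB false true) with hw
  set cc := c₀ (vB true true) with hcc
  set bb := c₀ (vB true false) with hbb
  have hag : ∀ a b : Bool, (a = true ∨ b = true) → c₁ (vB a b) = c₀ (vB a b) := by
    intro a b hab
    refine (hagree _ ?_).symm
    intro hcon
    rw [vB_eq_aF] at hcon
    rcases hab with h | h
    · rw [hcon.1] at h; exact Bool.noConfusion h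
    · rw [hcon.2] at h; exact Bool.noConfusion h
  have hccw : C 1 (fun t => if t 0 = true then w else cc) := by
    have h1 := comp_desc hc (fun i : Fin 2 =>
      if i = 0 then Sum.inr ((0 : Fin 1), false) else Sum.inl true) h₀
    refine C_congr (fun t => ?_) h1
    have harg : descFun (fun i : Fin 2 =>
        if i = 0 then Sum.inr ((0 : Fin 1), false) else Sum.inl true) t = vB (!(t 0)) true := by
      funext i
      induction i using Fin.cases with
      | zero => simp [descFun, vB]
      | succ l => rw [Subsingleton.elim l 0]; simp [descFun, vB, Fin.cons_succ]
    rw [harg]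
    rcases ht : t 0 with _|_ <;> simp [hcc, hw]
  have hWcorner : IsNSCorner C 1 (fun u : Fin 2 → Bool =>
      if u 0 = false then (if u 1 = false then cc else w) else w) := by
    intro j
    induction j using Fin.cases with
    | zero =>
        refine C_congr (fun v => ?_) hccw
        show _ = (fun u : Fin 2 → Bool => if u 0 = false then (if u 1 = false then cc else w) else w)
          (Fin.insertNth 0 false v)
        rw [insertNth_zero']
        simp only [Fin.cons_zero, cons_apply_one, reduceIte]
        rcases hv : v 0 with _|_ <;> simp [hv]
    | succ j' =>
        rw [Subsingleton.elim j' 0]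
        refine C_congr (fun v => ?_) hccw
        show _ = (fun u : Fin 2 → Bool => if u 0 = false then (if u 1 = false then cc else w) else w)
          (Fin.insertNth (0 : Fin 1).succ false v)
        rw [insertNth_succ', insertNth_zero']
        simp only [Fin.cons_zero, cons_apply_one, Fin.cons_zero]
        rcases hv : v 0 with _|_ <;> simp [hv]
  obtain ⟨W₂, hW₂, hWagree⟩ := hk 1 _ hWcorner
  have hW₂eval : ∀ a b : Bool, ¬(a = true ∧ b = true) →
      W₂ (vB a b) = (if a = false then (if b = false then cc else w) else w) := by
    intro a b hab
    rw [hWagree (vB a b) ?_]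
    · simp [vB_zero, vB_one]
    · intro hcon
      apply hab
      exact ⟨by have := congrFun hcon 0; simpa [vB_zero] using this,
             by have := congrFun hcon 1; simpa [vB_one] using this⟩
  set SG : (Fin 3 → Bool) → X := fun u =>
    if u 0 = true then (if u 1 = true then x else (if u 2 = true then W₂ aT else w))
    else c₁ (vB (!(u 2)) (!(u 1))) with hSG
  have hu2cons : ∀ (b b' : Bool) (z : Fin 1 → Bool),
      (Fin.cons b (Fin.cons b' z) : Fin 3 → Bool) 2 = z 0 := by
    intro b b' z
    have h2 : (2 : Fin 3) = ((0 : Fin 1).succ).succ := by ext; simp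
    rw [h2, Fin.cons_succ, Fin.cons_succ]
  have hGcorner : IsNSCorner C 2 SG := by
    intro j
    induction j using Fin.cases with
    | zero =>
        have h1 := comp_desc hc (fun i : Fin 2 =>
          if i = 0 then Sum.inr ((1 : Fin 2), false) else Sum.inr ((0 : Fin 2), false)) h₁
        refine C_congr (fun v => ?_) h1
        show _ = SG (Fin.insertNth 0 false v)
        rw [insertNth_zero', hSG]
        have harg : descFun (fun i : Fin 2 =>
            if i = 0 then Sum.inr ((1 : Fin 2), false) else Sum.inr ((0 : Fin 2), false)) v
            = vB (!(v 1)) (!(v 0)) := by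
          funext i
          induction i using Fin.cases with
          | zero => simp [descFun, vB]
          | succ l => rw [Subsingleton.elim l 0]; simp [descFun, vB, Fin.cons_succ]
        rw [harg]
        simp only [Fin.cons_zero, cons_apply_one, cons_apply_two]
        simp
    | succ j' =>
        induction j' using Fin.cases with
        | zero =>
            refine C_congr (fun v => ?_) hW₂
            show _ = SG (Fin.insertNth (0 : Fin 2).succ false v)
            rw [insertNth_succ', insertNth_zero', hSG]
            simp only [Fin.cons_zero, cons_apply_one, hu2cons]
            rw [← apply_one_eq_tail_zero]
            rcases hv0 : v 0 with _|_ <;> rcases hv1 : v 1 with _|_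
            · rw [eta2_eq hv0 hv1, hW₂eval false false (by simp)]
              simp [hag true true (Or.inl rfl), vB_zero, vB_one, hcc]
            · rw [eta2_eq hv0 hv1, hW₂eval false true (by simp)]
              simp [hag false true (Or.inr rfl), vB_zero, vB_one, hw]
            · rw [eta2_eq hv0 hv1, hW₂eval true false (by simp)]
              simp [vB_zero, vB_one]
            · rw [eta2_eq hv0 hv1]
              have haT : vB true true = (aT : Fin 2 → Bool) := by
                funext i
                induction i using Fin.cases with
                | zero => rfl
                | succ l => rw [Subsingleton.elim l 0, vB, Fin.cons_succ]; rfl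
              rw [haT]
              simp [vB_zero, vB_one, haT]
        | succ l =>
            rw [Subsingleton.elim l 0]
            have h1 := comp_desc hc (fun i : Fin 2 =>
              if i = 0 then Sum.inr ((0 : Fin 2), false) else Sum.inr ((1 : Fin 2), false)) h₀
            refine C_congr (fun v => ?_) h1
            show _ = SG (Fin.insertNth ((0 : Fin 1).succ).succ false v)
            rw [insertNth_succ', insertNth_succ', insertNth_zero', hSG]
            have harg : descFun (fun i : Fin 2 =>
                if i = 0 then Sum.inr ((0 : Fin 2), false) else Sum.inr ((1 : Fin 2), false)) v
                = vB (!(v 0)) (!(v 1)) := by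
              funext i
              induction i using Fin.cases with
              | zero => simp [descFun, vB]
              | succ l' => rw [Subsingleton.elim l' 0]; simp [descFun, vB, Fin.cons_succ]
            rw [harg]
            simp only [Fin.cons_zero, cons_apply_one, hu2cons]
            rw [← apply_one_eq_tail_zero]
            rcases hv0 : v 0 with _|_ <;> rcases hv1 : v 1 with _|_
            · simp [hag true true (Or.inl rfl)]
            · simp [hag true false (Or.inl rfl)]
            · simp [hw]
            · simp [vB_ff, hx]
  obtain ⟨SGh, hSGh, hSGagree⟩ := hk 2 SG hGcorner
  have h1 := comp_desc hc (fun i : Fin 3 =>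
    if i = 0 then Sum.inr ((1 : Fin 2), true)
    else if i = 1 then Sum.inr ((0 : Fin 2), true) else Sum.inr ((1 : Fin 2), false)) hSGh
  refine C_congr (fun u => ?_) h1
  set dd : Fin 3 → Bool ⊕ (Fin 2 × Bool) := fun i =>
    if i = 0 then Sum.inr ((1 : Fin 2), true)
    else if i = 1 then Sum.inr ((0 : Fin 2), true) else Sum.inr ((1 : Fin 2), false) with hdd
  have hz0 : descFun dd u 0 = u 1 := by simp [descFun, hdd]
  have hz1 : descFun dd u 1 = u 0 := by simp [descFun, hdd]
  have hz2 : descFun dd u 2 = !(u 1) := by simp [descFun, hdd]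
  have hzne : descFun dd u ≠ (aT : Fin 3 → Bool) := by
    intro hcon
    have e0 : u 1 = true := by rw [← hz0, hcon]; rfl
    have e2 : (!(u 1)) = true := by rw [← hz2, hcon]; rfl
    rw [e0] at e2
    exact Bool.noConfusion e2
  rw [hSGagree _ hzne, hSG]
  simp only [hz0, hz1, hz2]
  rw [HmP1_eval]
  rcases hu0 : u 0 with _|_ <;> rcases hu1 : u 1 with _|_
  · simp [hag false true (Or.inr rfl), hw]
  · simp
  · simp [vB_ff, hy]
  · simp

end NSAux
namespace NSAux

universe u

theorem HmP_restrict {X : Type*} {C : Cubes X} (hc : HasComp C) {x y w : X} {K : ℕ}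
    (hH : C (K+1) (HmP x y w K)) :
    ∀ l, 1 ≤ l → l ≤ K → C (l+1) (HmP x y w l) := by
  intro l _ hlK
  set d : Fin (K+1) → Bool ⊕ (Fin (l+1) × Bool) :=
    fun i => if h : (i : ℕ) < l+1 then Sum.inr (⟨i, h⟩, true) else Sum.inl false with hd
  have h1 := comp_desc hc d hH
  refine C_congr (fun u => ?_) h1
  have hval : ∀ i : Fin (K+1), descFun d u i
      = if h : (i : ℕ) < l+1 then u ⟨i, h⟩ else false := by
    intro i
    by_cases h : (i : ℕ) < l+1
    · rw [dif_pos h]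
      unfold descFun
      rw [hd]
      simp only [dif_pos h]
      simp
    · rw [dif_neg h]
      unfold descFun
      rw [hd]
      simp only [dif_neg h]
  have h0 : descFun d u 0 = u 0 := by
    rw [hval 0]
    have hlt : ((0 : Fin (K+1)) : ℕ) < l + 1 := by simp
    rw [dif_pos hlt]
    congr 1
  have htail : (Fin.tail (descFun d u) = (aF : Fin K → Bool))
      ↔ (Fin.tail u = (aF : Fin l → Bool)) := by
    constructor
    · intro h
      funext i
      have hiK : (i : ℕ) < K := lt_of_lt_of_le i.isLt hlK
      have h2 := congrFun h (⟨(i : ℕ), hiK⟩ : Fin K)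
      rw [Fin.tail] at h2 ⊢
      rw [hval] at h2
      have hlt : (((⟨(i:ℕ), hiK⟩ : Fin K)).succ : ℕ) < l + 1 := by
        simp only [Fin.val_succ]
        omega
      rw [dif_pos hlt] at h2
      have harg : (⟨(((⟨(i:ℕ), hiK⟩ : Fin K)).succ : ℕ), hlt⟩ : Fin (l+1)) = i.succ := by
        ext
        simp [Fin.val_succ]
      rw [harg] at h2
      exact h2
    · intro h
      funext j
      rw [Fin.tail, hval]
      by_cases hj : ((j.succ : Fin (K+1)) : ℕ) < l + 1
      · rw [dif_pos hj]
        have hjl : (j : ℕ) < l := by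
          simp only [Fin.val_succ] at hj
          omega
        have h2 := congrFun h (⟨(j:ℕ), hjl⟩ : Fin l)
        rw [Fin.tail] at h2
        have harg : (⟨((j.succ : Fin (K+1)) : ℕ), hj⟩ : Fin (l+1)) = (⟨(j:ℕ), hjl⟩ : Fin l).succ := by
          ext
          simp [Fin.val_succ]
        rw [harg]
        exact h2
      · rw [dif_neg hj]
        rfl
  unfold HmP
  rw [h0]
  rcases h00 : u 0 with _|_
  · simp
  · simp only [reduceIte]
    by_cases ht : Fin.tail u = (aF : Fin l → Bool)
    · rw [if_pos (htail.mpr ht), if_pos ht]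
    · rw [if_neg (fun hcc => ht (htail.mp hcc)), if_neg ht]

theorem patMain : ∀ (k : ℕ), 1 ≤ k → ∀ {X : Type u} (C : Cubes X),
    HasComp C → HasCompl C →
    ∀ (c₀ c₁ : (Fin (k+1) → Bool) → X), C (k+1) c₀ → C (k+1) c₁ →
    (∀ v, v ≠ aF → c₀ v = c₁ v) →
    C (k+1) (Pat (c₀ aF) (c₁ aF) (k+1)) := by
  intro k hk
  induction k, hk using Nat.le_induction with
  | base =>
      intro X C hc hcl c₀ c₁ h₀ h₁ hagree
      have hagF : c₁ (vB false true) = c₀ (vB false true) := by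
        refine (hagree _ ?_).symm
        intro hcon
        exact Bool.noConfusion (vB_eq_aF.mp hcon).2
      have hwx : C 1 (fun t => if t 0 = true then c₀ aF else c₀ (vB false true)) := by
        have h1 := comp_desc hc (fun i : Fin 2 =>
          if i = 0 then Sum.inl false else Sum.inr ((0 : Fin 1), false)) h₀
        refine C_congr (fun t => ?_) h1
        have harg : descFun (fun i : Fin 2 =>
            if i = 0 then Sum.inl false else Sum.inr ((0 : Fin 1), false)) t
            = vB false (!(t 0)) := by
          funext i
          induction i using Fin.cases with
          | zero => simp [descFun, vB]
          | succ l => rw [Subsingleton.elim l 0]; simp [descFun, vB, Fin.cons_succ]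
        rw [harg]
        rcases ht : t 0 with _|_
        · simp
        · simp [vB_ff]
      have hwy : C 1 (fun t => if t 0 = true then c₁ aF else c₀ (vB false true)) := by
        have h1 := comp_desc hc (fun i : Fin 2 =>
          if i = 0 then Sum.inl false else Sum.inr ((0 : Fin 1), false)) h₁
        refine C_congr (fun t => ?_) h1
        have harg : descFun (fun i : Fin 2 =>
            if i = 0 then Sum.inl false else Sum.inr ((0 : Fin 1), false)) t
            = vB false (!(t 0)) := by
          funext i
          induction i using Fin.cases with
          | zero => simp [descFun, vB]
          | succ l => rw [Subsingleton.elim l 0]; simp [descFun, vB, Fin.cons_succ]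
        rw [harg]
        rcases ht : t 0 with _|_
        · simp [hagF]
        · simp [vB_ff]
      have hH := baseH hc hcl c₀ c₁ h₀ h₁ hagree
      exact emachine hc hcl 1 hwx hwy (fun l h1 h2 => by
        have hl : l = 1 := le_antisymm h2 h1
        subst hl
        exact hH)
  | succ k hk IH =>
      intro X C hc hcl c₀ c₁ h₀ h₁ hagree
      have hconsT_ne : ∀ (v : Fin (k+1) → Bool), Fin.cons true v ≠ (aF : Fin (k+2) → Bool) := by
        intro v hcon
        exact Bool.noConfusion (cons_eq_aF.mp hcon).1
      have hconsF : (Fin.cons false (aF : Fin (k+1) → Bool) : Fin (k+2) → Bool) = aF :=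
        cons_eq_aF.mpr ⟨rfl, rfl⟩
      have hyF : c₁ (Fin.cons true (aF : Fin (k+1) → Bool)) = c₀ (Fin.cons true aF) :=
        (hagree _ (hconsT_ne _)).symm
      have hflip : ∀ (c : (Fin (k+2) → Bool) → X), C (k+2) c →
          C (k+2) (fun u => c (Fin.cons (!(u 0)) (Fin.tail u))) := by
        intro c hcube
        have h1 := comp_desc hc (fun i : Fin (k+2) =>
          Fin.cases (Sum.inr ((0 : Fin (k+2)), false)) (fun l => Sum.inr (l.succ, true)) i) hcube
        refine C_congr (fun u => ?_) h1
        congr 1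
        funext i
        induction i using Fin.cases with
        | zero => simp [descFun]
        | succ l => simp [descFun, Fin.cons_succ]; rfl
      have hD₀cube : CP C (k+1) (fun v : Fin (k+1) → Bool =>
          ((c₀ (Fin.cons true v), c₀ (Fin.cons false v)) : X × X)) := by
        show C (k+2) _
        refine C_congr (fun u => ?_) (hflip c₀ h₀)
        rcases hu : u 0 with _|_ <;> simp
      have hD₁cube : CP C (k+1) (fun v : Fin (k+1) → Bool =>
          ((c₀ (Fin.cons true v), c₁ (Fin.cons false v)) : X × X)) := by
        show C (k+2) _
        refine C_congr (fun u => ?_) (hflip c₁ h₁)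
        rcases hu : u 0 with _|_ <;> simp
        exact (hagree _ (hconsT_ne _)).symm
      have hDagree : ∀ v, v ≠ (aF : Fin (k+1) → Bool) →
          ((c₀ (Fin.cons true v), c₀ (Fin.cons false v)) : X × X)
            = (c₀ (Fin.cons true v), c₁ (Fin.cons false v)) := by
        intro v hv
        have : c₀ (Fin.cons false v) = c₁ (Fin.cons false v) := by
          refine hagree _ (fun hcon => hv ?_)
          exact (cons_eq_aF.mp hcon).2
        rw [this]
      have hPat' := IH (X := X × X) (CP C) (CP_comp hc) (CP_compl hc hcl)
        _ _ hD₀cube hD₁cube hDagree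
      have hHtop : C (k+2) (HmP (c₀ aF) (c₁ aF) (c₀ (Fin.cons true aF)) (k+1)) := by
        have h2 : C (k+2) (fun u => if u 0 = true
            then ((Pat ((c₀ (Fin.cons true aF), c₀ (Fin.cons false aF)) : X × X)
                ((c₀ (Fin.cons true aF), c₁ (Fin.cons false aF)) : X × X) (k+1)) (Fin.tail u)).2
            else ((Pat ((c₀ (Fin.cons true aF), c₀ (Fin.cons false aF)) : X × X)
                ((c₀ (Fin.cons true aF), c₁ (Fin.cons false aF)) : X × X) (k+1)) (Fin.tail u)).1) := hPat'
        refine C_congr (fun u => ?_) h2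
        unfold Pat HmP
        rcases hu : u 0 with _|_ <;> by_cases ht : Fin.tail u = (aF : Fin (k+1) → Bool) <;>
          simp [ht, hconsF]
      have hwx : C 1 (fun t => if t 0 = true then c₀ aF else c₀ (Fin.cons true aF)) := by
        have h1 := comp_desc hc (fun i : Fin (k+2) =>
          Fin.cases (Sum.inr ((0 : Fin 1), false)) (fun _ => Sum.inl false) i) h₀
        refine C_congr (fun t => ?_) h1
        have harg : descFun (fun i : Fin (k+2) =>
            Fin.cases (Sum.inr ((0 : Fin 1), false)) (fun _ => Sum.inl false) i) t
            = Fin.cons (!(t 0)) (aF : Fin (k+1) → Bool) := by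
          funext i
          induction i using Fin.cases with
          | zero => simp [descFun]
          | succ l => simp [descFun, Fin.cons_succ]; rfl
        rw [harg]
        rcases ht : t 0 with _|_
        · simp
        · simp [hconsF]
      have hwy : C 1 (fun t => if t 0 = true then c₁ aF else c₀ (Fin.cons true aF)) := by
        have h1 := comp_desc hc (fun i : Fin (k+2) =>
          Fin.cases (Sum.inr ((0 : Fin 1), false)) (fun _ => Sum.inl false) i) h₁
        refine C_congr (fun t => ?_) h1
        have harg : descFun (fun i : Fin (k+2) =>
            Fin.cases (Sum.inr ((0 : Fin 1), false)) (fun _ => Sum.inl false) i) t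
            = Fin.cons (!(t 0)) (aF : Fin (k+1) → Bool) := by
          funext i
          induction i using Fin.cases with
          | zero => simp [descFun]
          | succ l => simp [descFun, Fin.cons_succ]; rfl
        rw [harg]
        rcases ht : t 0 with _|_
        · simp [hyF]
        · simp [hconsF]
      exact emachine hc hcl (k+1) hwx hwy (HmP_restrict hc hHtop)

end NSAux

theorem stmt16 {X : Type*} (C : ∀ n, ((Fin n → Bool) → X) → Prop)
    (hns : IsNilspace C) (k : ℕ) (hk : 1 ≤ k) :
    (∀ x y : X, simRel C k x y ↔
        C (k + 1) (fun v : Fin (k + 1) → Bool =>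
          if v = (fun _ => false) then y else x)) ∧
    Equivalence (simRel C k) := by
  obtain ⟨hcomp, herg, hcompl⟩ := hns
  have hconst : ∀ a : X, C (k+1) (fun _ => a) := by
    intro a
    have h1 := hcomp (k+1) 1 (NSAux.descFun (fun _ : Fin 1 => Sum.inl false))
      (NSAux.descFun_mor _) (fun _ => a) (herg _)
    exact h1
  have hchar : ∀ x y : X, simRel C k x y ↔
      C (k + 1) (fun v : Fin (k + 1) → Bool => if v = (fun _ => false) then y else x) := by
    intro x y
    constructor
    · rintro ⟨q0, q1, h0, h1, e0, e1, hag⟩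
      have hmain := NSAux.patMain k hk C hcomp hcompl q0 q1 h0 h1 (fun v hv => hag v hv)
      have e0' : q0 NSAux.aF = x := e0
      have e1' : q1 NSAux.aF = y := e1
      rw [e0', e1'] at hmain
      exact hmain
    · intro hpat
      refine ⟨fun _ => x, _, hconst x, hpat, rfl, ?_, ?_⟩
      · simp
      · intro v hv
        show x = if v = (fun _ => false) then y else x
        rw [if_neg hv]
  refine ⟨hchar, ⟨?_, ?_, ?_⟩⟩
  · intro a
    exact ⟨fun _ => a, fun _ => a, hconst a, hconst a, rfl, rfl, fun _ _ => rfl⟩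
  · rintro a b ⟨q0, q1, h0, h1, e0, e1, hag⟩
    exact ⟨q1, q0, h1, h0, e1, e0, fun v hv => (hag v hv).symm⟩
  · intro a b c hab hbc
    have hba : simRel C k b a := by
      obtain ⟨q0, q1, h0, h1, e0, e1, hag⟩ := hab
      exact ⟨q1, q0, h1, h0, e1, e0, fun v hv => (hag v hv).symm⟩
    have p1 := (hchar b a).mp hba
    have p2 := (hchar b c).mp hbc
    refine ⟨fun v => if v = (fun _ => false) then a else b,
            fun v => if v = (fun _ => false) then c else b, p1, p2, by simp, by simp, ?_⟩
    intro v hv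
    show (if v = (fun _ => false) then a else b) = (if v = (fun _ => false) then c else b)
    rw [if_neg hv, if_neg hv]
end

section
/- Let X be a k-step nilspace. Then the set Tran(X) of translations of height 1 is a group under composition, and setting Tran_0(X) = Tran_1(X) = Tran(X), the sequence (Tran_i(X))_{i≥0} of translation groups of height i is a filtration of degree at most k: Tran_i(X) ⊇ Tran_j(X) for i ≤ j, [Tran_i(X), Tran_j(X)] ⊆ Tran_{i+j}(X), and Tran_{k+1}(X) is trivial. -/
open Finset

/-- A (pre)filtration on a group: a decreasing chain of subgroups with
`[G_i, G_j] ⊆ G_{i+j}`. -/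
def IsFiltration' {G : Type*} [Group G] (Gf : ℕ → Subgroup G) : Prop :=
  (∀ i, Gf (i + 1) ≤ Gf i) ∧
  (∀ i j : ℕ, ∀ x ∈ Gf i, ∀ y ∈ Gf j, x⁻¹ * y⁻¹ * x * y ∈ Gf (i + j))

open Classical in
/-- `α^F`: apply `α` to the values of `f` on the face `F`, leaving other values
unchanged. -/
noncomputable def faceApply {X : Type*} {n : ℕ} (F : Set (Fin n → Bool)) (α : X → X)
    (f : (Fin n → Bool) → X) : (Fin n → Bool) → X :=
  fun v => if v ∈ F then α (f v) else f v

/-- A translation of height `i`: for every `n ≥ i` and every face `F` of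
codimension `i`, the map `α^F` preserves cubes. -/
def IsTranslation {X : Type*} (C : ∀ n, ((Fin n → Bool) → X) → Prop) (i : ℕ)
    (α : X → X) : Prop :=
  ∀ n : ℕ, i ≤ n → ∀ F : Set (Fin n → Bool), IsFaceOfCodim F i →
    ∀ q, C n q → C n (faceApply F α q)

section NSDev

variable {X : Type*}

/-- coordinate rebinding map: each output coordinate is a (possibly negated) input
coordinate or a constant. -/
def nsRebind {m n : ℕ} (s : Fin n → (Fin m × Bool) ⊕ Bool) (v : Fin m → Bool) :
    Fin n → Bool :=
  fun j => match s j with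
  | .inl (i, b) => cond b (!(v i)) (v i)
  | .inr b => b

lemma nsRebind_isCubeMorphism {m n : ℕ} (s : Fin n → (Fin m × Bool) ⊕ Bool) :
    IsCubeMorphism (nsRebind s) := by
  refine ⟨AddMonoidHom.mk' (fun x j => match s j with
      | .inl (i, b) => if b then -x i else x i
      | .inr _ => 0) ?_,
      (fun j => match s j with
      | .inl (i, b) => if b then (1:ℤ) else 0
      | .inr b => if b then 1 else 0), ?_⟩
  · intro x y; funext j
    rcases hs : s j with ⟨i, b⟩ | b
    · cases b <;> simp [hs] <;> ring
    · simp [hs]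
  · intro v; funext j
    rcases hs : s j with ⟨i, b⟩ | b
    · cases b <;> cases hv : v i <;>
        simp [cubeEmb, nsRebind, hs, hv, AddMonoidHom.mk'_apply]
    · cases b <;> simp [cubeEmb, nsRebind, hs, AddMonoidHom.mk'_apply]

variable {C : ∀ n, ((Fin n → Bool) → X) → Prop}

lemma ns_comp (hC : IsNilspace C) {m n : ℕ} {φ : (Fin m → Bool) → (Fin n → Bool)}
    (hφ : IsCubeMorphism φ) {q} (hq : C n q) : C m (fun v => q (φ v)) :=
  hC.1 m n φ hφ q hq

lemma ns_C1 (hC : IsNilspace C) (q : (Fin 1 → Bool) → X) : C 1 q := hC.2.1 q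

lemma ns_C0 (hC : IsNilspace C) (q : (Fin 0 → Bool) → X) : C 0 q := by
  have h1 : C 1 (fun _ => q (fun i => i.elim0)) := hC.2.1 _
  have h := ns_comp (m := 0) hC (nsRebind_isCubeMorphism
    (fun _ : Fin 1 => (Sum.inr false : (Fin 0 × Bool) ⊕ Bool))) h1
  have e : (fun v => (fun _ : Fin 1 → Bool => q (fun i => i.elim0))
      (nsRebind (fun _ : Fin 1 => (Sum.inr false : (Fin 0 × Bool) ⊕ Bool)) v)) = q := by
    funext v; exact congrArg q (funext fun i => i.elim0)
  rwa [e] at h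

lemma ns_const (hC : IsNilspace C) (n : ℕ) (x : X) : C n (fun _ => x) :=
  ns_comp hC (nsRebind_isCubeMorphism (Fin.elim0 : Fin 0 → (Fin n × Bool) ⊕ Bool))
    (ns_C0 hC (fun _ => x))

lemma face_coord {M : ℕ} (l : Fin M) (b : Bool) :
    IsFaceOfCodim {v : Fin M → Bool | v l = b} 1 :=
  ⟨{l}, fun _ => b, Finset.card_singleton l, by ext v; simp⟩

lemma faceApply_id {n : ℕ} (F : Set (Fin n → Bool)) (q : (Fin n → Bool) → X) :
    faceApply F (id : X → X) q = q := by
  funext v; by_cases h : v ∈ F <;> simp [faceApply, h]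

lemma faceApply_comp {n : ℕ} (F : Set (Fin n → Bool)) (a b : X → X)
    (q : (Fin n → Bool) → X) :
    faceApply F (a ∘ b) q = faceApply F a (faceApply F b q) := by
  funext v; by_cases h : v ∈ F <;> simp [faceApply, h]

lemma trans_id (h : ℕ) : IsTranslation C h (id : X → X) := by
  intro n hn F hF q hq; rwa [faceApply_id]

lemma trans_comp {h : ℕ} {a b : X → X} (ha : IsTranslation C h a)
    (hb : IsTranslation C h b) : IsTranslation C h (a ∘ b) := by
  intro n hn F hF q hq
  rw [faceApply_comp]
  exact ha n hn F hF _ (hb n hn F hF q hq)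


noncomputable def insRebind {m : ℕ} (j : Fin (m+1)) (b : Bool) :
    Fin (m+1) → (Fin m × Bool) ⊕ Bool :=
  fun i => if h : i = j then Sum.inr b
    else Sum.inl ((Fin.exists_succAbove_eq h).choose, false)

lemma nsRebind_insRebind {m : ℕ} (j : Fin (m+1)) (b : Bool) (w : Fin m → Bool) :
    nsRebind (insRebind j b) w = j.insertNth b w := by
  funext i
  rcases eq_or_ne i j with rfl | h
  · simp [nsRebind, insRebind, Fin.insertNth_apply_same]
  · have hs := (Fin.exists_succAbove_eq h).choose_spec
    simp only [nsRebind, insRebind, dif_neg h]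
    have h2 := Fin.insertNth_apply_succAbove (α := fun _ => Bool) j b w (Fin.exists_succAbove_eq h).choose
    rw [hs] at h2
    simpa using h2.symm

lemma ns_insert (hC : IsNilspace C) {m : ℕ} (j : Fin (m+1)) (b : Bool)
    {q : (Fin (m+1) → Bool) → X} (hq : C (m+1) q) :
    C m (fun w => q (j.insertNth b w)) := by
  have h := ns_comp hC (nsRebind_isCubeMorphism (insRebind j b)) hq
  have e : (fun w => q (nsRebind (insRebind j b) w)) = fun w => q (j.insertNth b w) := by
    funext w; exact congrArg q (nsRebind_insRebind j b w)
  rwa [e] at h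

/-- reflection of the cube matching vertex `e` with the all-ones vertex -/
def reflAt {M : ℕ} (e : Fin M → Bool) (v : Fin M → Bool) : Fin M → Bool :=
  nsRebind (fun i => Sum.inl (i, !(e i))) v

lemma reflAt_reflAt {M : ℕ} (e v : Fin M → Bool) : reflAt e (reflAt e v) = v := by
  funext i; simp only [reflAt, nsRebind]; cases e i <;> cases v i <;> rfl

lemma reflAt_top {M : ℕ} (e : Fin M → Bool) : reflAt e (fun _ => true) = e := by
  funext i; simp only [reflAt, nsRebind]; cases hei : e i <;> rfl

lemma reflAt_self {M : ℕ} (e : Fin M → Bool) : reflAt e e = fun _ => true := by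
  funext i; simp only [reflAt, nsRebind]; cases hei : e i <;> rfl

lemma reflAt_eq_top_iff {M : ℕ} (e v : Fin M → Bool) :
    reflAt e v = (fun _ => true) ↔ v = e := by
  constructor
  · intro h
    have := congrArg (reflAt e) h
    rwa [reflAt_reflAt, reflAt_top] at this
  · rintro rfl; exact reflAt_self _

lemma reflAt_eq_iff {M : ℕ} (e v : Fin M → Bool) :
    reflAt e v = e ↔ v = (fun _ => true) := by
  constructor
  · intro h
    have := congrArg (reflAt e) h
    rwa [reflAt_reflAt, reflAt_self] at this
  · rintro rfl; exact reflAt_top _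

lemma ns_refl (hC : IsNilspace C) {M : ℕ} (e : Fin M → Bool)
    {q : (Fin M → Bool) → X} (hq : C M q) : C M (fun v => q (reflAt e v)) :=
  ns_comp hC (nsRebind_isCubeMorphism _) hq

/-- Completion of a corner based at an arbitrary vertex `e`.  The faces through
the antipodal vertex are given as globally-defined cubes agreeing with `r` on
the respective face. -/
lemma ns_completion_at (hC : IsNilspace C) {m : ℕ} (r : (Fin (m+1) → Bool) → X)
    (e : Fin (m+1) → Bool)
    (hface : ∀ j : Fin (m+1), ∃ r', C (m+1) r' ∧ ∀ v, v j = !(e j) → r' v = r v) :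
    ∃ qt, C (m+1) qt ∧ ∀ v, v ≠ e → qt v = r v := by
  have hcorner : IsNSCorner C m (fun v => r (reflAt e v)) := by
    intro j
    obtain ⟨r', hr'C, hr'⟩ := hface j
    have e1 : lowerFaceRestr (fun v => r (reflAt e v)) j
        = fun w => r' (reflAt e (j.insertNth false w)) := by
      funext w
      have hcoord : reflAt e (j.insertNth false w) j = !(e j) := by
        simp only [reflAt, nsRebind, Fin.insertNth_apply_same]
        cases e j <;> rfl
      exact (hr' _ hcoord).symm
    rw [e1]
    exact ns_insert hC j false (ns_refl hC e hr'C)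
  obtain ⟨Q, hQC, hQ⟩ := hC.2.2 m _ hcorner
  refine ⟨fun v => Q (reflAt e v), ns_refl hC e hQC, fun v hv => ?_⟩
  have h1 : reflAt e v ≠ (fun _ => true) := by
    rw [Ne, reflAt_eq_top_iff]; exact hv
  have h2 := hQ (reflAt e v) h1
  simpa [reflAt_reflAt] using h2

/-- two cubes of dimension ≥ k+1 agreeing off one vertex are equal -/
lemma ns_unique_ext {k : ℕ} (hns : IsKStepNilspace C k) :
    ∀ M, k+1 ≤ M → ∀ q₁ q₂ : (Fin M → Bool) → X, C M q₁ → C M q₂ →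
      ∀ e : Fin M → Bool, (∀ v, v ≠ e → q₁ v = q₂ v) → q₁ = q₂ := by
  have hC := hns.1
  intro M hM
  induction M, hM using Nat.le_induction with
  | base =>
    intro q₁ q₂ h₁ h₂ e hagree
    have hcorner : IsNSCorner C k (fun v => q₁ (reflAt e v)) := fun j =>
      ns_insert hC j false (ns_refl hC e h₁)
    have hc₁ : IsNSCompletion C k (fun v => q₁ (reflAt e v)) (fun v => q₁ (reflAt e v)) :=
      ⟨ns_refl hC e h₁, fun v _ => rfl⟩
    have hc₂ : IsNSCompletion C k (fun v => q₁ (reflAt e v)) (fun v => q₂ (reflAt e v)) := by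
      refine ⟨ns_refl hC e h₂, fun v hv => ?_⟩
      have : reflAt e v ≠ e := by rw [Ne, reflAt_eq_iff]; exact hv
      exact (hagree _ this).symm
    have huu := (hns.2 _ hcorner).unique hc₂ hc₁
    funext v
    have := congrFun huu (reflAt e v)
    simpa [reflAt_reflAt] using this.symm
  | succ M hM IH =>
    intro q₁ q₂ h₁ h₂ e hagree
    funext v
    by_cases hv : v = e
    · rw [hv]
      have h0 : (0:ℕ) < M + 1 := by omega
      set j : Fin (M+1) := ⟨0, h0⟩ with hj
      have hr₁ : C M (fun w => q₁ (j.insertNth (e j) w)) := ns_insert hC j (e j) h₁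
      have hr₂ : C M (fun w => q₂ (j.insertNth (e j) w)) := ns_insert hC j (e j) h₂
      have hagree' : ∀ w, w ≠ (fun i => e (j.succAbove i)) →
          (fun w => q₁ (j.insertNth (e j) w)) w = (fun w => q₂ (j.insertNth (e j) w)) w := by
        intro w hw
        refine hagree _ ?_
        intro hh
        apply hw
        funext i
        have := congrArg (fun u => u (j.succAbove i)) hh
        simpa [Fin.insertNth_apply_succAbove] using this
      have hIH := IH _ _ hr₁ hr₂ _ hagree'
      have he : j.insertNth (e j) (fun i => e (j.succAbove i)) = e := by
        funext l
        rcases eq_or_ne l j with rfl | h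
        · rw [Fin.insertNth_apply_same]
        · obtain ⟨i, rfl⟩ := Fin.exists_succAbove_eq h
          rw [Fin.insertNth_apply_succAbove]
      have := congrFun hIH (fun i => e (j.succAbove i))
      simpa [he] using this
    · exact hagree v hv

/-- iterated applications of a height-1 translation along coordinate faces -/
lemma ns_iter {M : ℕ} (α : X → X) (hα : IsTranslation C 1 α) (S : Finset (Fin M))
    (ε : Fin M → Bool) {q : (Fin M → Bool) → X} (hq : C M q) :
    C M (fun v => α^[∑ l ∈ S, if v l = ε l then 1 else 0] (q v)) := by
  classical
  induction S using Finset.induction_on with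
  | empty => simpa using hq
  | @insert j S hj IH =>
    have e1 : (fun v => α^[∑ l ∈ insert j S, if v l = ε l then 1 else 0] (q v))
        = faceApply {v | v j = ε j} α
            (fun v => α^[∑ l ∈ S, if v l = ε l then 1 else 0] (q v)) := by
      funext v
      rw [Finset.sum_insert hj]
      by_cases h : v j = ε j
      · rw [if_pos h, Nat.add_comm, Function.iterate_succ_apply']
        simp [faceApply, h]
      · rw [if_neg h, Nat.zero_add]
        simp [faceApply, h]
    rw [e1]
    exact hα M j.pos _ (face_coord j (ε j)) _ IH

/-- monotonicity: a translation of height m+1 is a translation of height m -/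
lemma trans_mono_step (hC : IsNilspace C) {m : ℕ} {α : X → X}
    (hα : IsTranslation C (m+1) α) : IsTranslation C m α := by
  rintro n hn F ⟨I, x, hI, rfl⟩ q hq
  classical
  have hQ : C (n+1) (fun v => q (fun i => v i.castSucc)) := by
    have h := ns_comp hC
      (nsRebind_isCubeMorphism (fun i : Fin n => Sum.inl (i.castSucc, false))) hq
    exact h
  have hlastim : (Fin.last n) ∉ I.image Fin.castSucc := by
    simp only [Finset.mem_image]
    rintro ⟨i, -, hi⟩
    have := congrArg Fin.val hi
    simp only [Fin.coe_castSucc, Fin.val_last] at this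
    omega
  have hface : ∀ t : Bool, IsFaceOfCodim
      {v : Fin (n+1) → Bool | (∀ i ∈ I, v i.castSucc = x i) ∧ v (Fin.last n) = t}
      (m+1) := by
    intro t
    refine ⟨insert (Fin.last n) (I.image Fin.castSucc),
      (fun i => if h : (i:ℕ) < n then x ⟨i, h⟩ else t), ?_, ?_⟩
    · rw [Finset.card_insert_of_notMem hlastim,
        Finset.card_image_of_injective _ (Fin.castSucc_injective n), hI]
    · ext v
      simp only [Set.mem_setOf_eq, Finset.mem_insert, Finset.mem_image]
      constructor
      · rintro ⟨h1, h2⟩ i hi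
        rcases hi with rfl | ⟨i0, hi0, rfl⟩
        · rw [h2, dif_neg (by simp)]
        · rw [h1 i0 hi0, dif_pos (by simp [Fin.is_lt] : ((i0.castSucc : Fin (n+1)) : ℕ) < n)]
          exact congrArg x (Fin.val_injective (by simp))
      · intro h
        constructor
        · intro i hi
          rw [h i.castSucc (Or.inr ⟨i, hi, rfl⟩),
            dif_pos (by simp [Fin.is_lt] : ((i.castSucc : Fin (n+1)) : ℕ) < n)]
          exact congrArg x (Fin.val_injective (by simp))
        · rw [h (Fin.last n) (Or.inl rfl), dif_neg (by simp)]
  have h1 := hα (n+1) (by omega) _ (hface true) _ hQ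
  have h2 := hα (n+1) (by omega) _ (hface false) _ h1
  have heq : faceApply {v : Fin (n+1) → Bool |
        (∀ i ∈ I, v i.castSucc = x i) ∧ v (Fin.last n) = false} α
      (faceApply {v : Fin (n+1) → Bool |
        (∀ i ∈ I, v i.castSucc = x i) ∧ v (Fin.last n) = true} α
      (fun v => q (fun i => v i.castSucc)))
      = fun v => (faceApply {w : Fin n → Bool | ∀ i ∈ I, w i = x i} α q)
          (fun i => v i.castSucc) := by
    funext v
    by_cases hF : ∀ i ∈ I, v i.castSucc = x i
    · cases ht : v (Fin.last n)
      · have m1 : v ∈ {v : Fin (n+1) → Bool |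
            (∀ i ∈ I, v i.castSucc = x i) ∧ v (Fin.last n) = false} := ⟨hF, ht⟩
        have m2 : v ∉ {v : Fin (n+1) → Bool |
            (∀ i ∈ I, v i.castSucc = x i) ∧ v (Fin.last n) = true} := by
          intro hh; rw [hh.2] at ht; cases ht
        have m3 : (fun i => v i.castSucc) ∈ {w : Fin n → Bool | ∀ i ∈ I, w i = x i} := hF
        simp only [faceApply]
        rw [if_neg m2, if_pos m1, if_pos m3]
      · have m1 : v ∉ {v : Fin (n+1) → Bool |
            (∀ i ∈ I, v i.castSucc = x i) ∧ v (Fin.last n) = false} := by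
          intro hh; rw [hh.2] at ht; cases ht
        have m2 : v ∈ {v : Fin (n+1) → Bool |
            (∀ i ∈ I, v i.castSucc = x i) ∧ v (Fin.last n) = true} := ⟨hF, ht⟩
        have m3 : (fun i => v i.castSucc) ∈ {w : Fin n → Bool | ∀ i ∈ I, w i = x i} := hF
        simp only [faceApply]
        rw [if_pos m2, if_neg m1, if_pos m3]
    · have m1 : v ∉ {v : Fin (n+1) → Bool |
          (∀ i ∈ I, v i.castSucc = x i) ∧ v (Fin.last n) = false} := by
        intro hh; exact hF hh.1
      have m2 : v ∉ {v : Fin (n+1) → Bool |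
          (∀ i ∈ I, v i.castSucc = x i) ∧ v (Fin.last n) = true} := by
        intro hh; exact hF hh.1
      have m3 : (fun i => v i.castSucc) ∉ {w : Fin n → Bool | ∀ i ∈ I, w i = x i} := hF
      simp only [faceApply]
      rw [if_neg m2, if_neg m1, if_neg m3]
  rw [heq] at h2
  -- restrict back along the section w ↦ (w, false)
  have h3 := ns_comp hC (nsRebind_isCubeMorphism
    (fun i : Fin (n+1) => if h : (i:ℕ) < n then Sum.inl ((⟨i, h⟩ : Fin n), false)
      else Sum.inr false)) h2
  have e3 : (fun w => (fun v => (faceApply {w : Fin n → Bool | ∀ i ∈ I, w i = x i} α q)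
        (fun i => v i.castSucc))
      (nsRebind (fun i : Fin (n+1) => if h : (i:ℕ) < n then
        Sum.inl ((⟨i, h⟩ : Fin n), false) else Sum.inr false) w))
      = faceApply {w : Fin n → Bool | ∀ i ∈ I, w i = x i} α q := by
    funext w
    refine congrArg _ (funext fun i => ?_)
    have hlt : ((i.castSucc : Fin (n+1)) : ℕ) < n := by simp [Fin.is_lt]
    simp only [nsRebind, dif_pos hlt]
    exact congrArg w (by ext; simp)
  rwa [e3] at h3


lemma trans_mono (hC : IsNilspace C) {a b : ℕ} (hab : a ≤ b) {α : X → X}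
    (hα : IsTranslation C b α) : IsTranslation C a α := by
  induction b, hab using Nat.le_induction with
  | base => exact hα
  | succ b hb IH => exact IH (trans_mono_step hC hα)

/-- a translation of height k+1 on a k-step nilspace is the identity -/
lemma trans_succ_trivial {k : ℕ} (hns : IsKStepNilspace C k) {α : X → X}
    (hα : IsTranslation C (k+1) α) : α = id := by
  classical
  have hC := hns.1
  funext y
  have hFc : IsFaceOfCodim {v : Fin (k+1) → Bool | ∀ i ∈ (Finset.univ : Finset (Fin (k+1))),
      v i = true} (k+1) :=
    ⟨Finset.univ, fun _ => true, by simp, rfl⟩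
  have hq : C (k+1) (fun _ : Fin (k+1) → Bool => y) := ns_const hC _ y
  have h2 := hα (k+1) le_rfl _ hFc _ hq
  have hcorner : IsNSCorner C k (fun _ : Fin (k+1) → Bool => y) :=
    fun j => ns_const hC _ y
  have hc1 : IsNSCompletion C k (fun _ => y) (fun _ : Fin (k+1) → Bool => y) :=
    ⟨hq, fun v _ => rfl⟩
  have hc2 : IsNSCompletion C k (fun _ => y)
      (faceApply {v : Fin (k+1) → Bool | ∀ i ∈ (Finset.univ : Finset (Fin (k+1))),
        v i = true} α (fun _ => y)) := by
    refine ⟨h2, fun v hv => ?_⟩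
    have hm : v ∉ {v : Fin (k+1) → Bool | ∀ i ∈ (Finset.univ : Finset (Fin (k+1))),
        v i = true} := by
      intro hh
      exact hv (funext fun i => hh i (Finset.mem_univ i))
    simp only [faceApply]
    rw [if_neg hm]
  have := (hns.2 _ hcorner).unique hc2 hc1
  have htop := congrFun this (fun _ => true)
  have hmem : (fun _ : Fin (k+1) => true) ∈ {v : Fin (k+1) → Bool |
      ∀ i ∈ (Finset.univ : Finset (Fin (k+1))), v i = true} := fun i _ => rfl
  simp only [faceApply] at htop
  rw [if_pos hmem] at htop
  exact htop

/-- a 0-step nilspace is a subsingleton -/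
lemma ns_subsingleton (hns : IsKStepNilspace C 0) (a b : X) : a = b := by
  classical
  have hC := hns.1
  have hcorner : IsNSCorner C 0 (fun _ : Fin 1 → Bool => a) :=
    fun j => ns_C0 hC _
  have hc1 : IsNSCompletion C 0 (fun _ => a) (fun _ : Fin 1 → Bool => a) :=
    ⟨ns_C1 hC _, fun _ _ => rfl⟩
  have hc2 : IsNSCompletion C 0 (fun _ => a)
      (fun v : Fin 1 → Bool => if v = (fun _ => true) then b else a) := by
    refine ⟨ns_C1 hC _, fun v hv => ?_⟩
    show (if v = (fun _ => true) then b else a) = a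
    rw [if_neg hv]
  have := (hns.2 _ hcorner).unique hc2 hc1
  have h := congrFun this (fun _ => true)
  simpa using h.symm

end NSDev

section NSInvSec

variable {X : Type*} {C : ∀ n, ((Fin n → Bool) → X) → Prop} {k : ℕ}

/-- the basepoint vertex (1,0,...,0) -/
def nsE0 (k : ℕ) : Fin (k+1) → Bool := fun i => decide (i = 0)

/-- count of 1-coordinates away from coordinate 0 -/
def nsMw {k : ℕ} (v : Fin (k+1) → Bool) : ℕ :=
  ∑ l ∈ Finset.univ.erase (0 : Fin (k+1)), if v l = true then 1 else 0

/-- the corner data whose completion at `nsE0` defines the inverse -/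
noncomputable def nsData (α : X → X) (y : X) : (Fin (k+1) → Bool) → X :=
  fun v => if v 0 = true then α^[nsMw v - 1] y else α^[nsMw v] y

lemma nsE0_zero : nsE0 k 0 = true := by simp [nsE0]

lemma nsE0_ne {l : Fin (k+1)} (h : l ≠ 0) : nsE0 k l = false := by simp [nsE0, h]

lemma nsMw_e0 : nsMw (nsE0 k) = 0 := by
  refine Finset.sum_eq_zero fun l hl => ?_
  rw [nsE0_ne (Finset.ne_of_mem_erase hl)]
  simp

lemma nsMw_pos {v : Fin (k+1) → Bool} (h0 : v 0 = true) (hv : v ≠ nsE0 k) :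
    1 ≤ nsMw v := by
  by_contra hcon
  have h0' : nsMw v = 0 := by omega
  apply hv
  funext l
  rcases eq_or_ne l 0 with rfl | hl
  · rw [h0, nsE0_zero]
  · have := Finset.sum_eq_zero_iff.mp h0' l
      (Finset.mem_erase.mpr ⟨hl, Finset.mem_univ l⟩)
    rw [nsE0_ne hl]
    cases hvl : v l
    · rfl
    · rw [hvl] at this; simp at this

lemma ns_inv_exists (hns : IsKStepNilspace C k) (α : X → X)
    (hα1 : IsTranslation C 1 α) (y : X) :
    ∃ qt, C (k+1) qt ∧ ∀ v, v ≠ nsE0 k → qt v = nsData α y v := by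
  classical
  refine ns_completion_at hns.1 _ _ (fun j => ?_)
  rcases eq_or_ne j 0 with rfl | hj
  · -- face {v 0 = false}
    refine ⟨fun v => α^[∑ l ∈ Finset.univ.erase (0 : Fin (k+1)),
        if v l = true then 1 else 0] y, ?_, ?_⟩
    · exact ns_iter α hα1 _ _ (ns_const hns.1 _ y)
    · intro v hv
      rw [nsE0_zero] at hv
      simp only [Bool.not_true] at hv
      rw [nsData, if_neg (by rw [hv]; exact fun h => by cases h)]
      rfl
  · -- face {v j = true}, j ≠ 0
    have h0j : (0 : Fin (k+1)) ∈ Finset.univ.erase j :=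
      Finset.mem_erase.mpr ⟨Ne.symm hj, Finset.mem_univ _⟩
    have hj0 : j ∈ Finset.univ.erase (0 : Fin (k+1)) :=
      Finset.mem_erase.mpr ⟨hj, Finset.mem_univ _⟩
    refine ⟨fun v => α^[∑ l ∈ Finset.univ.erase j,
        if v l = (if l = (0 : Fin (k+1)) then false else true) then 1 else 0] y, ?_, ?_⟩
    · exact ns_iter α hα1 _ _ (ns_const hns.1 _ y)
    · intro v hvj
      rw [nsE0_ne hj] at hvj
      simp only [Bool.not_false] at hvj
      -- count bookkeeping
      have hE := (Finset.sum_erase_add (Finset.univ.erase j)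
        (fun l => if v l = (if l = (0 : Fin (k+1)) then false else true) then 1 else 0)
        h0j).symm
      have hM := (Finset.sum_erase_add (Finset.univ.erase (0 : Fin (k+1)))
        (fun l => if v l = true then 1 else 0) hj0).symm
      have hset : (Finset.univ.erase j).erase (0 : Fin (k+1))
          = (Finset.univ.erase (0 : Fin (k+1))).erase j :=
        Finset.erase_right_comm
      have hcong : ∑ l ∈ (Finset.univ.erase j).erase (0 : Fin (k+1)),
          (if v l = (if l = (0 : Fin (k+1)) then false else true) then 1 else 0)
          = ∑ l ∈ (Finset.univ.erase (0 : Fin (k+1))).erase j,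
            (if v l = true then 1 else 0) := by
        rw [hset]
        refine Finset.sum_congr rfl fun l hl => ?_
        have hl0 : l ≠ 0 := Finset.ne_of_mem_erase (Finset.mem_of_mem_erase hl)
        rw [if_neg hl0]
      have hvj1 : (if v j = true then 1 else 0) = 1 := by rw [if_pos hvj]
      simp only [nsData]
      cases hv0 : v 0
      · rw [if_neg Bool.false_ne_true]
        congr 1
        have h00 : (if v 0 = (if (0:Fin (k+1)) = (0 : Fin (k+1)) then false else true)
            then 1 else 0) = 1 := by
          rw [hv0]; simp
        rw [nsMw]
        omega
      · rw [if_pos rfl]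
        congr 1
        have h00 : (if v 0 = (if (0:Fin (k+1)) = (0 : Fin (k+1)) then false else true)
            then 1 else 0) = 0 := by
          rw [hv0]; simp
        rw [nsMw]
        omega

noncomputable def nsInvFun (hns : IsKStepNilspace C k) (α : X → X)
    (hα1 : IsTranslation C 1 α) : X → X :=
  fun y => (ns_inv_exists hns α hα1 y).choose (nsE0 k)


lemma ns_inv_right (hns : IsKStepNilspace C k) (α : X → X)
    (hα1 : IsTranslation C 1 α) (y : X) :
    α (nsInvFun hns α hα1 y) = y := by
  classical
  obtain ⟨hqtC, hqt⟩ := (ns_inv_exists hns α hα1 y).choose_spec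
  set qt := (ns_inv_exists hns α hα1 y).choose with hqtdef
  -- the comparison cube
  set K : (Fin (k+1) → Bool) → X := fun v => α^[∑ l ∈ Finset.univ.erase (0 : Fin (k+1)),
    if v l = true then 1 else 0] y with hKdef
  have hK : C (k+1) K := ns_iter α hα1 _ _ (ns_const hns.1 _ y)
  have hP : C (k+1) (faceApply {v : Fin (k+1) → Bool | v 0 = true} α qt) :=
    hα1 (k+1) (by omega) _ (face_coord (0 : Fin (k+1)) true) _ hqtC
  have hagree : ∀ v, v ≠ nsE0 k →
      faceApply {v : Fin (k+1) → Bool | v 0 = true} α qt v = K v := by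
    intro v hv
    have hqv := hqt v hv
    simp only [faceApply, hKdef]
    cases hv0 : v 0
    · rw [if_neg (by rw [Set.mem_setOf_eq, hv0]; exact Bool.false_ne_true)]
      rw [hqv]
      simp only [nsData]
      rw [if_neg (by rw [hv0]; exact Bool.false_ne_true)]
      rfl
    · rw [if_pos (by rw [Set.mem_setOf_eq, hv0] : v ∈ {v : Fin (k+1) → Bool | v 0 = true})]
      rw [hqv]
      simp only [nsData]
      rw [if_pos hv0]
      have hpos := nsMw_pos hv0 hv
      have h1 : α (α^[nsMw v - 1] y) = α^[(nsMw v - 1)+1] y :=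
        (Function.iterate_succ_apply' α _ y).symm
      rw [h1]
      congr 1
      have hunfold : nsMw v = ∑ l ∈ Finset.univ.erase (0:Fin (k+1)), if v l = true then 1 else 0 := rfl
      omega
  have := ns_unique_ext hns (k+1) le_rfl _ _ hP hK (nsE0 k) hagree
  have htop := congrFun this (nsE0 k)
  simp only [faceApply, hKdef] at htop
  rw [if_pos (by rw [Set.mem_setOf_eq, nsE0_zero] :
      nsE0 k ∈ {v : Fin (k+1) → Bool | v 0 = true})] at htop
  have hz : (∑ l ∈ Finset.univ.erase (0 : Fin (k+1)),
      if nsE0 k l = true then 1 else 0) = 0 := nsMw_e0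
  rw [hz] at htop
  exact htop

lemma ns_inv_left (hns : IsKStepNilspace C k) (α : X → X)
    (hα1 : IsTranslation C 1 α) (x0 : X) :
    nsInvFun hns α hα1 (α x0) = x0 := by
  classical
  obtain ⟨hqtC, hqt⟩ := (ns_inv_exists hns α hα1 (α x0)).choose_spec
  set qt := (ns_inv_exists hns α hα1 (α x0)).choose with hqtdef
  set D : (Fin (k+1) → Bool) → X := fun v => α^[∑ l ∈ (Finset.univ : Finset (Fin (k+1))),
    if v l = (if l = (0:Fin (k+1)) then false else true) then 1 else 0] x0 with hDdef
  have hD : C (k+1) D := ns_iter α hα1 _ _ (ns_const hns.1 _ x0)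
  have hagree : ∀ v, v ≠ nsE0 k → qt v = D v := by
    intro v hv
    rw [hqt v hv]
    have hsplit := (Finset.sum_erase_add (Finset.univ : Finset (Fin (k+1)))
      (fun l => if v l = (if l = (0:Fin (k+1)) then false else true) then 1 else 0)
      (Finset.mem_univ 0)).symm
    have hcong : ∑ l ∈ (Finset.univ : Finset (Fin (k+1))).erase 0,
        (if v l = (if l = (0:Fin (k+1)) then false else true) then 1 else 0)
        = ∑ l ∈ (Finset.univ : Finset (Fin (k+1))).erase 0,
          (if v l = true then 1 else 0) := by
      refine Finset.sum_congr rfl fun l hl => ?_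
      rw [if_neg (Finset.ne_of_mem_erase hl)]
    simp only [nsData, hDdef]
    cases hv0 : v 0
    · rw [if_neg Bool.false_ne_true]
      have h00 : (if v 0 = (if (0:Fin (k+1)) = (0 : Fin (k+1)) then false else true)
          then 1 else 0) = 1 := by rw [hv0]; simp
      have h2 : α^[nsMw v] (α x0) = α^[nsMw v + 1] x0 :=
        (Function.iterate_succ_apply α _ x0).symm
      rw [h2]
      congr 1
      have hunfold : nsMw v = ∑ l ∈ Finset.univ.erase (0:Fin (k+1)), if v l = true then 1 else 0 := rfl
      omega
    · rw [if_pos rfl]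
      have hpos := nsMw_pos hv0 hv
      have h00 : (if v 0 = (if (0:Fin (k+1)) = (0 : Fin (k+1)) then false else true)
          then 1 else 0) = 0 := by rw [hv0]; simp
      have h2 : α^[nsMw v - 1] (α x0) = α^[(nsMw v - 1) + 1] x0 :=
        (Function.iterate_succ_apply α _ x0).symm
      rw [h2]
      congr 1
      have hunfold : nsMw v = ∑ l ∈ Finset.univ.erase (0:Fin (k+1)), if v l = true then 1 else 0 := rfl
      omega
  have := ns_unique_ext hns (k+1) le_rfl _ _ hqtC hD (nsE0 k) hagree
  have htop := congrFun this (nsE0 k)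
  simp only [hDdef] at htop
  have hz : (∑ l ∈ (Finset.univ : Finset (Fin (k+1))),
      if nsE0 k l = (if l = (0:Fin (k+1)) then false else true) then 1 else 0) = 0 := by
    refine Finset.sum_eq_zero fun l _ => ?_
    rcases eq_or_ne l 0 with rfl | hl
    · rw [if_neg]
      rw [nsE0_zero]
      simp
    · rw [if_neg]
      rw [nsE0_ne hl, if_neg hl]
      exact Bool.false_ne_true
  rw [hz] at htop
  exact htop


/-- embedding `Fin m ↪ Fin (n+m)` by `natAdd` -/
theorem natAddEmb_inj (n m : ℕ) : Function.Injective (Fin.natAdd n : Fin m → Fin (n + m)) := by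
    intro a b h
    have := congrArg Fin.val h
    simp only [Fin.natAdd] at this
    exact Fin.ext (by omega)

@[reducible] def natAddEmb (n m : ℕ) : Fin m ↪ Fin (n + m) :=
  ⟨Fin.natAdd n, natAddEmb_inj n m⟩

/-- the certification cube `T_q` -/
noncomputable def nsT (hns : IsKStepNilspace C k) (α : X → X)
    (hα1 : IsTranslation C 1 α) (n : ℕ) (q : (Fin n → Bool) → X) :
    (Fin (n + (k+1)) → Bool) → X :=
  fun v => α^[∑ l ∈ (Finset.univ : Finset (Fin (k+1))).map (natAddEmb n (k+1)),
      if v l = true then 1 else 0]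
    (nsInvFun hns α hα1 (q (fun i => v (Fin.castAdd (k+1) i))))

lemma nsT_cube (hns : IsKStepNilspace C k) (α : X → X) (hα1 : IsTranslation C 1 α) :
    ∀ (n : ℕ) (q : (Fin n → Bool) → X), C n q → C (n + (k+1)) (nsT hns α hα1 n q) := by
  classical
  intro n
  induction n with
  | zero =>
    intro q hq
    have hconst : C (0 + (k+1)) (fun _ : Fin (0+(k+1)) → Bool =>
        nsInvFun hns α hα1 (q (fun i => i.elim0))) := ns_const hns.1 _ _
    have hit := ns_iter α hα1 ((Finset.univ : Finset (Fin (k+1))).map (natAddEmb 0 (k+1)))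
      (fun _ => true) hconst
    have heq : (fun v => α^[∑ l ∈ (Finset.univ : Finset (Fin (k+1))).map (natAddEmb 0 (k+1)),
        if v l = (fun _ => true) l then 1 else 0]
        ((fun _ : Fin (0+(k+1)) → Bool => nsInvFun hns α hα1 (q (fun i => i.elim0))) v))
        = nsT hns α hα1 0 q := by
      funext v
      simp only [nsT]
      congr 1
      exact congrArg (nsInvFun hns α hα1) (congrArg q (funext fun i => i.elim0))
    rwa [heq] at hit
  | succ n IH =>
    intro q hq
    -- base projected cube
    have hQbase : C ((n+1) + (k+1)) (fun v => q (fun i => v (Fin.castAdd (k+1) i))) :=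
      ns_comp hns.1 (nsRebind_isCubeMorphism
        (fun i : Fin (n+1) => Sum.inl (Fin.castAdd (k+1) i, false))) hq
    set e : Fin ((n+1)+(k+1)) → Bool :=
      Fin.addCases (fun _ => true) (fun _ => false) with hedef
    have hface : ∀ j : Fin ((n+1)+(k+1)), ∃ r', C ((n+1)+(k+1)) r' ∧
        ∀ v, v j = !(e j) → r' v = nsT hns α hα1 (n+1) q v := by
      intro j
      refine Fin.addCases (motive := fun j => ∃ r', C ((n+1)+(k+1)) r' ∧
        ∀ v, v j = !(e j) → r' v = nsT hns α hα1 (n+1) q v) ?_ ?_ j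
      · -- content direction
        intro jc
        have heval : e (Fin.castAdd (k+1) jc) = true := by
          rw [hedef]; exact Fin.addCases_left jc
        set s : Fin (n + (k+1)) → (Fin ((n+1)+(k+1)) × Bool) ⊕ Bool :=
          Fin.addCases (fun i : Fin n => Sum.inl (Fin.castAdd (k+1) (jc.succAbove i), false))
            (fun t : Fin (k+1) => Sum.inl (Fin.natAdd (n+1) t, false)) with hsdef
        have hq' : C n (fun w => q (jc.insertNth false w)) := ns_insert hns.1 jc false hq
        have hT' := IH _ hq'
        refine ⟨fun v => nsT hns α hα1 n (fun w => q (jc.insertNth false w)) (nsRebind s v),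
          ns_comp hns.1 (nsRebind_isCubeMorphism s) hT', ?_⟩
        intro v hv
        rw [heval] at hv
        simp only [Bool.not_true] at hv
        simp only [nsT]
        have hrb1 : ∀ t : Fin (k+1), nsRebind s v (Fin.natAdd n t) = v (Fin.natAdd (n+1) t) := by
          intro t
          simp only [nsRebind, hsdef, Fin.addCases_right, Bool.cond_false]
        have hrb2 : ∀ i : Fin n, nsRebind s v (Fin.castAdd (k+1) i)
            = v (Fin.castAdd (k+1) (jc.succAbove i)) := by
          intro i
          simp only [nsRebind, hsdef, Fin.addCases_left, Bool.cond_false]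
        have hexp : (∑ l ∈ (Finset.univ : Finset (Fin (k+1))).map (natAddEmb n (k+1)),
            if nsRebind s v l = true then 1 else 0)
            = ∑ l ∈ (Finset.univ : Finset (Fin (k+1))).map (natAddEmb (n+1) (k+1)),
              if v l = true then 1 else 0 := by
          rw [Finset.sum_map, Finset.sum_map]
          simp only [natAddEmb, Function.Embedding.coeFn_mk]
          refine Finset.sum_congr rfl fun t _ => ?_
          simp only [hrb1 t]
        rw [hexp]
        congr 1
        refine congrArg (nsInvFun hns α hα1) ?_
        have harg : jc.insertNth false (fun i => nsRebind s v (Fin.castAdd (k+1) i))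
            = fun i => v (Fin.castAdd (k+1) i) := by
          funext l
          rcases eq_or_ne l jc with rfl | hl
          · rw [Fin.insertNth_apply_same]
            exact hv.symm
          · obtain ⟨i, rfl⟩ := Fin.exists_succAbove_eq hl
            rw [Fin.insertNth_apply_succAbove]
            exact hrb2 i
        rw [harg]
      · -- auxiliary direction
        intro jt
        have heval : e (Fin.natAdd (n+1) jt) = false := by
          rw [hedef]; exact Fin.addCases_right jt
        refine ⟨fun v => α^[∑ l ∈ ((Finset.univ : Finset (Fin (k+1))).erase jt).map
            (natAddEmb (n+1) (k+1)), if v l = true then 1 else 0]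
            (q (fun i => v (Fin.castAdd (k+1) i))),
          ns_iter α hα1 _ _ hQbase, ?_⟩
        intro v hv
        rw [heval] at hv
        simp only [Bool.not_false] at hv
        simp only [nsT]
        rw [Finset.sum_map, Finset.sum_map]
        simp only [natAddEmb, Function.Embedding.coeFn_mk]
        have hsplit := Finset.sum_erase_add (Finset.univ : Finset (Fin (k+1)))
          (fun t => if v (Fin.natAdd (n+1) t) = true then 1 else 0)
          (Finset.mem_univ jt)
        beta_reduce at hsplit
        rw [if_pos hv] at hsplit
        rw [← hsplit, Function.iterate_succ_apply, ns_inv_right hns α hα1]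
    obtain ⟨qt, hqtC, hqt⟩ := ns_completion_at hns.1 (nsT hns α hα1 (n+1) q) e hface
    -- pin the remaining vertex
    have hel0 : e (Fin.natAdd (n+1) (0 : Fin (k+1))) = false := by
      rw [hedef]; exact Fin.addCases_right _
    have hK : C ((n+1)+(k+1)) (fun v => α^[∑ l ∈ ((Finset.univ : Finset (Fin (k+1))).erase
        (0 : Fin (k+1))).map (natAddEmb (n+1) (k+1)), if v l = true then 1 else 0]
        (q (fun i => v (Fin.castAdd (k+1) i)))) :=
      ns_iter α hα1 _ _ hQbase
    have hP : C ((n+1)+(k+1)) (faceApply {v : Fin ((n+1)+(k+1)) → Bool | v (Fin.natAdd (n+1) (0 : Fin (k+1))) = false} α qt) :=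
      hα1 _ (by omega) _ (face_coord (Fin.natAdd (n+1) (0 : Fin (k+1))) false) _ hqtC
    have hagree : ∀ v, v ≠ e →
        faceApply {v : Fin ((n+1)+(k+1)) → Bool | v (Fin.natAdd (n+1) (0 : Fin (k+1))) = false} α qt v
        = (fun v => α^[∑ l ∈ ((Finset.univ : Finset (Fin (k+1))).erase
            (0 : Fin (k+1))).map (natAddEmb (n+1) (k+1)), if v l = true then 1 else 0]
          (q (fun i => v (Fin.castAdd (k+1) i)))) v := by
      intro v hv
      have hqv := hqt v hv
      have hsplit := Finset.sum_erase_add (Finset.univ : Finset (Fin (k+1)))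
        (fun t => if v (Fin.natAdd (n+1) t) = true then 1 else 0)
        (Finset.mem_univ (0 : Fin (k+1)))
      beta_reduce at hsplit
      simp only [faceApply]
      cases hv0 : v (Fin.natAdd (n+1) (0 : Fin (k+1)))
      · rw [if_pos (by rw [Set.mem_setOf_eq, hv0] :
          v ∈ {v : Fin ((n+1)+(k+1)) → Bool | v (Fin.natAdd (n+1) (0 : Fin (k+1))) = false})]
        rw [hqv]
        simp only [nsT]
        rw [Finset.sum_map, Finset.sum_map]
        simp only [natAddEmb, Function.Embedding.coeFn_mk]
        rw [if_neg (by rw [hv0]; exact Bool.false_ne_true)] at hsplit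
        rw [Nat.add_zero] at hsplit
        rw [← hsplit]
        have hcomm : ∀ (c : ℕ) (z : X), α (α^[c] z) = α^[c] (α z) := by
          intro c z
          rw [← Function.iterate_succ_apply' α c z, Function.iterate_succ_apply α c z]
        rw [hcomm, ns_inv_right hns α hα1]
      · rw [if_neg (by rw [Set.mem_setOf_eq, hv0]; simp :
          v ∉ {v : Fin ((n+1)+(k+1)) → Bool | v (Fin.natAdd (n+1) (0 : Fin (k+1))) = false})]
        rw [hqv]
        simp only [nsT]
        rw [Finset.sum_map, Finset.sum_map]
        simp only [natAddEmb, Function.Embedding.coeFn_mk]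
        rw [if_pos hv0] at hsplit
        rw [← hsplit, Function.iterate_succ_apply, ns_inv_right hns α hα1]
    have hPK := ns_unique_ext hns ((n+1)+(k+1)) (by omega) _ _ hP hK e hagree
    have htop := congrFun hPK e
    simp only [faceApply] at htop
    rw [if_pos (by rw [Set.mem_setOf_eq, hel0] :
        e ∈ {v : Fin ((n+1)+(k+1)) → Bool | v (Fin.natAdd (n+1) (0 : Fin (k+1))) = false})] at htop
    have hez : (∑ l ∈ ((Finset.univ : Finset (Fin (k+1))).erase
        (0 : Fin (k+1))).map (natAddEmb (n+1) (k+1)), if e l = true then 1 else 0) = 0 := by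
      rw [Finset.sum_map]
      simp only [natAddEmb, Function.Embedding.coeFn_mk]
      refine Finset.sum_eq_zero fun t _ => ?_
      rw [if_neg]
      simp only [hedef]
      rw [Fin.addCases_right]
      exact Bool.false_ne_true
    rw [hez] at htop
    simp only [Function.iterate_zero, id_eq] at htop
    -- hence qt e = nsT (n+1) q e
    have hqte : qt e = nsT hns α hα1 (n+1) q e := by
      have h1 : qt e = nsInvFun hns α hα1 (α (qt e)) :=
        (ns_inv_left hns α hα1 (qt e)).symm
      rw [h1, htop]
      simp only [nsT]
      have hfull : (∑ l ∈ (Finset.univ : Finset (Fin (k+1))).map (natAddEmb (n+1) (k+1)),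
          if e l = true then 1 else 0) = 0 := by
        rw [Finset.sum_map]
        simp only [natAddEmb, Function.Embedding.coeFn_mk]
        refine Finset.sum_eq_zero fun t _ => ?_
        rw [if_neg]
        simp only [hedef]
        rw [Fin.addCases_right]
        exact Bool.false_ne_true
      rw [hfull]
      simp only [Function.iterate_zero, id_eq]
    have hfinal : qt = nsT hns α hα1 (n+1) q := by
      funext v
      by_cases hv : v = e
      · rw [hv, hqte]
      · exact hqt v hv
    rwa [hfinal] at hqtC

lemma ns_inv_cubemap (hns : IsKStepNilspace C k) (α : X → X)
    (hα1 : IsTranslation C 1 α) {n : ℕ} {q : (Fin n → Bool) → X} (hq : C n q) :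
    C n (fun w => nsInvFun hns α hα1 (q w)) := by
  classical
  set s0 : Fin (n + (k+1)) → (Fin n × Bool) ⊕ Bool :=
    Fin.addCases (fun i : Fin n => Sum.inl (i, false)) (fun _ => Sum.inr false) with hs0
  have h := ns_comp hns.1 (nsRebind_isCubeMorphism s0) (nsT_cube hns α hα1 n q hq)
  have heq : (fun w => nsT hns α hα1 n q (nsRebind s0 w))
      = fun w => nsInvFun hns α hα1 (q w) := by
    funext w
    simp only [nsT]
    have hz : (∑ l ∈ (Finset.univ : Finset (Fin (k+1))).map (natAddEmb n (k+1)),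
        if nsRebind s0 w l = true then 1 else 0) = 0 := by
      rw [Finset.sum_map]
      simp only [natAddEmb, Function.Embedding.coeFn_mk]
      refine Finset.sum_eq_zero fun t _ => ?_
      rw [if_neg]
      simp only [nsRebind, hs0, Fin.addCases_right]
      exact Bool.false_ne_true
    rw [hz]
    simp only [Function.iterate_zero, id_eq]
    refine congrArg (nsInvFun hns α hα1) (congrArg q (funext fun i => ?_))
    simp only [nsRebind, hs0, Fin.addCases_left, Bool.cond_false]
  rwa [heq] at h


lemma ns_inv_trans (hns : IsKStepNilspace C k) (α : X → X)
    (hα1 : IsTranslation C 1 α) :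
    ∀ (m : ℕ), 1 ≤ m → IsTranslation C m α →
      IsTranslation C m (nsInvFun hns α hα1) := by
  classical
  intro m hm
  induction m, hm using Nat.le_induction with
  | base =>
    intro hα1'
    rintro n hn F ⟨I, x, hI, rfl⟩ q hq
    obtain ⟨j0, rfl⟩ := Finset.card_eq_one.mp hI
    have hinner : C n (faceApply {v : Fin n → Bool | v j0 = !(x j0)} α q) :=
      hα1 n hn _ (face_coord j0 (!(x j0))) q hq
    have hres := ns_inv_cubemap hns α hα1 hinner
    have heq : (fun w => nsInvFun hns α hα1
        ((faceApply {v : Fin n → Bool | v j0 = !(x j0)} α q) w))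
        = faceApply {v : Fin n → Bool | ∀ i ∈ ({j0} : Finset (Fin n)), v i = x i}
            (nsInvFun hns α hα1) q := by
      funext v
      simp only [faceApply]
      by_cases h : v j0 = x j0
      · have hm1 : v ∉ {v : Fin n → Bool | v j0 = !(x j0)} := by
          rw [Set.mem_setOf_eq, h]
          cases x j0 <;> simp
        have hm2 : v ∈ {v : Fin n → Bool | ∀ i ∈ ({j0} : Finset (Fin n)), v i = x i} := by
          rw [Set.mem_setOf_eq]
          intro i hi
          rw [Finset.mem_singleton] at hi
          rw [hi]
          exact h
        rw [if_neg hm1, if_pos hm2]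
      · have h' : v j0 = !(x j0) := by
          cases hx : x j0 <;> cases hv : v j0 <;> simp_all
        have hm1 : v ∈ {v : Fin n → Bool | v j0 = !(x j0)} := h'
        have hm2 : v ∉ {v : Fin n → Bool | ∀ i ∈ ({j0} : Finset (Fin n)), v i = x i} := by
          intro hh
          exact h (hh j0 (Finset.mem_singleton_self j0))
        rw [if_pos hm1, if_neg hm2]
        exact ns_inv_left hns α hα1 (q v)
    rwa [heq] at hres
  | succ m hm IH =>
    intro hαm1
    rintro n hn F ⟨I, x, hI, rfl⟩ q hq
    have hαm : IsTranslation C m α := trans_mono_step hns.1 hαm1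
    obtain ⟨j0, hj0⟩ := Finset.card_pos.mp (show 0 < I.card by omega)
    have hI1 : (I.erase j0).card = m := by
      rw [Finset.card_erase_of_mem hj0, hI]
      omega
    have hinner := IH hαm n (by omega) _ ⟨I.erase j0, x, hI1, rfl⟩ q hq
    have houter := hαm1 n hn _
      ⟨I, Function.update x j0 (!(x j0)), hI, rfl⟩ _ hinner
    have heq : faceApply {v : Fin n → Bool | ∀ i ∈ I,
          v i = Function.update x j0 (!(x j0)) i} α
        (faceApply {v : Fin n → Bool | ∀ i ∈ I.erase j0, v i = x i}
          (nsInvFun hns α hα1) q)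
        = faceApply {v : Fin n → Bool | ∀ i ∈ I, v i = x i}
            (nsInvFun hns α hα1) q := by
      funext v
      simp only [faceApply]
      by_cases h1 : ∀ i ∈ I.erase j0, v i = x i
      · have hmm1 : v ∈ {v : Fin n → Bool | ∀ i ∈ I.erase j0, v i = x i} := h1
        by_cases h2 : v j0 = x j0
        · have hF : v ∈ {v : Fin n → Bool | ∀ i ∈ I, v i = x i} := by
            intro i hi
            rcases eq_or_ne i j0 with rfl | hij
            · exact h2
            · exact h1 i (Finset.mem_erase.mpr ⟨hij, hi⟩)
          have hF2 : v ∉ {v : Fin n → Bool | ∀ i ∈ I,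
              v i = Function.update x j0 (!(x j0)) i} := by
            intro hh
            have := hh j0 hj0
            rw [Function.update_self] at this
            rw [h2] at this
            simp at this
          rw [if_pos hmm1, if_neg hF2, if_pos hF]
        · have h2' : v j0 = !(x j0) := by
            cases hx : x j0 <;> cases hv : v j0 <;> simp_all
          have hF : v ∉ {v : Fin n → Bool | ∀ i ∈ I, v i = x i} := by
            intro hh
            exact h2 (hh j0 hj0)
          have hF2 : v ∈ {v : Fin n → Bool | ∀ i ∈ I,
              v i = Function.update x j0 (!(x j0)) i} := by
            intro i hi
            rcases eq_or_ne i j0 with rfl | hij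
            · rw [Function.update_self]; exact h2'
            · rw [Function.update_of_ne hij]
              exact h1 i (Finset.mem_erase.mpr ⟨hij, hi⟩)
          rw [if_pos hmm1, if_pos hF2, if_neg hF]
          exact ns_inv_right hns α hα1 (q v)
      · have hF : v ∉ {v : Fin n → Bool | ∀ i ∈ I, v i = x i} := by
          intro hh
          exact h1 fun i hi => hh i (Finset.mem_of_mem_erase hi)
        have hF2 : v ∉ {v : Fin n → Bool | ∀ i ∈ I,
            v i = Function.update x j0 (!(x j0)) i} := by
          intro hh
          apply h1
          intro i hi
          have hij : i ≠ j0 := Finset.ne_of_mem_erase hi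
          have := hh i (Finset.mem_of_mem_erase hi)
          rwa [Function.update_of_ne hij] at this
        have hmm1 : v ∉ {v : Fin n → Bool | ∀ i ∈ I.erase j0, v i = x i} := h1
        rw [if_neg hmm1, if_neg hF2, if_neg hF]
    rwa [heq] at houter

end NSInvSec


theorem stmt17 {X : Type*} (C : ∀ n, ((Fin n → Bool) → X) → Prop) (k : ℕ)
    (hns : IsKStepNilspace C k) :
    IsTranslation C 1 (id : X → X) ∧
    (∀ (i : ℕ) (α β : X → X), IsTranslation C (max 1 i) α →
        IsTranslation C (max 1 i) β → IsTranslation C (max 1 i) (α ∘ β)) ∧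
    (∀ (i : ℕ) (α : X → X), IsTranslation C (max 1 i) α →
        ∃ β : X → X, IsTranslation C (max 1 i) β ∧ α ∘ β = id ∧ β ∘ α = id) ∧
    (∀ i j : ℕ, i ≤ j → ∀ α : X → X,
        IsTranslation C (max 1 j) α → IsTranslation C (max 1 i) α) ∧
    (∀ (i j : ℕ) (α β α' β' : X → X), IsTranslation C (max 1 i) α →
        IsTranslation C (max 1 j) β →
        α ∘ α' = id → α' ∘ α = id → β ∘ β' = id → β' ∘ β = id →
        IsTranslation C (max 1 (i + j)) (α' ∘ β' ∘ α ∘ β)) ∧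
    (∀ α : X → X, IsTranslation C (k + 1) α → α = id) := by
  classical
  refine ⟨trans_id 1, ?_, ?_, ?_, ?_, ?_⟩
  · intro i a b ha hb
    exact trans_comp ha hb
  · intro i a ha
    have ha1 : IsTranslation C 1 a := trans_mono hns.1 (le_max_left 1 i) ha
    exact ⟨nsInvFun hns a ha1, ns_inv_trans hns a ha1 (max 1 i) (le_max_left 1 i) ha,
      funext fun y => ns_inv_right hns a ha1 y,
      funext fun y => ns_inv_left hns a ha1 y⟩
  · intro i j hij a ha
    exact trans_mono hns.1 (max_le_max le_rfl hij) ha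
  · intro i j a b a' b' hai hbj haa' ha'a hbb' hb'b
    have ha1 : IsTranslation C 1 a := trans_mono hns.1 (le_max_left 1 i) hai
    have hb1 : IsTranslation C 1 b := trans_mono hns.1 (le_max_left 1 j) hbj
    have ha' : a' = nsInvFun hns a ha1 := by
      funext y
      have h1 : a (nsInvFun hns a ha1 y) = y := ns_inv_right hns a ha1 y
      calc a' y = a' (a (nsInvFun hns a ha1 y)) := by rw [h1]
        _ = nsInvFun hns a ha1 y := by simpa using congrFun ha'a (nsInvFun hns a ha1 y)
    have hb' : b' = nsInvFun hns b hb1 := by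
      funext y
      have h1 : b (nsInvFun hns b hb1 y) = y := ns_inv_right hns b hb1 y
      calc b' y = b' (b (nsInvFun hns b hb1 y)) := by rw [h1]
        _ = nsInvFun hns b hb1 y := by simpa using congrFun hb'b (nsInvFun hns b hb1 y)
    have ha'T : IsTranslation C (max 1 i) a' := by
      rw [ha']; exact ns_inv_trans hns a ha1 (max 1 i) (le_max_left 1 i) hai
    have hb'T : IsTranslation C (max 1 j) b' := by
      rw [hb']; exact ns_inv_trans hns b hb1 (max 1 j) (le_max_left 1 j) hbj
    rintro n hn F ⟨I, x, hI, rfl⟩ q hq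
    have hle1 : max 1 i ≤ max 1 (i+j) := max_le_max le_rfl (Nat.le_add_right i j)
    have hle2 : max 1 j ≤ max 1 (i+j) := max_le_max le_rfl (Nat.le_add_left j i)
    have hle3 : max 1 (i+j) ≤ max 1 i + max 1 j := by omega
    obtain ⟨I1, hI1sub, hI1card⟩ := Finset.exists_subset_card_eq
      (show max 1 i ≤ I.card by rw [hI]; exact hle1)
    obtain ⟨I2, hI2sub1, hI2sub2, hI2card⟩ := Finset.exists_subsuperset_card_eq
      (Finset.sdiff_subset : I \ I1 ⊆ I)
      (show (I \ I1).card ≤ max 1 j by rw [Finset.card_sdiff_of_subset hI1sub, hI, hI1card]; omega)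
      (show max 1 j ≤ I.card by rw [hI]; exact hle2)
    have hunion : I1 ∪ I2 = I := by
      apply Finset.Subset.antisymm
      · exact Finset.union_subset hI1sub hI2sub2
      · intro i0 hi0
        by_cases h : i0 ∈ I1
        · exact Finset.mem_union_left _ h
        · exact Finset.mem_union_right _ (hI2sub1 (Finset.mem_sdiff.mpr ⟨hi0, h⟩))
    have h1 := hbj n (le_trans hle2 hn) _ ⟨I2, x, hI2card, rfl⟩ q hq
    have h2 := hai n (le_trans hle1 hn) _ ⟨I1, x, hI1card, rfl⟩ _ h1
    have h3 := hb'T n (le_trans hle2 hn) _ ⟨I2, x, hI2card, rfl⟩ _ h2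
    have h4 := ha'T n (le_trans hle1 hn) _ ⟨I1, x, hI1card, rfl⟩ _ h3
    have heq : faceApply {v : Fin n → Bool | ∀ i ∈ I, v i = x i} (a' ∘ b' ∘ a ∘ b) q
        = faceApply {v : Fin n → Bool | ∀ i ∈ I1, v i = x i} a'
          (faceApply {v : Fin n → Bool | ∀ i ∈ I2, v i = x i} b'
            (faceApply {v : Fin n → Bool | ∀ i ∈ I1, v i = x i} a
              (faceApply {v : Fin n → Bool | ∀ i ∈ I2, v i = x i} b q))) := by
      funext v
      have hFiff : (v ∈ {v : Fin n → Bool | ∀ i ∈ I, v i = x i}) ↔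
          (v ∈ {v : Fin n → Bool | ∀ i ∈ I1, v i = x i} ∧
           v ∈ {v : Fin n → Bool | ∀ i ∈ I2, v i = x i}) := by
        simp only [Set.mem_setOf_eq]
        constructor
        · intro h
          exact ⟨fun i0 hi0 => h i0 (hI1sub hi0), fun i0 hi0 => h i0 (hI2sub2 hi0)⟩
        · rintro ⟨hA, hB⟩ i0 hi0
          rw [← hunion] at hi0
          rcases Finset.mem_union.mp hi0 with h | h
          · exact hA i0 h
          · exact hB i0 h
      simp only [faceApply, Function.comp_apply]
      by_cases m1 : v ∈ {v : Fin n → Bool | ∀ i ∈ I1, v i = x i} <;>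
        by_cases m2 : v ∈ {v : Fin n → Bool | ∀ i ∈ I2, v i = x i}
      · rw [if_pos (hFiff.mpr ⟨m1, m2⟩), if_pos m2, if_pos m1, if_pos m2, if_pos m1]
      · rw [if_neg (fun hh => m2 (hFiff.mp hh).2), if_neg m2, if_pos m1, if_neg m2,
          if_pos m1]
        simpa using (congrFun ha'a (q v)).symm
      · rw [if_neg (fun hh => m1 (hFiff.mp hh).1), if_pos m2, if_neg m1, if_pos m2,
          if_neg m1]
        simpa using (congrFun hb'b (q v)).symm
      · rw [if_neg (fun hh => m1 (hFiff.mp hh).1), if_neg m2, if_neg m1, if_neg m2,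
          if_neg m1]
    rw [heq]
    exact h4
  · intro a ha
    exact trans_succ_trivial hns ha
end

section
/- Let X be a nilspace, A an abelian group, and ρ: C^k(X) → A a cocycle of degree k−1. Then the map ∂ρ: C^{k+1}(X) → A defined by ∂ρ(q) = ρ(q(·,0)) − ρ(q(·,1)) is a cocycle of degree k. -/
open Finset

/-- Concatenation of two adjacent `(n+1)`-cubes. -/
def concatCube {X : Type*} {n : ℕ} (q1 q2 : (Fin (n + 1) → Bool) → X) :
    (Fin (n + 1) → Bool) → X :=
  fun v => if v (Fin.last n) then q2 v else q1 v

/-- A cocycle of degree `k` on a nilspace: a function on `(k+1)`-cubes which is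
alternating under cube automorphisms and additive on concatenations. -/
def IsCocycle {X A : Type*} [AddCommGroup A] (C : ∀ n, ((Fin n → Bool) → X) → Prop)
    (k : ℕ) (ρ : ((Fin (k + 1) → Bool) → X) → A) : Prop :=
  (∀ q, C (k + 1) q → ∀ θ : (Fin (k + 1) → Bool) → (Fin (k + 1) → Bool),
      IsCubeMorphism θ → Function.Bijective θ →
      ρ (q ∘ θ) = ((-1 : ℤ) ^ weight (θ fun _ => false)) • ρ q) ∧
  (∀ q1 q2, C (k + 1) q1 → C (k + 1) q2 →
      (∀ v : Fin k → Bool, q1 (Fin.snoc v true) = q2 (Fin.snoc v false)) →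
      ρ (concatCube q1 q2) = ρ q1 + ρ q2)

-- helpers
def bint (b : Bool) : ℤ := if b then 1 else 0

lemma cubeEmb_apply {n : ℕ} (v : Fin n → Bool) (i : Fin n) : cubeEmb v i = bint (v i) := rfl

lemma bint_inj {a b : Bool} (h : bint a = bint b) : a = b := by
  revert h; revert a b; decide

/-- xor-precompose maps are cube morphisms. -/
lemma isCubeMorphism_xor {m n : ℕ} (σ : Fin n → Fin m) (ε : Fin n → Bool) :
    IsCubeMorphism (fun v : Fin m → Bool => fun j => xor (v (σ j)) (ε j)) := by
  refine ⟨{ toFun := fun x j => if ε j then -x (σ j) else x (σ j),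
            map_zero' := by funext j; simp
            map_add' := by intro x y; funext j; by_cases h : ε j <;> simp [h] <;> ring },
          fun j => bint (ε j), ?_⟩
  intro v
  funext j
  have : ∀ a e : Bool, bint (xor a e) = (if e then -(bint a) else bint a) + bint e := by decide
  simpa [cubeEmb_apply, bint] using this (v (σ j)) (ε j)

/-- plain precompose maps are cube morphisms. -/
lemma isCubeMorphism_comp {m n : ℕ} (σ : Fin n → Fin m) :
    IsCubeMorphism (fun v : Fin m → Bool => fun j => v (σ j)) := by
  have h := isCubeMorphism_xor σ (fun _ => false)
  simpa using h

lemma bijective_xor {n : ℕ} (σ : Fin n → Fin n) (hσ : Function.Bijective σ) (ε : Fin n → Bool) :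
    Function.Bijective (fun v : Fin n → Bool => fun j => xor (v (σ j)) (ε j)) := by
  let e := Equiv.ofBijective σ hσ
  rw [Function.bijective_iff_has_inverse]
  refine ⟨fun w i => xor (w (e.symm i)) (ε (e.symm i)), ?_, ?_⟩
  · intro v; funext i
    have h1 : σ (e.symm i) = i := e.apply_symm_apply i
    simp [h1, Bool.xor_assoc]
  · intro w; funext j
    have h1 : e.symm (σ j) = j := e.symm_apply_apply j
    simp [h1, Bool.xor_assoc]

/-- insertNth with a constant is a cube morphism. -/
lemma isCubeMorphism_insertNth {n : ℕ} (i₀ : Fin (n + 1)) (c : Bool) :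
    IsCubeMorphism (fun u : Fin n → Bool => i₀.insertNth c u) := by
  refine ⟨{ toFun := fun x => i₀.insertNth 0 x,
            map_zero' := by funext i; refine Fin.succAboveCases i₀ ?_ ?_ i <;> simp
            map_add' := by
              intro x y; funext i
              refine Fin.succAboveCases i₀ ?_ ?_ i <;> simp },
          fun i => if i = i₀ then bint c else 0, ?_⟩
  intro u
  funext i
  refine Fin.succAboveCases i₀ ?_ ?_ i
  · simp [cubeEmb_apply, bint]
  · intro j
    simp [cubeEmb_apply, Fin.succAbove_ne i₀ j]

lemma isCubeMorphism_snoc {n : ℕ} (c : Bool) :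
    IsCubeMorphism (fun u : Fin n → Bool => (Fin.snoc u c : Fin (n+1) → Bool)) := by
  refine ⟨{ toFun := fun x => Fin.snoc x 0,
            map_zero' := by funext i; refine Fin.lastCases ?_ ?_ i <;> simp
            map_add' := by intro x y; funext i; refine Fin.lastCases ?_ ?_ i <;> simp },
          fun i => if i = Fin.last n then bint c else 0, ?_⟩
  intro u
  funext i
  refine Fin.lastCases ?_ ?_ i
  · simp [cubeEmb_apply, bint]
  · intro j
    simp [cubeEmb_apply, (Fin.castSucc_lt_last j).ne]

lemma insertNth_last_eq_snoc {n : ℕ} (c : Bool) (u : Fin n → Bool) :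
    (Fin.last n).insertNth c u = (Fin.snoc u c : Fin (n+1) → Bool) := by
  funext i
  induction i using Fin.lastCases with
  | last => simp
  | cast j =>
    have h : (Fin.last n).succAbove j = j.castSucc := by rw [Fin.succAbove_last]
    rw [← h, Fin.insertNth_apply_succAbove, h, Fin.snoc_castSucc]

lemma weight_false {n : ℕ} : weight (fun _ : Fin n => false) = 0 := by simp [weight]

lemma weight_succAbove {n : ℕ} (ε : Fin (n + 1) → Bool) (i₀ : Fin (n + 1)) :
    weight ε = (if ε i₀ then 1 else 0) + weight (fun j => ε (i₀.succAbove j)) := by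
  simp only [weight, Finset.card_filter]
  rw [Fin.sum_univ_succAbove (fun i => if ε i = true then 1 else 0) i₀]

section Classify

variable {n : ℕ}

/-- Indicator vector. -/
def indic (j₀ : Fin n) : Fin n → Bool := fun l => decide (l = j₀)

lemma cubeEmb_eq_sum (v : Fin n → Bool) :
    cubeEmb v = ∑ j ∈ Finset.univ.filter (fun j => v j = true), Pi.single j (1 : ℤ) := by
  funext i
  rw [Finset.sum_apply]
  simp only [Pi.single_apply]
  rw [Finset.sum_ite_eq (Finset.univ.filter (fun j => v j = true)) i (fun _ => (1:ℤ))]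
  by_cases h : v i <;> simp [h, cubeEmb_apply, bint]

lemma cube_auto_classify {θ : (Fin n → Bool) → (Fin n → Bool)}
    (hm : IsCubeMorphism θ) (hb : Function.Bijective θ) :
    ∃ π : Fin n → Fin n, Function.Bijective π ∧
      ∀ v i, θ v i = xor (v (π i)) (θ (fun _ => false) i) := by
  obtain ⟨M, t, hMt⟩ := hm
  set ε := θ (fun _ => false) with hε
  have h0 : cubeEmb (fun _ : Fin n => false) = 0 := by funext i; simp [cubeEmb]
  have ht : t = cubeEmb ε := by
    have h := hMt (fun _ => false)
    rw [h0, map_zero, zero_add] at h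
    exact h.symm
  set A : Fin n → Fin n → ℤ := fun i j => M (Pi.single j (1:ℤ)) i with hA
  have key : ∀ v i, bint (θ v i) =
      (∑ j ∈ Finset.univ.filter (fun j => v j = true), A i j) + bint (ε i) := by
    intro v i
    have h := congrFun (hMt v) i
    rw [ht, cubeEmb_eq_sum v, map_sum] at h
    rw [cubeEmb_apply] at h
    rw [h, Pi.add_apply, Finset.sum_apply, cubeEmb_apply]
  have hfilter : ∀ j₀ : Fin n, Finset.univ.filter (fun j => indic j₀ j = true) = {j₀} := by
    intro j₀; ext j; simp [indic]
  have hA1 : ∀ i j, bint (θ (indic j) i) = A i j + bint (ε i) := by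
    intro i j
    rw [key (indic j) i, hfilter j, Finset.sum_singleton]
  -- uniqueness of nonzero column
  have huniq : ∀ i j₁ j₂, j₁ ≠ j₂ → A i j₁ ≠ 0 → A i j₂ ≠ 0 → False := by
    intro i j₁ j₂ hne h1 h2
    set v : Fin n → Bool := fun l => (decide (l = j₁) || decide (l = j₂)) with hv
    have hf : Finset.univ.filter (fun j => v j = true) = {j₁, j₂} := by
      ext j; simp [hv]
    have hpair : bint (θ v i) = A i j₁ + A i j₂ + bint (ε i) := by
      rw [key v i, hf, Finset.sum_pair hne]
    have e1 : A i j₁ = bint (θ (indic j₁) i) - bint (ε i) := by rw [hA1 i j₁]; ring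
    have e2 : A i j₂ = bint (θ (indic j₂) i) - bint (ε i) := by rw [hA1 i j₂]; ring
    have hb1 : θ (indic j₁) i ≠ ε i := fun h => h1 (by rw [e1, h]; ring)
    have hb2 : θ (indic j₂) i ≠ ε i := fun h => h2 (by rw [e2, h]; ring)
    rw [e1, e2] at hpair
    revert hpair
    have : ∀ b12 b1 b2 e : Bool, b1 ≠ e → b2 ≠ e →
        bint b12 = bint b1 - bint e + (bint b2 - bint e) + bint e → False := by decide
    exact this _ _ _ _ hb1 hb2
  -- existence of nonzero column
  have hex : ∀ i, ∃ j, A i j ≠ 0 := by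
    intro i
    by_contra h
    push_neg at h
    have hconst : ∀ v, θ v i = ε i := by
      intro v
      apply bint_inj
      rw [key v i, Finset.sum_congr rfl (fun j _ => h j), Finset.sum_const_zero, zero_add]
    obtain ⟨v, hv⟩ := hb.2 (Function.update ε i (!(ε i)))
    have h1 : θ v i = !(ε i) := by rw [hv]; simp
    rw [hconst v] at h1
    exact Bool.not_ne_self (ε i) h1.symm
  choose π hπ using hex
  have hAzero : ∀ i j, j ≠ π i → A i j = 0 := by
    intro i j hj
    by_contra h
    exact huniq i j (π i) hj h (hπ i)
  have hform : ∀ v i, θ v i = xor (v (π i)) (ε i) := by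
    intro v i
    apply bint_inj
    rw [key v i]
    have hsum : (∑ j ∈ Finset.univ.filter (fun j => v j = true), A i j)
        = if v (π i) = true then A i (π i) else 0 := by
      by_cases h : v (π i) = true
      · rw [if_pos h]
        exact Finset.sum_eq_single_of_mem (π i) (by simp [h]) (fun j _ hj => hAzero i j hj)
      · rw [if_neg h]
        apply Finset.sum_eq_zero
        intro j hj
        apply hAzero
        intro hcontra
        rw [hcontra] at hj
        exact h (by simpa using hj)
    rw [hsum]
    have hval : A i (π i) = bint (θ (indic (π i)) i) - bint (ε i) := by rw [hA1]; ring
    have hne : θ (indic (π i)) i ≠ ε i := by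
      intro h; exact hπ i (by rw [hval, h]; ring)
    have hnot : θ (indic (π i)) i = !(ε i) := Bool.eq_not_iff.mpr hne
    rw [hval, hnot]
    cases h2 : ε i <;> cases h3 : v (π i) <;> decide
  refine ⟨π, ?_, hform⟩
  rw [← Finite.injective_iff_bijective]
  intro i₁ i₂ h12
  by_contra hne
  obtain ⟨v, hv⟩ := hb.2 (Function.update ε i₁ (!(ε i₁)))
  have h1 : θ v i₁ = !(ε i₁) := by rw [hv]; simp
  have h2 : θ v i₂ = ε i₂ := by rw [hv]; rw [Function.update_of_ne (Ne.symm hne)]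
  rw [hform v i₁, h12] at h1
  rw [hform v i₂] at h2
  revert h1 h2
  cases hvp : v (π i₂) <;> cases he1 : ε i₁ <;> cases he2 : ε i₂ <;> simp

end Classify

section Rot

/-- The rotation permutation of `Fin (n+1)` sending `p` to `last` and
`p.succAbove j` to `castSucc j`. -/
noncomputable def rotEndEquiv {n : ℕ} (p : Fin (n + 1)) : Equiv.Perm (Fin (n + 1)) :=
  (Equiv.ofBijective (Fin.lastCases p (fun j => p.succAbove j) : Fin (n+1) → Fin (n+1))
    (by
      rw [← Finite.injective_iff_bijective]
      intro x y hxy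
      induction x using Fin.lastCases with
      | last =>
        induction y using Fin.lastCases with
        | last => rfl
        | cast j =>
          simp only [Fin.lastCases_last, Fin.lastCases_castSucc] at hxy
          exact absurd hxy.symm (Fin.succAbove_ne p j)
      | cast i =>
        induction y using Fin.lastCases with
        | last =>
          simp only [Fin.lastCases_last, Fin.lastCases_castSucc] at hxy
          exact absurd hxy (Fin.succAbove_ne p i)
        | cast j =>
          simp only [Fin.lastCases_castSucc] at hxy
          rw [Fin.succAbove_right_inj] at hxy
          rw [hxy])).symm

noncomputable def rotEnd {n : ℕ} (p : Fin (n + 1)) : Fin (n + 1) → Fin (n + 1) :=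
  rotEndEquiv p

lemma rotEnd_self {n : ℕ} (p : Fin (n + 1)) : rotEnd p p = Fin.last n := by
  simp only [rotEnd, rotEndEquiv]
  rw [Equiv.symm_apply_eq]
  show p = Fin.lastCases p (fun j => p.succAbove j) (Fin.last n)
  rw [Fin.lastCases_last]

lemma rotEnd_succAbove {n : ℕ} (p : Fin (n + 1)) (j : Fin n) :
    rotEnd p (p.succAbove j) = j.castSucc := by
  simp only [rotEnd, rotEndEquiv]
  rw [Equiv.symm_apply_eq]
  show p.succAbove j = Fin.lastCases p (fun j => p.succAbove j) j.castSucc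
  rw [Fin.lastCases_castSucc]

lemma rotEnd_bijective {n : ℕ} (p : Fin (n + 1)) : Function.Bijective (rotEnd p) :=
  (rotEndEquiv p).bijective

end Rot

section Master

variable {k : ℕ}

lemma succAbove_castSucc_last (i₀' : Fin (k + 1)) :
    (i₀'.castSucc).succAbove (Fin.last k) = Fin.last (k + 1) := by
  rw [Fin.succAbove_of_le_castSucc]
  · exact Fin.succ_last k
  · exact Fin.castSucc_le_castSucc_iff.mpr (Fin.le_last i₀')

/-- Master coordinate computation. -/
lemma master (i₀' : Fin (k + 1)) (v : Fin k → Bool) (b c : Bool) :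
    (Fin.snoc ((Fin.snoc v b : Fin (k+1) → Bool) ∘ (rotEnd i₀')) c : Fin (k+2) → Bool)
      = (i₀'.castSucc).insertNth b (Fin.snoc v c : Fin (k+1) → Bool) := by
  funext i
  refine Fin.succAboveCases i₀'.castSucc ?_ ?_ i
  · rw [Fin.insertNth_apply_same, Fin.snoc_castSucc]
    show (Fin.snoc v b : Fin (k+1) → Bool) (rotEnd i₀' i₀') = b
    rw [rotEnd_self, Fin.snoc_last]
  · intro j
    rw [Fin.insertNth_apply_succAbove]
    induction j using Fin.lastCases with
    | last =>
      rw [succAbove_castSucc_last, Fin.snoc_last, Fin.snoc_last]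
    | cast j' =>
      rw [Fin.castSucc_succAbove_castSucc, Fin.snoc_castSucc, Fin.snoc_castSucc]
      show (Fin.snoc v b : Fin (k+1) → Bool) (rotEnd i₀' (i₀'.succAbove j')) = _
      rw [rotEnd_succAbove, Fin.snoc_castSucc]

end Master

section Key

variable {X : Type*} {A : Type*} [AddCommGroup A] {C : ∀ n, ((Fin n → Bool) → X) → Prop}

lemma bijective_precomp {n : ℕ} (e : Fin n → Fin n) (he : Function.Bijective e) :
    Function.Bijective (fun u : Fin n → Bool => u ∘ e) := by
  have h := bijective_xor e he (fun _ => false)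
  simpa [Function.comp_def] using h

lemma rho_precomp {k : ℕ} {ρ : ((Fin (k + 1) → Bool) → X) → A}
    (hρ : IsCocycle C k ρ) (r : (Fin (k + 1) → Bool) → X) (hr : C (k + 1) r)
    (e : Fin (k + 1) → Fin (k + 1)) (he : Function.Bijective e) :
    ρ (fun u => r (u ∘ e)) = ρ r := by
  have h := hρ.1 r hr (fun u => u ∘ e) (isCubeMorphism_comp e) (bijective_precomp e he)
  have h0 : (fun _ : Fin (k+1) => false) ∘ e = (fun _ => false) := rfl
  rw [h0, weight_false, pow_zero, one_smul] at h
  exact h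

lemma key_coord_indep (hns : IsNilspace C) {k : ℕ} {ρ : ((Fin (k + 1) → Bool) → X) → A}
    (hρ : IsCocycle C k ρ) (q : (Fin (k + 2) → Bool) → X) (hq : C (k + 2) q)
    (i₀ : Fin (k + 2)) :
    ρ (fun u => q (i₀.insertNth false u)) - ρ (fun u => q (i₀.insertNth true u)) =
      ρ (fun u => q (Fin.snoc u false)) - ρ (fun u => q (Fin.snoc u true)) := by
  by_cases hlast : i₀ = Fin.last (k + 1)
  · subst hlast
    rw [show (fun u => q ((Fin.last (k+1)).insertNth false u)) = fun u => q (Fin.snoc u false)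
        from funext fun u => by rw [insertNth_last_eq_snoc],
      show (fun u => q ((Fin.last (k+1)).insertNth true u)) = fun u => q (Fin.snoc u true)
        from funext fun u => by rw [insertNth_last_eq_snoc]]
  · obtain ⟨i₀', rfl⟩ : ∃ i', i₀ = i'.castSucc :=
      ⟨i₀.castPred hlast, (Fin.castSucc_castPred i₀ hlast).symm⟩
    set e := rotEnd i₀' with he_def
    set Af : (Fin (k+1) → Bool) → X := fun u => q (Fin.snoc u false) with hAf_def
    set At : (Fin (k+1) → Bool) → X := fun u => q (Fin.snoc u true) with hAt_def
    set Bf : (Fin (k+1) → Bool) → X := fun u => q (i₀'.castSucc.insertNth false u) with hBf_def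
    set Bt : (Fin (k+1) → Bool) → X := fun u => q (i₀'.castSucc.insertNth true u) with hBt_def
    have hAf : C (k+1) Af := hns.1 _ _ _ (isCubeMorphism_snoc false) q hq
    have hAt : C (k+1) At := hns.1 _ _ _ (isCubeMorphism_snoc true) q hq
    have hBf : C (k+1) Bf := hns.1 _ _ _ (isCubeMorphism_insertNth i₀'.castSucc false) q hq
    have hBt : C (k+1) Bt := hns.1 _ _ _ (isCubeMorphism_insertNth i₀'.castSucc true) q hq
    set q1 : (Fin (k+1) → Bool) → X := fun u => Af (u ∘ e) with hq1_def
    set q2' : (Fin (k+1) → Bool) → X := fun u => At (u ∘ e) with hq2'_def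
    have hq1 : C (k+1) q1 :=
      hns.1 _ _ _ (isCubeMorphism_comp e) Af hAf
    have hq2' : C (k+1) q2' :=
      hns.1 _ _ _ (isCubeMorphism_comp e) At hAt
    have hadj1 : ∀ v : Fin k → Bool, q1 (Fin.snoc v true) = Bt (Fin.snoc v false) := by
      intro v
      show q (Fin.snoc ((Fin.snoc v true : Fin (k+1) → Bool) ∘ e) false)
        = q (i₀'.castSucc.insertNth true (Fin.snoc v false))
      exact congrArg q (master i₀' v true false)
    have hadj2 : ∀ v : Fin k → Bool, Bf (Fin.snoc v true) = q2' (Fin.snoc v false) := by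
      intro v
      show q (i₀'.castSucc.insertNth false (Fin.snoc v true))
        = q (Fin.snoc ((Fin.snoc v false : Fin (k+1) → Bool) ∘ e) true)
      exact congrArg q (master i₀' v false true).symm
    have h1 := hρ.2 q1 Bt hq1 hBt hadj1
    have h2 := hρ.2 Bf q2' hBf hq2' hadj2
    have hconcat : concatCube q1 Bt = concatCube Bf q2' := by
      funext u
      have hu : (Fin.snoc (Fin.init u) (u (Fin.last k)) : Fin (k+1) → Bool) = u :=
        Fin.snoc_init_self u
      show (if u (Fin.last k) then Bt u else q1 u) = (if u (Fin.last k) then q2' u else Bf u)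
      cases hd : u (Fin.last k) with
      | false =>
        rw [if_neg (by decide), if_neg (by decide)]
        rw [← hu, hd]
        show q (Fin.snoc ((Fin.snoc (Fin.init u) false : Fin (k+1) → Bool) ∘ e) false)
          = q (i₀'.castSucc.insertNth false (Fin.snoc (Fin.init u) false))
        exact congrArg q (master i₀' (Fin.init u) false false)
      | true =>
        rw [if_pos rfl, if_pos rfl]
        rw [← hu, hd]
        show q (i₀'.castSucc.insertNth true (Fin.snoc (Fin.init u) true))
          = q (Fin.snoc ((Fin.snoc (Fin.init u) true : Fin (k+1) → Bool) ∘ e) true)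
        exact congrArg q (master i₀' (Fin.init u) true true).symm
    have hρq1 : ρ q1 = ρ Af := rho_precomp hρ Af hAf e (rotEnd_bijective i₀')
    have hρq2' : ρ q2' = ρ At := rho_precomp hρ At hAt e (rotEnd_bijective i₀')
    have h5 : ρ Af + ρ Bt = ρ Bf + ρ At := by
      rw [← hρq1, ← hρq2', ← h1, ← h2, hconcat]
    rw [sub_eq_sub_iff_add_eq_add]
    exact h5.symm

end Key

theorem stmt18 {X A : Type*} [AddCommGroup A] (C : ∀ n, ((Fin n → Bool) → X) → Prop)
    (hns : IsNilspace C) (k : ℕ) (ρ : ((Fin (k + 1) → Bool) → X) → A)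
    (hρ : IsCocycle C k ρ) :
    IsCocycle C (k + 1)
      (fun q : (Fin (k + 2) → Bool) → X =>
        ρ (fun v => q (Fin.snoc v false)) - ρ (fun v => q (Fin.snoc v true))) := by
  constructor
  · intro q hq θ hθm hθb
    obtain ⟨π, hπ, hform⟩ := cube_auto_classify hθm hθb
    show ρ (fun v => (q ∘ θ) (Fin.snoc v false)) - ρ (fun v => (q ∘ θ) (Fin.snoc v true))
      = ((-1:ℤ) ^ weight (θ fun _ => false)) •
        (ρ (fun v => q (Fin.snoc v false)) - ρ (fun v => q (Fin.snoc v true)))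
    set ε : Fin (k + 2) → Bool := θ (fun _ => false) with hε
    obtain ⟨i₀, hπi₀⟩ := hπ.2 (Fin.last (k + 1))
    have hne : ∀ j : Fin (k + 1), π (i₀.succAbove j) ≠ Fin.last (k + 1) := by
      intro j h
      exact Fin.succAbove_ne i₀ j (hπ.1 (h.trans hπi₀.symm))
    set π' : Fin (k + 1) → Fin (k + 1) := fun j => (π (i₀.succAbove j)).castPred (hne j)
      with hπ'def
    have hπ'c : ∀ j, (π' j).castSucc = π (i₀.succAbove j) :=
      fun j => Fin.castSucc_castPred _ _
    have hπ'inj : Function.Injective π' := by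
      intro j1 j2 h
      have h2 : π (i₀.succAbove j1) = π (i₀.succAbove j2) := by
        rw [← hπ'c, ← hπ'c, h]
      exact Fin.succAbove_right_injective (hπ.1 h2)
    have hπ'b : Function.Bijective π' := Finite.injective_iff_bijective.mp hπ'inj
    set ψ : (Fin (k + 1) → Bool) → (Fin (k + 1) → Bool) :=
      fun v j => xor (v (π' j)) (ε (i₀.succAbove j)) with hψdef
    have hψm : IsCubeMorphism ψ := isCubeMorphism_xor π' (fun j => ε (i₀.succAbove j))
    have hψb : Function.Bijective ψ := bijective_xor π' hπ'b (fun j => ε (i₀.succAbove j))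
    have hfact : ∀ (v : Fin (k + 1) → Bool) (b : Bool),
        θ (Fin.snoc v b) = i₀.insertNth (xor b (ε i₀)) (ψ v) := by
      intro v b
      funext i
      refine Fin.succAboveCases i₀ ?_ ?_ i
      · rw [Fin.insertNth_apply_same, hform, hπi₀, Fin.snoc_last]
      · intro j
        rw [Fin.insertNth_apply_succAbove, hform, ← hπ'c j, Fin.snoc_castSucc]
    have hQ : ∀ c : Bool, C (k + 1) (fun u => q (i₀.insertNth c u)) :=
      fun c => hns.1 _ _ _ (isCubeMorphism_insertNth i₀ c) q hq
    have hcomp : ∀ b : Bool, (fun v => (q ∘ θ) (Fin.snoc v b)) =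
        (fun u => q (i₀.insertNth (xor b (ε i₀)) u)) ∘ ψ := by
      intro b
      funext v
      show q (θ (Fin.snoc v b)) = q (i₀.insertNth (xor b (ε i₀)) (ψ v))
      rw [hfact]
    have hρψ : ∀ c : Bool, ρ ((fun u => q (i₀.insertNth c u)) ∘ ψ) =
        ((-1 : ℤ) ^ weight (fun j => ε (i₀.succAbove j))) • ρ (fun u => q (i₀.insertNth c u)) := by
      intro c
      have h := hρ.1 _ (hQ c) ψ hψm hψb
      have h0 : ψ (fun _ => false) = fun j => ε (i₀.succAbove j) := by
        funext j
        show xor false (ε (i₀.succAbove j)) = ε (i₀.succAbove j)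
        rw [Bool.false_xor]
      rw [h0] at h
      exact h
    have hkey := key_coord_indep hns hρ q hq i₀
    have hw := weight_succAbove ε i₀
    rw [hcomp false, hcomp true]
    cases hc : ε i₀ with
    | false =>
      rw [hc] at hw
      norm_num at hw
      simp only [hc, Bool.xor_false]
      rw [hρψ false, hρψ true, hw, ← smul_sub, hkey]
    | true =>
      rw [hc] at hw
      norm_num at hw
      simp only [hc, Bool.xor_true, Bool.not_false, Bool.not_true]
      rw [hρψ false, hρψ true, hw, ← smul_sub]
      have hpow : ((-1 : ℤ)) ^ (1 + weight (fun j => ε (i₀.succAbove j)))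
          = -((-1 : ℤ) ^ weight (fun j => ε (i₀.succAbove j))) := by
        rw [add_comm, pow_succ]
        ring
      rw [hpow, neg_smul, ← smul_neg, neg_sub]
      have hkey2 := congrArg (fun x => -x) hkey
      simp only [neg_sub] at hkey2
      rw [hkey2]
  · intro q1 q2 hq1 hq2 hadj
    show ρ (fun v => concatCube q1 q2 (Fin.snoc v false))
        - ρ (fun v => concatCube q1 q2 (Fin.snoc v true))
      = (ρ (fun v => q1 (Fin.snoc v false)) - ρ (fun v => q1 (Fin.snoc v true)))
        + (ρ (fun v => q2 (Fin.snoc v false)) - ρ (fun v => q2 (Fin.snoc v true)))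
    have h1 : (fun v : Fin (k+1) → Bool => concatCube q1 q2 (Fin.snoc v false))
        = fun v => q1 (Fin.snoc v false) := by
      funext v
      show (if (Fin.snoc v false : Fin (k+2) → Bool) (Fin.last (k+1)) then _ else _) = _
      rw [Fin.snoc_last, if_neg (by decide)]
    have h2 : (fun v : Fin (k+1) → Bool => concatCube q1 q2 (Fin.snoc v true))
        = fun v => q2 (Fin.snoc v true) := by
      funext v
      show (if (Fin.snoc v true : Fin (k+2) → Bool) (Fin.last (k+1)) then _ else _) = _
      rw [Fin.snoc_last, if_pos rfl]
    have h3 : (fun v : Fin (k+1) → Bool => q1 (Fin.snoc v true))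
        = fun v => q2 (Fin.snoc v false) := funext hadj
    rw [h1, h2, h3]
    abel
end

section
/- Let A be an abelian group, k, i, n natural numbers, and q_0, q_1: {0,1}^n → A. The i-arrow ⟨q_0, q_1⟩_i (equal to q_0(v) at (v,w) when w ≠ 1^i and q_1(v) when w = 1^i) belongs to C^{n+i}(D_k(A)) if and only if q_0 ∈ C^n(D_k(A)) and q_1 − q_0 ∈ C^n(D_{k−i}(A)). -/
open Finset

/-- A (pre)filtration on a group: a decreasing chain of subgroups with
`[G_i, G_j] ⊆ G_{i+j}`. -/
def IsGrpPreFiltration {G : Type*} [Group G] (Gf : ℕ → Subgroup G) : Prop :=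
  (∀ i, Gf (i + 1) ≤ Gf i) ∧
  (∀ i j : ℕ, ∀ x ∈ Gf i, ∀ y ∈ Gf j, x⁻¹ * y⁻¹ * x * y ∈ Gf (i + j))

/-- The cube set `C^n(D_{d-1}(A))` of the degree-`(d-1)` structure on the abelian
group `A`: maps whose alternating sum over every `d`-face vanishes.  (Thus `d = k+1`
gives the degree-`k` structure, and `d = 0` gives the trivial degree-`(-1)`
structure.) -/
def dkCube (A : Type*) [AddCommGroup A] (d n : ℕ) (q : (Fin n → Bool) → A) : Prop :=
  ∀ φ : (Fin d → Bool) → (Fin n → Bool), IsFaceMap φ →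
    ∑ v : Fin d → Bool, ((-1 : ℤ) ^ weight v) • q (φ v) = 0


section Dev

variable {A : Type*} [AddCommGroup A]

def faceSum {n : ℕ} (q : (Fin n → Bool) → A) (J : Finset (Fin n)) (x : Fin n → Bool) : A :=
  ∑ v : Fin n → Bool, if (∀ i, i ∉ J → v i = x i)
    then ((-1 : ℤ) ^ (J.filter (fun i => v i = true)).card) • q v else 0

lemma faceSum_empty {n : ℕ} (q : (Fin n → Bool) → A) (x : Fin n → Bool) :
    faceSum q ∅ x = q x := by
  unfold faceSum
  have : ∀ v : Fin n → Bool,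
      (if (∀ i, i ∉ (∅ : Finset (Fin n)) → v i = x i)
        then ((-1 : ℤ) ^ ((∅ : Finset (Fin n)).filter (fun i => v i = true)).card) • q v else 0)
      = if v = x then q v else 0 := by
    intro v
    simp [funext_iff]
  rw [Finset.sum_congr rfl (fun v _ => this v)]
  simp

lemma faceSum_insert {n : ℕ} (q : (Fin n → Bool) → A) {J : Finset (Fin n)} {a : Fin n}
    (ha : a ∉ J) (x : Fin n → Bool) :
    faceSum q (insert a J) x =
      faceSum q J (Function.update x a false) - faceSum q J (Function.update x a true) := by
  unfold faceSum
  rw [← Finset.sum_sub_distrib]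
  apply Finset.sum_congr rfl
  intro v _
  by_cases hva : v a = true
  · have hPf : ¬ (∀ i, i ∉ J → v i = Function.update x a false i) := by
      intro h
      have := h a ha
      rw [Function.update_self] at this
      rw [this] at hva
      exact Bool.false_ne_true hva
    have hPiff : (∀ i, i ∉ insert a J → v i = x i) ↔
        (∀ i, i ∉ J → v i = Function.update x a true i) := by
      constructor
      · intro h i hi
        by_cases hia : i = a
        · subst hia; rw [Function.update_self, hva]
        · rw [Function.update_of_ne hia]
          exact h i (by simp [Finset.mem_insert, hia, hi])
      · intro h i hi
        rw [Finset.mem_insert] at hi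
        push_neg at hi
        have := h i hi.2
        rwa [Function.update_of_ne hi.1] at this
    have hfilter : ((insert a J).filter (fun i => v i = true)).card =
        (J.filter (fun i => v i = true)).card + 1 := by
      rw [Finset.filter_insert, if_pos hva,
        Finset.card_insert_of_notMem (fun hmem => ha (Finset.mem_of_mem_filter a hmem))]
    rw [if_neg hPf, hfilter, zero_sub]
    by_cases hP : ∀ i, i ∉ J → v i = Function.update x a true i
    · rw [if_pos (hPiff.mpr hP), if_pos hP, pow_succ, mul_neg_one, neg_smul]
    · rw [if_neg (fun h => hP (hPiff.mp h)), if_neg hP, neg_zero]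
  · have hva' : v a = false := by simpa using hva
    have hPt : ¬ (∀ i, i ∉ J → v i = Function.update x a true i) := by
      intro h
      have := h a ha
      rw [Function.update_self] at this
      rw [this] at hva
      exact hva rfl
    have hPiff : (∀ i, i ∉ insert a J → v i = x i) ↔
        (∀ i, i ∉ J → v i = Function.update x a false i) := by
      constructor
      · intro h i hi
        by_cases hia : i = a
        · subst hia; rw [Function.update_self, hva']
        · rw [Function.update_of_ne hia]
          exact h i (by simp [Finset.mem_insert, hia, hi])
      · intro h i hi
        rw [Finset.mem_insert] at hi
        push_neg at hi
        have := h i hi.2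
        rwa [Function.update_of_ne hi.1] at this
    have hfilter : ((insert a J).filter (fun i => v i = true)).card =
        (J.filter (fun i => v i = true)).card := by
      rw [Finset.filter_insert, if_neg hva]
    rw [if_neg hPt, hfilter, sub_zero]
    by_cases hP : ∀ i, i ∉ J → v i = Function.update x a false i
    · rw [if_pos (hPiff.mpr hP), if_pos hP]
    · rw [if_neg (fun h => hP (hPiff.mp h)), if_neg hP]

lemma faceSum_mono {n d : ℕ} {q : (Fin n → Bool) → A}
    (H : ∀ (J : Finset (Fin n)) (x : Fin n → Bool), J.card = d → faceSum q J x = 0) :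
    ∀ (J : Finset (Fin n)) (x : Fin n → Bool), d ≤ J.card → faceSum q J x = 0 := by
  intro J
  induction J using Finset.strongInduction with
  | _ J ih =>
    intro x hle
    rcases eq_or_lt_of_le hle with h | h
    · exact H J x h.symm
    · have hne : J.Nonempty := Finset.card_pos.mp (by omega)
      obtain ⟨a, haJ⟩ := hne
      have ha' : a ∉ J.erase a := Finset.notMem_erase a J
      have hcard : (J.erase a).card = J.card - 1 := Finset.card_erase_of_mem haJ
      have hsub : J.erase a ⊂ J := Finset.erase_ssubset haJ
      rw [← Finset.insert_erase haJ, faceSum_insert q ha',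
        ih _ hsub _ (by omega), ih _ hsub _ (by omega), sub_zero]

lemma faceSum_const {n : ℕ} (c : A) :
    ∀ (J : Finset (Fin n)), J.Nonempty → ∀ x, faceSum (fun _ => c) J x = 0 := by
  intro J
  induction J using Finset.strongInduction with
  | _ J ih =>
    intro hJ x
    obtain ⟨a, haJ⟩ := hJ
    have ha' : a ∉ J.erase a := Finset.notMem_erase a J
    have hsub : J.erase a ⊂ J := Finset.erase_ssubset haJ
    rw [← Finset.insert_erase haJ, faceSum_insert _ ha']
    by_cases he : (J.erase a).Nonempty
    · rw [ih _ hsub he, ih _ hsub he, sub_self]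
    · rw [Finset.not_nonempty_iff_eq_empty.mp he, faceSum_empty, faceSum_empty, sub_self]

lemma faceSum_sub {n : ℕ} (q1 q0 : (Fin n → Bool) → A) (J : Finset (Fin n)) (x : Fin n → Bool) :
    faceSum (fun v => q1 v - q0 v) J x = faceSum q1 J x - faceSum q0 J x := by
  unfold faceSum
  rw [← Finset.sum_sub_distrib]
  apply Finset.sum_congr rfl
  intro v _
  split_ifs with h
  · rw [smul_sub]
  · rw [sub_zero]

lemma faceSum_congr {n : ℕ} {q q' : (Fin n → Bool) → A} (J : Finset (Fin n)) (x : Fin n → Bool)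
    (h : ∀ v, (∀ i, i ∉ J → v i = x i) → q v = q' v) : faceSum q J x = faceSum q' J x := by
  unfold faceSum
  apply Finset.sum_congr rfl
  intro v _
  split_ifs with hc
  · rw [h v hc]
  · rfl

def stdFace {n d : ℕ} (J : Finset (Fin n)) (hJ : J.card = d) (x : Fin n → Bool) :
    (Fin d → Bool) → (Fin n → Bool) :=
  fun v idx => if h : idx ∈ J then v ((J.orderIsoOfFin hJ).symm ⟨idx, h⟩) else x idx

lemma stdFace_apply_mem {n d : ℕ} {J : Finset (Fin n)} {hJ : J.card = d} {x : Fin n → Bool}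
    {v : Fin d → Bool} {idx : Fin n} (h : idx ∈ J) :
    stdFace J hJ x v idx = v ((J.orderIsoOfFin hJ).symm ⟨idx, h⟩) := dif_pos h

lemma stdFace_apply_not_mem {n d : ℕ} {J : Finset (Fin n)} {hJ : J.card = d} {x : Fin n → Bool}
    {v : Fin d → Bool} {idx : Fin n} (h : idx ∉ J) :
    stdFace J hJ x v idx = x idx := dif_neg h

lemma stdFace_apply_eta {n d : ℕ} {J : Finset (Fin n)} {hJ : J.card = d} {x : Fin n → Bool}
    {v : Fin d → Bool} (j : Fin d) :
    stdFace J hJ x v ((J.orderIsoOfFin hJ j : {y // y ∈ J}) : Fin n) = v j := by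
  have h : ((J.orderIsoOfFin hJ j : {y // y ∈ J}) : Fin n) ∈ J := (J.orderIsoOfFin hJ j).2
  rw [stdFace_apply_mem h]
  congr 1
  rw [show (⟨((J.orderIsoOfFin hJ j : {y // y ∈ J}) : Fin n), h⟩ : {y // y ∈ J})
      = J.orderIsoOfFin hJ j from Subtype.ext rfl]
  exact OrderIso.symm_apply_apply _ _

lemma stdFace_weight {n d : ℕ} (J : Finset (Fin n)) (hJ : J.card = d) (x : Fin n → Bool)
    (v : Fin d → Bool) :
    (J.filter (fun idx => stdFace J hJ x v idx = true)).card = weight v := by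
  unfold weight
  apply Finset.card_bij
    (fun idx h => (J.orderIsoOfFin hJ).symm ⟨idx, (Finset.mem_filter.mp h).1⟩)
  · intro idx h
    obtain ⟨h1, h2⟩ := Finset.mem_filter.mp h
    rw [stdFace_apply_mem h1] at h2
    simp only [Finset.mem_filter, Finset.mem_univ, true_and]
    exact h2
  · intro i1 h1 i2 h2 heq
    have := (J.orderIsoOfFin hJ).symm.injective heq
    exact congrArg Subtype.val this
  · intro j hj
    have hjv : v j = true := (Finset.mem_filter.mp hj).2
    have hmem : ((J.orderIsoOfFin hJ j : {y // y ∈ J}) : Fin n) ∈ J := (J.orderIsoOfFin hJ j).2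
    have hval : stdFace J hJ x v ((J.orderIsoOfFin hJ j : {y // y ∈ J}) : Fin n) = true := by
      rw [stdFace_apply_eta]; exact hjv
    refine ⟨_, Finset.mem_filter.mpr ⟨hmem, hval⟩, ?_⟩
    rw [show (⟨((J.orderIsoOfFin hJ j : {y // y ∈ J}) : Fin n), _⟩ : {y // y ∈ J})
        = J.orderIsoOfFin hJ j from Subtype.ext rfl]
    exact OrderIso.symm_apply_apply _ _

lemma sum_stdFace {n d : ℕ} (J : Finset (Fin n)) (hJ : J.card = d) (x : Fin n → Bool)
    (q : (Fin n → Bool) → A) :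
    ∑ v : Fin d → Bool, ((-1 : ℤ) ^ weight v) • q (stdFace J hJ x v) = faceSum q J x := by
  unfold faceSum
  rw [← Finset.sum_filter]
  apply Finset.sum_nbij' (i := stdFace J hJ x) (j := fun w j => w ((J.orderIsoOfFin hJ j : {y // y ∈ J}) : Fin n))
  · intro v _
    refine Finset.mem_filter.mpr ⟨Finset.mem_univ _, ?_⟩
    intro idx hidx
    exact stdFace_apply_not_mem hidx
  · intro w _
    exact Finset.mem_univ _
  · intro v _
    funext j
    exact stdFace_apply_eta j
  · intro w hw
    have hcond := (Finset.mem_filter.mp hw).2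
    funext idx
    by_cases h : idx ∈ J
    · rw [stdFace_apply_mem h]
      congr 1
      exact congrArg Subtype.val (OrderIso.apply_symm_apply (J.orderIsoOfFin hJ) ⟨idx, h⟩)
    · rw [stdFace_apply_not_mem h]
      exact (hcond idx h).symm
  · intro v _
    rw [stdFace_weight]

def stdHom {n d : ℕ} (J : Finset (Fin n)) (hJ : J.card = d) : (Fin d → ℤ) →+ (Fin n → ℤ) where
  toFun u := fun idx => if h : idx ∈ J then u ((J.orderIsoOfFin hJ).symm ⟨idx, h⟩) else 0
  map_zero' := by funext idx; by_cases h : idx ∈ J <;> simp [h]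
  map_add' u u' := by funext idx; by_cases h : idx ∈ J <;> simp [h]

lemma stdFace_isFaceMap {n d : ℕ} (J : Finset (Fin n)) (hJ : J.card = d) (x : Fin n → Bool) :
    IsFaceMap (stdFace J hJ x) := by
  classical
  refine ⟨?_, ?_, ?_⟩
  · refine ⟨stdHom J hJ, fun idx => if idx ∈ J then 0 else (if x idx then 1 else 0), ?_⟩
    intro v
    funext idx
    by_cases h : idx ∈ J
    · simp only [cubeEmb, stdFace, stdHom, AddMonoidHom.coe_mk, ZeroHom.coe_mk, Pi.add_apply,
        dif_pos h, if_pos h, add_zero]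
    · simp only [cubeEmb, stdFace, stdHom, AddMonoidHom.coe_mk, ZeroHom.coe_mk, Pi.add_apply,
        dif_neg h, if_neg h, zero_add]
  · intro v v' h
    funext j
    have := congrFun h ((J.orderIsoOfFin hJ j : {y // y ∈ J}) : Fin n)
    rwa [stdFace_apply_eta, stdFace_apply_eta] at this
  · refine ⟨Jᶜ, x, ?_, ?_⟩
    · rw [Finset.card_compl, hJ, Fintype.card_fin]
    · ext w
      constructor
      · rintro ⟨v, rfl⟩ idx hidx
        exact stdFace_apply_not_mem (Finset.mem_compl.mp hidx)
      · intro hw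
        refine ⟨fun j => w ((J.orderIsoOfFin hJ j : {y // y ∈ J}) : Fin n), ?_⟩
        funext idx
        by_cases h : idx ∈ J
        · rw [stdFace_apply_mem h]
          congr 1
          exact congrArg Subtype.val (OrderIso.apply_symm_apply (J.orderIsoOfFin hJ) ⟨idx, h⟩)
        · rw [stdFace_apply_not_mem h]
          exact (hw idx (Finset.mem_compl.mpr h)).symm

def glue {n i : ℕ} (vf : Fin n → Bool) (va : Fin i → Bool) : Fin (n + i) → Bool :=
  Fin.addCases vf va

@[simp] lemma glue_cast {n i : ℕ} (vf : Fin n → Bool) (va : Fin i → Bool) (j : Fin n) :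
    glue vf va (Fin.castAdd i j) = vf j := Fin.addCases_left _

@[simp] lemma glue_nat {n i : ℕ} (vf : Fin n → Bool) (va : Fin i → Bool) (a : Fin i) :
    glue vf va (Fin.natAdd n a) = va a := Fin.addCases_right _

def glueEquiv {n i : ℕ} : ((Fin n → Bool) × (Fin i → Bool)) ≃ (Fin (n + i) → Bool) where
  toFun p := glue p.1 p.2
  invFun v := (fun j => v (Fin.castAdd i j), fun a => v (Fin.natAdd n a))
  left_inv p := by ext j <;> simp
  right_inv v := by
    funext idx
    exact Fin.addCases (fun j => by simp) (fun a => by simp) idx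

lemma card_split {n i : ℕ} (P : Fin (n + i) → Prop) [DecidablePred P] :
    (Finset.univ.filter P).card =
      (Finset.univ.filter (fun j : Fin n => P (Fin.castAdd i j))).card +
      (Finset.univ.filter (fun a : Fin i => P (Fin.natAdd n a))).card := by
  classical
  rw [Finset.card_filter, Finset.card_filter, Finset.card_filter,
    ← Fintype.sum_equiv finSumFinEquiv (fun s => if P (finSumFinEquiv s) then 1 else 0)
      (fun idx => if P idx then 1 else 0) (fun s => rfl),
    Fintype.sum_sum_type]
  simp
  rw [Finset.card_filter, Finset.card_filter]
  congr 1 <;> exact Finset.sum_congr rfl (fun _ _ => by split_ifs <;> rfl)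

lemma forall_split {n i : ℕ} (P : Fin (n + i) → Prop) :
    (∀ idx, P idx) ↔ (∀ j : Fin n, P (Fin.castAdd i j)) ∧ (∀ a : Fin i, P (Fin.natAdd n a)) := by
  constructor
  · exact fun h => ⟨fun j => h _, fun a => h _⟩
  · rintro ⟨h1, h2⟩ idx
    exact Fin.addCases h1 h2 idx

lemma faceSum_split {n i : ℕ} (Q : (Fin (n + i) → Bool) → A) (J : Finset (Fin (n + i)))
    (x : Fin (n + i) → Bool) :
    faceSum Q J x = ∑ va : Fin i → Bool,
      if (∀ a, a ∉ (Finset.univ.filter (fun a : Fin i => Fin.natAdd n a ∈ J)) →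
          va a = x (Fin.natAdd n a))
      then ((-1 : ℤ) ^ ((Finset.univ.filter (fun a : Fin i => Fin.natAdd n a ∈ J)).filter
            (fun a => va a = true)).card) •
        faceSum (fun vf => Q (glue vf va))
          (Finset.univ.filter (fun j : Fin n => Fin.castAdd i j ∈ J))
          (fun j => x (Fin.castAdd i j))
      else 0 := by
  classical
  set Ja := Finset.univ.filter (fun a : Fin i => Fin.natAdd n a ∈ J) with hJa
  set Jf := Finset.univ.filter (fun j : Fin n => Fin.castAdd i j ∈ J) with hJf
  unfold faceSum
  rw [← Equiv.sum_comp (glueEquiv (n := n) (i := i)), Fintype.sum_prod_type_right]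
  apply Finset.sum_congr rfl
  intro va _
  have hcond : ∀ vf : Fin n → Bool,
      (∀ idx, idx ∉ J → glueEquiv (vf, va) idx = x idx) ↔
      ((∀ j, j ∉ Jf → vf j = x (Fin.castAdd i j)) ∧
       (∀ a, a ∉ Ja → va a = x (Fin.natAdd n a))) := by
    intro vf
    rw [forall_split (fun idx => idx ∉ J → glueEquiv (vf, va) idx = x idx)]
    simp only [hJa, hJf, Finset.mem_filter, Finset.mem_univ, true_and, glueEquiv,
      Equiv.coe_fn_mk, glue_cast, glue_nat]
  have hcard : ∀ vf : Fin n → Bool,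
      (J.filter (fun idx => glueEquiv (vf, va) idx = true)).card =
      (Jf.filter (fun j => vf j = true)).card + (Ja.filter (fun a => va a = true)).card := by
    intro vf
    have h1 : J.filter (fun idx => glueEquiv (vf, va) idx = true) =
        Finset.univ.filter (fun idx => idx ∈ J ∧ glueEquiv (vf, va) idx = true) := by
      ext idx
      simp
    rw [h1, card_split (fun idx => idx ∈ J ∧ glueEquiv (vf, va) idx = true)]
    congr 1
    · apply congrArg Finset.card
      rw [hJf, Finset.filter_filter]
      apply Finset.filter_congr
      intro j _
      simp [glueEquiv]
    · apply congrArg Finset.card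
      rw [hJa, Finset.filter_filter]
      apply Finset.filter_congr
      intro a _
      simp [glueEquiv]
  by_cases hA : ∀ a, a ∉ Ja → va a = x (Fin.natAdd n a)
  · rw [if_pos hA, Finset.smul_sum]
    apply Finset.sum_congr rfl
    intro vf _
    simp only [hcond vf, hcard vf]
    by_cases hF : ∀ j, j ∉ Jf → vf j = x (Fin.castAdd i j)
    · rw [if_pos ⟨hF, hA⟩, if_pos hF, pow_add, mul_comm, mul_smul]
      rfl
    · rw [if_neg (fun h => hF h.1), if_neg hF, smul_zero]
  · rw [if_neg hA]
    apply Finset.sum_eq_zero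
    intro vf _
    simp only [hcond vf]
    exact if_neg (fun h => hA h.2)

lemma bool_xor_cancel_left (a b : Bool) : Bool.xor a (Bool.xor a b) = b := by
  cases a <;> cases b <;> rfl

lemma neg_one_pow_filter {d : ℕ} (p : Fin d → Bool) :
    ((-1 : ℤ)) ^ (Finset.univ.filter (fun j => p j = true)).card =
      ∏ j : Fin d, (if p j then (-1 : ℤ) else 1) := by
  rw [← Finset.prod_const, Finset.prod_filter]

lemma neg_one_pow_xor {d : ℕ} (e v : Fin d → Bool) :
    ((-1 : ℤ)) ^ (Finset.univ.filter (fun j => Bool.xor (e j) (v j) = true)).card =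
      ((-1 : ℤ)) ^ (Finset.univ.filter (fun j => e j = true)).card *
      ((-1 : ℤ)) ^ (Finset.univ.filter (fun j => v j = true)).card := by
  rw [neg_one_pow_filter, neg_one_pow_filter, neg_one_pow_filter, ← Finset.prod_mul_distrib]
  apply Finset.prod_congr rfl
  intro j _
  cases hje : e j <;> cases hjv : v j <;> norm_num

lemma facemap_rows {n d : ℕ} {φ : (Fin d → Bool) → (Fin n → Bool)}
    (M : (Fin d → ℤ) →+ (Fin n → ℤ)) (t : Fin n → ℤ)
    (hM : ∀ v : Fin d → Bool, cubeEmb (φ v) = M (cubeEmb v) + t)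
    (idx : Fin n) (vT vF : Fin d → Bool) (hT : φ vT idx = true) (hF : φ vF idx = false) :
    ∃ (j₀ : Fin d) (ε : Bool), ∀ v, φ v idx = Bool.xor ε (v j₀) := by
  classical
  set a : Fin d → ℤ := fun j => M (Pi.single j 1) idx with ha
  have hdecomp : ∀ v : Fin d → Bool, cubeEmb v = ∑ j, if v j then Pi.single j (1 : ℤ) else 0 := by
    intro v
    funext j'
    rw [Finset.sum_apply]
    have : ∀ j, (if v j then Pi.single j (1 : ℤ) else (0 : Fin d → ℤ)) j'
        = if j' = j then (if v j' then (1 : ℤ) else 0) else 0 := by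
      intro j
      by_cases hjj : j' = j
      · subst hjj; by_cases hv : v j' <;> simp [hv]
      · by_cases hv : v j <;> simp [hv, Pi.single_apply, Ne.symm hjj, hjj]
    rw [Finset.sum_congr rfl (fun j _ => this j), Finset.sum_ite_eq]
    simp [cubeEmb]
  have key : ∀ v : Fin d → Bool,
      (if φ v idx then (1 : ℤ) else 0) = (∑ j, if v j then a j else 0) + t idx := by
    intro v
    have h1 := congrFun (hM v) idx
    have h2 : M (cubeEmb v) idx = ∑ j, if v j then a j else 0 := by
      rw [hdecomp v, map_sum, Finset.sum_apply]
      apply Finset.sum_congr rfl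
      intro j _
      by_cases hv : v j <;> simp [hv, ha]
    simpa [cubeEmb, h2] using h1
  have mem01 : ∀ v : Fin d → Bool,
      ((∑ j, if v j then a j else 0) + t idx = 0) ∨ ((∑ j, if v j then a j else 0) + t idx = 1) := by
    intro v
    rw [← key v]
    cases hb : φ v idx <;> simp
  have hbot := mem01 (fun _ => false)
  simp only [if_neg Bool.false_ne_true, Bool.false_eq_true, if_false, Finset.sum_const_zero,
    zero_add] at hbot
  -- sums over single and pair indicator vectors
  have hsingle : ∀ j : Fin d,
      (∑ j', if (decide (j' = j) : Bool) then a j' else 0) = a j := by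
    intro j
    have : ∀ j', (if (decide (j' = j) : Bool) then a j' else 0) = if j' = j then a j' else 0 := by
      intro j'; by_cases h : j' = j <;> simp [h]
    rw [Finset.sum_congr rfl (fun j' _ => this j'), Finset.sum_ite_eq']
    simp
  have hpair : ∀ j j' : Fin d, j ≠ j' →
      (∑ j'', if ((decide (j'' = j) || decide (j'' = j')) : Bool) then a j'' else 0)
        = a j + a j' := by
    intro j j' hne
    have : ∀ j'', (if ((decide (j'' = j) || decide (j'' = j')) : Bool) then a j'' else 0)
        = (if j'' = j then a j'' else 0) + (if j'' = j' then a j'' else 0) := by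
      intro j''
      by_cases h1 : j'' = j <;> by_cases h2 : j'' = j'
      · exact absurd (h1 ▸ h2) hne
      · simp [h1, h2, hne, Ne.symm hne]
      · simp [h1, h2, hne, Ne.symm hne]
      · simp [h1, h2, hne, Ne.symm hne]
    rw [Finset.sum_congr rfl (fun j'' _ => this j''), Finset.sum_add_distrib,
      Finset.sum_ite_eq', Finset.sum_ite_eq']
    simp
  have hsingle01 : ∀ j : Fin d, (a j + t idx = 0) ∨ (a j + t idx = 1) := by
    intro j
    have := mem01 (fun j' => decide (j' = j))
    rwa [hsingle j] at this
  have hpair01 : ∀ j j' : Fin d, j ≠ j' →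
      (a j + a j' + t idx = 0) ∨ (a j + a j' + t idx = 1) := by
    intro j j' hne
    have := mem01 (fun j'' => decide (j'' = j) || decide (j'' = j'))
    rwa [hpair j j' hne] at this
  -- not all a j are zero
  have hxT := key vT
  have hxF := key vF
  rw [hT] at hxT
  rw [hF] at hxF
  simp only [if_pos, Bool.false_eq_true, if_false] at hxT hxF
  have hnz : ∃ j₀, a j₀ ≠ 0 := by
    by_contra hall
    push_neg at hall
    have hz : ∀ v : Fin d → Bool, (∑ j, if v j then a j else 0) = 0 := by
      intro v
      apply Finset.sum_eq_zero
      intro j _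
      rw [hall j]
      simp
    rw [hz vT] at hxT
    rw [hz vF] at hxF
    omega
  obtain ⟨j₀, hj₀⟩ := hnz
  have haj : ∀ j, j ≠ j₀ → a j = 0 := by
    intro j hne
    have h1 := hsingle01 j₀
    have h2 := hsingle01 j
    have h3 := hpair01 j j₀ hne
    omega
  have hsum_v : ∀ v : Fin d → Bool, (∑ j, if v j then a j else 0)
      = if v j₀ then a j₀ else 0 := by
    intro v
    apply Finset.sum_eq_single j₀
    · intro j _ hne
      rw [haj j hne]
      simp
    · intro h
      exact absurd (Finset.mem_univ j₀) h
  have hcases : (a j₀ = 1 ∧ t idx = 0) ∨ (a j₀ = -1 ∧ t idx = 1) := by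
    have h1 := hsingle01 j₀
    omega
  rcases hcases with ⟨ha1, ht0⟩ | ⟨ha1, ht1⟩
  · refine ⟨j₀, false, fun v => ?_⟩
    have := key v
    rw [hsum_v v, ha1, ht0, add_zero] at this
    cases hb : φ v idx <;> cases hb' : v j₀ <;>
      first
        | decide
        | (exfalso; rw [hb, hb'] at this; norm_num at this)
  · refine ⟨j₀, true, fun v => ?_⟩
    have := key v
    rw [hsum_v v, ha1, ht1] at this
    cases hb : φ v idx <;> cases hb' : v j₀ <;>
      first
        | decide
        | (exfalso; rw [hb, hb'] at this; norm_num at this)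

lemma facemap_sum {n d : ℕ} (φ : (Fin d → Bool) → (Fin n → Bool)) (h : IsFaceMap φ) :
    ∃ (J : Finset (Fin n)) (x' : Fin n → Bool) (c : ℤ), J.card = d ∧
      ∀ (q : (Fin n → Bool) → A),
        ∑ v : Fin d → Bool, ((-1 : ℤ) ^ weight v) • q (φ v) = c • faceSum q J x' := by
  classical
  obtain ⟨⟨M, t, hM⟩, hinj, I, x, hIcard, hrange⟩ := h
  -- d ≤ n
  have hd : d ≤ n := by
    have h1 : (2 : ℕ) ^ d ≤ 2 ^ n := by
      have := Fintype.card_le_of_injective φ hinj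
      simpa using this
    exact (Nat.pow_le_pow_iff_right (by norm_num)).mp h1
  have hconst : ∀ (v : Fin d → Bool), ∀ idx ∈ I, φ v idx = x idx := by
    intro v idx hidx
    have hv : φ v ∈ Set.range φ := ⟨v, rfl⟩
    rw [hrange] at hv
    exact hv idx hidx
  have hsurj : ∀ w : Fin n → Bool, (∀ idx ∈ I, w idx = x idx) → ∃ v, φ v = w := by
    intro w hw
    have : w ∈ Set.range φ := by rw [hrange]; exact hw
    exact this
  -- rows indexed by the complement of I
  have hrow : ∀ idx : {y // y ∈ Iᶜ},
      ∃ jε : Fin d × Bool, ∀ v, φ v idx = Bool.xor jε.2 (v jε.1) := by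
    rintro ⟨idx, hidx⟩
    have hidx' : idx ∉ I := Finset.mem_compl.mp hidx
    have hT : ∃ v, φ v idx = true := by
      obtain ⟨v, hv⟩ := hsurj (fun idx' => if idx' = idx then true else x idx')
        (fun idx' h' => if_neg (fun hc : idx' = idx => hidx' (hc ▸ h')))
      exact ⟨v, by rw [hv]; exact if_pos rfl⟩
    have hF : ∃ v, φ v idx = false := by
      obtain ⟨v, hv⟩ := hsurj (fun idx' => if idx' = idx then false else x idx')
        (fun idx' h' => if_neg (fun hc : idx' = idx => hidx' (hc ▸ h')))
      exact ⟨v, by rw [hv]; exact if_pos rfl⟩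
    obtain ⟨vT, hvT⟩ := hT
    obtain ⟨vF, hvF⟩ := hF
    obtain ⟨j₀, ε, hj⟩ := facemap_rows M t hM idx vT vF hvT hvF
    exact ⟨(j₀, ε), hj⟩
  choose jε hjε using hrow
  set jm : {y // y ∈ Iᶜ} → Fin d := fun idx => (jε idx).1 with hjmdef
  set εm : {y // y ∈ Iᶜ} → Bool := fun idx => (jε idx).2 with hεmdef
  have hjm : ∀ (idx : {y // y ∈ Iᶜ}) (v : Fin d → Bool),
      φ v idx = Bool.xor (εm idx) (v (jm idx)) := fun idx v => hjε idx v
  have hJcard : (Iᶜ : Finset (Fin n)).card = d := by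
    rw [Finset.card_compl, hIcard, Fintype.card_fin]
    omega
  -- jm is injective
  have hjminj : Function.Injective jm := by
    rintro ⟨i1, hi1⟩ ⟨i2, hi2⟩ heq
    by_contra hne'
    have hne : i1 ≠ i2 := fun hc => hne' (Subtype.ext hc)
    set w : Fin n → Bool := fun idx' =>
      if idx' = i1 then εm ⟨i1, hi1⟩ else if idx' = i2 then !(εm ⟨i2, hi2⟩) else x idx' with hw
    have hwface : ∀ idx' ∈ I, w idx' = x idx' := by
      intro idx' h'
      have h1 : idx' ≠ i1 := fun hc => (Finset.mem_compl.mp hi1) (hc ▸ h')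
      have h2 : idx' ≠ i2 := fun hc => (Finset.mem_compl.mp hi2) (hc ▸ h')
      simp [hw, h1, h2]
    obtain ⟨v, hv⟩ := hsurj w hwface
    have e1 : φ v i1 = εm ⟨i1, hi1⟩ := by rw [hv]; simp [hw]
    have e2 : φ v i2 = !(εm ⟨i2, hi2⟩) := by rw [hv]; simp [hw, Ne.symm hne]
    rw [hjm ⟨i1, hi1⟩ v, heq] at e1
    rw [hjm ⟨i2, hi2⟩ v] at e2
    revert e1 e2
    cases εm ⟨i1, hi1⟩ <;> cases εm ⟨i2, hi2⟩ <;> cases v (jm ⟨i2, hi2⟩) <;> decide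
  have hbij : Function.Bijective jm := by
    rw [Fintype.bijective_iff_injective_and_card]
    exact ⟨hjminj, by rw [Fintype.card_coe, hJcard, Fintype.card_fin]⟩
  set E := Equiv.ofBijective jm hbij with hE
  have hEapp : ∀ idx, E idx = jm idx := fun idx => rfl
  set εfin : Fin d → Bool := fun j => εm (E.symm j) with hεfin
  set x' : Fin n → Bool := φ (fun _ => false) with hx'
  refine ⟨Iᶜ, x',
    ((-1 : ℤ)) ^ (Finset.univ.filter (fun j : Fin d => εfin j = true)).card, hJcard, ?_⟩
  intro q
  set c := ((-1 : ℤ)) ^ (Finset.univ.filter (fun j : Fin d => εfin j = true)).card with hc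
  have hcc : c * c = 1 := by
    rw [hc, ← pow_add]
    exact Even.neg_one_pow ⟨_, rfl⟩
  -- key sign identity
  have hφval : ∀ (v : Fin d → Bool) (idx : {y // y ∈ Iᶜ}),
      φ v idx = Bool.xor (εfin (E idx)) (v (E idx)) := by
    intro v idx
    rw [hjm idx v, hεfin]
    simp only [hEapp]
    rw [show E.symm (jm idx) = idx from by rw [← hEapp, Equiv.symm_apply_apply]]
  have hcardeq : ∀ v : Fin d → Bool,
      ((Iᶜ : Finset (Fin n)).filter (fun idx => φ v idx = true)).card =
      (Finset.univ.filter (fun j : Fin d => Bool.xor (εfin j) (v j) = true)).card := by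
    intro v
    apply Finset.card_bij (fun idx h => E ⟨idx, (Finset.mem_filter.mp h).1⟩)
    · intro idx h
      obtain ⟨h1, h2⟩ := Finset.mem_filter.mp h
      rw [hφval v ⟨idx, h1⟩] at h2
      simp only [Finset.mem_filter, Finset.mem_univ, true_and]
      exact h2
    · intro i1 h1 i2 h2 heq
      have := E.injective heq
      exact congrArg Subtype.val this
    · intro j hj
      have hjv : Bool.xor (εfin j) (v j) = true := (Finset.mem_filter.mp hj).2
      refine ⟨(E.symm j : Fin n), Finset.mem_filter.mpr ⟨(E.symm j).2, ?_⟩, ?_⟩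
      · rw [show ((E.symm j : {y // y ∈ Iᶜ}) : Fin n) = ((E.symm j : {y // y ∈ Iᶜ}) : Fin n)
          from rfl]
        have := hφval v (E.symm j)
        rw [E.apply_symm_apply] at this
        rw [this]
        exact hjv
      · rw [show (⟨((E.symm j : {y // y ∈ Iᶜ}) : Fin n), _⟩ : {y // y ∈ Iᶜ}) = E.symm j
          from Subtype.ext rfl]
        exact E.apply_symm_apply j
  have hsign : ∀ v : Fin d → Bool,
      ((-1 : ℤ)) ^ ((Iᶜ : Finset (Fin n)).filter (fun idx => φ v idx = true)).card
        = c * ((-1 : ℤ)) ^ weight v := by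
    intro v
    rw [hcardeq v, neg_one_pow_xor, hc]
    rfl
  -- now the sum
  unfold faceSum
  rw [← Finset.sum_filter, Finset.smul_sum]
  apply Finset.sum_nbij' (i := φ)
    (j := fun w j => Bool.xor (εfin j) (w ((E.symm j : {y // y ∈ Iᶜ}) : Fin n)))
  · intro v _
    refine Finset.mem_filter.mpr ⟨Finset.mem_univ _, ?_⟩
    intro idx hidx
    have hidx' : idx ∈ I := by
      by_contra hc'
      exact hidx (Finset.mem_compl.mpr hc')
    rw [hconst v idx hidx', hx', hconst (fun _ => false) idx hidx']
  · intro w _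
    exact Finset.mem_univ _
  · intro v _
    funext j
    rw [hφval v (E.symm j), E.apply_symm_apply, bool_xor_cancel_left]
  · intro w hw
    have hcond := (Finset.mem_filter.mp hw).2
    funext idx
    by_cases hidx : idx ∈ I
    · have h1 := hconst (fun j => Bool.xor (εfin j) (w ((E.symm j : {y // y ∈ Iᶜ}) : Fin n)))
        idx hidx
      have h2 : w idx = x idx := by
        have := hcond idx (fun hc' => (Finset.mem_compl.mp hc') hidx)
        rw [this, hx', hconst (fun _ => false) idx hidx]
      rw [h1, h2]
    · have hidxc : idx ∈ Iᶜ := Finset.mem_compl.mpr hidx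
      rw [hφval _ ⟨idx, hidxc⟩]
      rw [show E.symm (E ⟨idx, hidxc⟩) = ⟨idx, hidxc⟩ from E.symm_apply_apply _]
      rw [bool_xor_cancel_left]
  · intro v _
    rw [hsign v, smul_smul, ← mul_assoc, hcc, one_mul]

lemma dkCube_iff_faceSum {d n : ℕ} (q : (Fin n → Bool) → A) :
    dkCube A d n q ↔
      ∀ (J : Finset (Fin n)) (x : Fin n → Bool), J.card = d → faceSum q J x = 0 := by
  constructor
  · intro h J x hJ
    rw [← sum_stdFace J hJ x q]
    exact h _ (stdFace_isFaceMap J hJ x)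
  · intro h φ hφ
    obtain ⟨J, x', c, hJ, hsum⟩ := facemap_sum (A := A) φ hφ
    rw [hsum q, h J x' hJ, smul_zero]

lemma arrow_glue {X : Type*} {n i : ℕ} (q0 q1 : (Fin n → Bool) → X) (vf : Fin n → Bool)
    (va : Fin i → Bool) :
    arrowMap q0 q1 (glue vf va) = if (∀ j, va j = true) then q1 vf else q0 vf := by
  unfold arrowMap
  simp only [glue_nat, glue_cast]

lemma glue_front {n i : ℕ} (x₀ : Fin n → Bool) (b : Fin i → Bool) :
    (fun j => glue x₀ b (Fin.castAdd i j)) = x₀ :=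
  funext fun j => glue_cast x₀ b j

def castEmb (n i : ℕ) : Fin n ↪ Fin (n + i) :=
  ⟨Fin.castAdd i, fun a b hab => by
    apply Fin.ext
    have := congrArg Fin.val hab
    simpa using this⟩

def natEmb (n i : ℕ) : Fin i ↪ Fin (n + i) :=
  ⟨Fin.natAdd n, fun a b hab => by
    apply Fin.ext
    have := congrArg Fin.val hab
    simpa using this⟩

lemma sum_eval {i : ℕ} (S : Finset (Fin i)) (hS : S.Nonempty) (C Z : A) :
    (∑ va : Fin i → Bool, if (∀ a, a ∉ S → va a = true)
      then ((-1 : ℤ) ^ (S.filter (fun a => va a = true)).card) •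
        (C + (if (∀ j, va j = true) then Z else 0)) else 0)
    = ((-1 : ℤ) ^ S.card) • Z := by
  classical
  have hsplit : ∀ va : Fin i → Bool,
      (if (∀ a, a ∉ S → va a = true)
        then ((-1 : ℤ) ^ (S.filter (fun a => va a = true)).card) •
          (C + (if (∀ j, va j = true) then Z else 0)) else 0)
      = (if (∀ a, a ∉ S → va a = true)
          then ((-1 : ℤ) ^ (S.filter (fun a => va a = true)).card) • C else 0)
        + (if (∀ a, a ∉ S → va a = true)
          then ((-1 : ℤ) ^ (S.filter (fun a => va a = true)).card) •
            (if (∀ j, va j = true) then Z else 0) else 0) := by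
    intro va
    by_cases h : ∀ a, a ∉ S → va a = true
    · rw [if_pos h, if_pos h, if_pos h, smul_add]
    · rw [if_neg h, if_neg h, if_neg h, add_zero]
  rw [Finset.sum_congr rfl (fun va _ => hsplit va), Finset.sum_add_distrib]
  have h1 : (∑ va : Fin i → Bool, if (∀ a, a ∉ S → va a = true)
      then ((-1 : ℤ) ^ (S.filter (fun a => va a = true)).card) • C else 0) = 0 := by
    have := faceSum_const C S hS (fun _ => true)
    unfold faceSum at this
    exact this
  have h2 : (∑ va : Fin i → Bool, if (∀ a, a ∉ S → va a = true)
      then ((-1 : ℤ) ^ (S.filter (fun a => va a = true)).card) •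
        (if (∀ j, va j = true) then Z else 0) else 0) = ((-1 : ℤ) ^ S.card) • Z := by
    rw [Finset.sum_eq_single (fun _ : Fin i => true)]
    · rw [if_pos (fun a _ => rfl), if_pos (fun j => rfl)]
      congr 2
      rw [Finset.filter_true_of_mem (fun a _ => rfl)]
    · intro va _ hne
      by_cases h : ∀ a, a ∉ S → va a = true
      · rw [if_pos h]
        have hnall : ¬ (∀ j, va j = true) := by
          intro hall
          exact hne (funext fun j => hall j)
        rw [if_neg hnall, smul_zero]
      · rw [if_neg h]
    · intro h
      exact absurd (Finset.mem_univ _) h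
  rw [h1, h2, zero_add]

end Dev

theorem stmt19 {A : Type*} [AddCommGroup A] (k i n : ℕ) (hi : 1 ≤ i)
    (q0 q1 : (Fin n → Bool) → A) :
    dkCube A (k + 1) (n + i) (arrowMap q0 q1) ↔
      dkCube A (k + 1) n q0 ∧ dkCube A (k + 1 - i) n (fun v => q1 v - q0 v) := by
  rw [dkCube_iff_faceSum, dkCube_iff_faceSum, dkCube_iff_faceSum]
  constructor
  · intro H
    constructor
    · -- q0 is a cube
      intro J₀ x₀ hJ₀
      set J : Finset (Fin (n + i)) := J₀.map (castEmb n i) with hJdef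
      have hJcard : J.card = k + 1 := by rw [hJdef, Finset.card_map, hJ₀]
      have hthis := H J (glue x₀ (fun _ => false)) hJcard
      rw [faceSum_split] at hthis
      have hJa : (Finset.univ.filter (fun a : Fin i => Fin.natAdd n a ∈ J)) = ∅ := by
        rw [Finset.filter_eq_empty_iff]
        intro a _
        rw [hJdef]
        intro hmem
        obtain ⟨j, _, hj⟩ := Finset.mem_map.mp hmem
        have hv := congrArg Fin.val hj
        simp [castEmb, DFunLike.coe] at hv
        omega
      have hJf : (Finset.univ.filter (fun j : Fin n => Fin.castAdd i j ∈ J)) = J₀ := by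
        ext j
        simp only [Finset.mem_filter, Finset.mem_univ, true_and, hJdef, Finset.mem_map]
        constructor
        · rintro ⟨j', hj', he⟩
          have hv := congrArg Fin.val he
          simp [castEmb] at hv
          rwa [show j' = j from Fin.ext hv] at hj'
        · intro hj
          exact ⟨j, hj, rfl⟩
      rw [hJa, hJf] at hthis
      simp only [glue_front, glue_nat, Finset.notMem_empty, not_false_iff, true_implies,
        Finset.filter_empty, Finset.card_empty, pow_zero, one_smul] at hthis
      have hcollapse : ∀ va : Fin i → Bool, (∀ a : Fin i, va a = false) ↔ va = (fun _ => false) := by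
        intro va
        simp [funext_iff]
      simp only [hcollapse] at hthis
      rw [Finset.sum_ite_eq' Finset.univ (fun _ : Fin i => false)
        (fun va => faceSum (fun vf => arrowMap q0 q1 (glue vf va)) J₀ x₀),
        if_pos (Finset.mem_univ _)] at hthis
      have harr : (fun vf => arrowMap q0 q1 (glue vf (fun _ : Fin i => false))) = q0 := by
        funext vf
        rw [arrow_glue, if_neg]
        intro hall
        have := hall ⟨0, hi⟩
        simp at this
      rwa [harr] at hthis
    · -- q1 - q0 is a cube of lower degree
      intro J₀ x₀ hJ₀
      obtain ⟨S, hSsub, hScard⟩ := Finset.exists_subset_card_eq (s := (Finset.univ : Finset (Fin i)))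
        (n := k + 1 - (k + 1 - i)) (by simp [Finset.card_univ]; omega)
      have hSne : S.Nonempty := Finset.card_pos.mp (by omega)
      set J : Finset (Fin (n + i)) := J₀.map (castEmb n i) ∪ S.map (natEmb n i) with hJdef
      have hdisj : Disjoint (J₀.map (castEmb n i)) (S.map (natEmb n i)) := by
        rw [Finset.disjoint_left]
        intro idx h1 h2
        obtain ⟨j, _, hj⟩ := Finset.mem_map.mp h1
        obtain ⟨a, _, ha⟩ := Finset.mem_map.mp h2
        have h1v := congrArg Fin.val hj
        have h2v := congrArg Fin.val ha
        simp [castEmb, natEmb, DFunLike.coe] at h1v h2v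
        omega
      have hJcard : J.card = k + 1 := by
        rw [hJdef, Finset.card_union_of_disjoint hdisj, Finset.card_map, Finset.card_map,
          hJ₀, hScard]
        omega
      have hthis := H J (glue x₀ (fun _ => true)) hJcard
      rw [faceSum_split] at hthis
      have hJa : (Finset.univ.filter (fun a : Fin i => Fin.natAdd n a ∈ J)) = S := by
        ext a
        simp only [Finset.mem_filter, Finset.mem_univ, true_and, hJdef, Finset.mem_union,
          Finset.mem_map]
        constructor
        · rintro (⟨j, _, hj⟩ | ⟨a', ha', he⟩)
          · have hv := congrArg Fin.val hj
            simp [castEmb, DFunLike.coe] at hv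
            omega
          · have hv := congrArg Fin.val he
            simp [natEmb, DFunLike.coe] at hv
            rwa [show a' = a from Fin.ext hv] at ha'
        · intro ha
          exact Or.inr ⟨a, ha, rfl⟩
      have hJf : (Finset.univ.filter (fun j : Fin n => Fin.castAdd i j ∈ J)) = J₀ := by
        ext j
        simp only [Finset.mem_filter, Finset.mem_univ, true_and, hJdef, Finset.mem_union,
          Finset.mem_map]
        constructor
        · rintro (⟨j', hj', he⟩ | ⟨a, _, ha⟩)
          · have hv := congrArg Fin.val he
            simp [castEmb] at hv
            rwa [show j' = j from Fin.ext hv] at hj'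
          · have hv := congrArg Fin.val ha
            simp [natEmb, DFunLike.coe] at hv
            omega
        · intro hj
          exact Or.inl ⟨j, hj, rfl⟩
      rw [hJa, hJf] at hthis
      simp only [glue_front, glue_nat] at hthis
      have hG : ∀ va : Fin i → Bool,
          faceSum (fun vf => arrowMap q0 q1 (glue vf va)) J₀ x₀
            = faceSum q0 J₀ x₀
              + (if (∀ j, va j = true) then faceSum (fun v => q1 v - q0 v) J₀ x₀ else 0) := by
        intro va
        by_cases hall : ∀ j, va j = true
        · rw [if_pos hall]
          have hfn : (fun vf => arrowMap q0 q1 (glue vf va)) = q1 := by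
            funext vf
            rw [arrow_glue, if_pos hall]
          rw [hfn, faceSum_sub]
          abel
        · rw [if_neg hall]
          have hfn : (fun vf => arrowMap q0 q1 (glue vf va)) = q0 := by
            funext vf
            rw [arrow_glue, if_neg hall]
          rw [hfn, add_zero]
      simp only [hG] at hthis
      rw [sum_eval S hSne] at hthis
      have hZ : faceSum (fun v => q1 v - q0 v) J₀ x₀
          = ((-1 : ℤ) ^ S.card) • (((-1 : ℤ) ^ S.card) • faceSum (fun v => q1 v - q0 v) J₀ x₀) := by
        rw [smul_smul, ← pow_add, Even.neg_one_pow ⟨_, rfl⟩, one_smul]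
      rw [hZ, hthis, smul_zero]
  · rintro ⟨h0, h1⟩ J x hJ
    rw [faceSum_split]
    set Jf := Finset.univ.filter (fun j : Fin n => Fin.castAdd i j ∈ J) with hJf
    set Ja := Finset.univ.filter (fun a : Fin i => Fin.natAdd n a ∈ J) with hJa
    have hcards : Jf.card + Ja.card = k + 1 := by
      have := card_split (fun idx => idx ∈ J)
      rw [Finset.filter_univ_mem, hJ] at this
      rw [hJf, hJa, ← this]
    have hJacard : Ja.card ≤ i := by
      calc Ja.card ≤ (Finset.univ : Finset (Fin i)).card := Finset.card_le_card (Finset.filter_subset _ _)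
      _ = i := by simp
    have hZ : faceSum (fun v => q1 v - q0 v) Jf (fun j => x (Fin.castAdd i j)) = 0 :=
      faceSum_mono h1 Jf _ (by omega)
    have hGC : ∀ va : Fin i → Bool,
        faceSum (fun vf => arrowMap q0 q1 (glue vf va)) Jf (fun j => x (Fin.castAdd i j))
          = faceSum q0 Jf (fun j => x (Fin.castAdd i j)) := by
      intro va
      by_cases hall : ∀ j, va j = true
      · have hfn : (fun vf => arrowMap q0 q1 (glue vf va)) = q1 := by
          funext vf
          rw [arrow_glue, if_pos hall]
        rw [hfn]
        have := faceSum_sub q1 q0 Jf (fun j => x (Fin.castAdd i j))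
        rw [hZ] at this
        exact sub_eq_zero.mp this.symm
      · have hfn : (fun vf => arrowMap q0 q1 (glue vf va)) = q0 := by
          funext vf
          rw [arrow_glue, if_neg hall]
        rw [hfn]
    simp only [hGC]
    show faceSum (fun _ : Fin i → Bool => faceSum q0 Jf (fun j => x (Fin.castAdd i j)))
      Ja (fun a => x (Fin.natAdd n a)) = 0
    rcases Finset.eq_empty_or_nonempty Ja with he | hne
    · rw [he, faceSum_empty]
      apply h0
      have hJa0 : Ja.card = 0 := by rw [he, Finset.card_empty]
      omega
    · exact faceSum_const _ Ja hne _
end
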